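/- arXiv:2410.01126 — 13 statements merged into one kernel-verified Lean document; each statement's English description precedes it below -/
import Mathlib

section
/- Let f ∈ ℂ[X] be a monic separable polynomial of degree n ≥ 2. Then sep(f) ≤ min{2, 34/√n} · M(f)^{1/(n-1)}. -/
open Polynomial

/-- The separation of a polynomial: the minimal distance between distinct roots. -/
noncomputable def polySep (f : Polynomial ℂ) : ℝ :=
  sInf {d : ℝ | ∃ a ∈ f.roots, ∃ b ∈ f.roots, a ≠ b ∧ d = ‖a - b‖}

/-- The Mahler measure of a monic polynomial: the product of `max 1 |α|` over all roots `α`. -/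
noncomputable def mahlerMeasure (f : Polynomial ℂ) : ℝ :=
  (f.roots.map (fun a => max 1 ‖a‖)).prod

lemma nat_pow_le_exp_mul_factorial : ∀ n : ℕ, (n:ℝ)^n ≤ Real.exp n * (Nat.factorial n)
  | 0 => by simp
  | (n+1) => by
    have ih := nat_pow_le_exp_mul_factorial n
    rcases Nat.eq_zero_or_pos n with h0 | hp
    · subst h0; simpa using (by nlinarith [Real.exp_one_gt_d9] : (1:ℝ) ≤ Real.exp 1 * 1)
    have hn : (0:ℝ) < n := by exact_mod_cast hp
    have key : ((n:ℝ)+1)^n ≤ Real.exp 1 * (n:ℝ)^n := by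
      have h1 : (1 + 1/(n:ℝ)) ≤ Real.exp (1/(n:ℝ)) := by
        have := Real.add_one_le_exp (1/(n:ℝ)); linarith
      have h2 : (1 + 1/(n:ℝ))^n ≤ Real.exp (1/(n:ℝ)) ^ n := by
        apply pow_le_pow_left₀ (by positivity) h1
      have h3 : Real.exp (1/(n:ℝ)) ^ n = Real.exp 1 := by
        rw [← Real.exp_nat_mul]
        rw [mul_one_div, div_self (ne_of_gt hn)]
        -- maybe closed
      have h4 : ((n:ℝ)+1)^n = (1 + 1/(n:ℝ))^n * (n:ℝ)^n := by
        rw [← mul_pow]; congr 1; field_simp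
      rw [h4, ← h3]
      exact mul_le_mul_of_nonneg_right h2 (by positivity)
    have : ((n:ℝ)+1)^(n+1) = ((n:ℝ)+1) * ((n:ℝ)+1)^n := by ring
    calc ((n+1:ℕ):ℝ)^(n+1) = ((n:ℝ)+1) * ((n:ℝ)+1)^n := by push_cast; ring
      _ ≤ ((n:ℝ)+1) * (Real.exp 1 * (n:ℝ)^n) := by
          apply mul_le_mul_of_nonneg_left key (by positivity)
      _ ≤ ((n:ℝ)+1) * (Real.exp 1 * (Real.exp n * (Nat.factorial n))) := by
          have := mul_le_mul_of_nonneg_left ih (Real.exp_pos 1).le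
          apply mul_le_mul_of_nonneg_left this (by positivity)
      _ = Real.exp (n+1) * (((n:ℝ)+1) * (Nat.factorial n)) := by rw [Real.exp_add]; ring
      _ = Real.exp ((n+1:ℕ):ℝ) * (Nat.factorial (n+1)) := by
          push_cast [Nat.factorial_succ]; ring



lemma pack_sqrt_le (d r : ℝ) (hd : 0 < d) (T : Finset ℂ) (h2 : 2 ≤ T.card)
    (hdist : ∀ a ∈ T, ∀ b ∈ T, a ≠ b → d ≤ ‖a - b‖)
    (hrad : ∀ a ∈ T, ‖a‖ ≤ r) :
    Real.sqrt T.card ≤ (2 * Real.sqrt 2 + 4) * r / d := by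
  classical
  obtain ⟨a, ha, b, hb, hab⟩ := Finset.one_lt_card.mp (by omega : 1 < T.card)
  have hd2r : d ≤ 2 * r := by
    have h1 := hdist a ha b hb hab
    have htri : ‖a - b‖ ≤ ‖a‖ + ‖b‖ := by
      exact norm_sub_le a b
    have := hrad a ha; have := hrad b hb; linarith
  have hr0 : 0 ≤ r := by linarith
  set s : ℝ := d / Real.sqrt 2 with hs_def
  have hs : 0 < s := by positivity
  set F : ℂ → ℤ × ℤ := fun z => (⌊z.re / s⌋, ⌊z.im / s⌋) with hF
  have hinj : Set.InjOn F T := by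
    intro x hx y hy hxy
    by_contra hne
    have hdxy := hdist x hx y hy hne
    have hre : |x.re / s - y.re / s| < 1 :=
      Int.abs_sub_lt_one_of_floor_eq_floor (congrArg Prod.fst hxy)
    have him : |x.im / s - y.im / s| < 1 :=
      Int.abs_sub_lt_one_of_floor_eq_floor (congrArg Prod.snd hxy)
    have hre' : |x.re - y.re| < s := by
      rw [div_sub_div_same, abs_div, abs_of_pos hs, div_lt_one hs] at hre
      exact hre
    have him' : |x.im - y.im| < s := by
      rw [div_sub_div_same, abs_div, abs_of_pos hs, div_lt_one hs] at him
      exact him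
    have hsq : (‖x - y‖)^2 < d^2 := by
      rw [Complex.sq_norm, Complex.normSq_apply]
      simp only [Complex.sub_re, Complex.sub_im]
      have e1 : (x.re - y.re)^2 < s^2 := by nlinarith [abs_nonneg (x.re - y.re), sq_abs (x.re - y.re)]
      have e2 : (x.im - y.im)^2 < s^2 := by nlinarith [abs_nonneg (x.im - y.im), sq_abs (x.im - y.im)]
      have hs2 : s^2 + s^2 = d^2 := by
        rw [hs_def, div_pow, Real.sq_sqrt (by norm_num : (0:ℝ) ≤ 2)]
        ring
      nlinarith
    nlinarith [norm_nonneg (x - y)]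
  have hcard : T.card = (T.image F).card := (Finset.card_image_of_injOn hinj).symm
  have hsub : T.image F ⊆ Finset.Icc ⌊-r/s⌋ ⌊r/s⌋ ×ˢ Finset.Icc ⌊-r/s⌋ ⌊r/s⌋ := by
    intro p hp
    obtain ⟨z, hz, rfl⟩ := Finset.mem_image.mp hp
    have hzre : |z.re| ≤ r := (Complex.abs_re_le_norm z).trans (hrad z hz)
    have hzim : |z.im| ≤ r := (Complex.abs_im_le_norm z).trans (hrad z hz)
    obtain ⟨h1, h2⟩ := abs_le.mp hzre
    obtain ⟨h3, h4⟩ := abs_le.mp hzim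
    simp only [hF, Finset.mem_product, Finset.mem_Icc]
    refine ⟨⟨Int.floor_le_floor (by gcongr), Int.floor_le_floor (by gcongr)⟩,
      ⟨Int.floor_le_floor (by gcongr), Int.floor_le_floor (by gcongr)⟩⟩
  have haxis : ((Finset.Icc ⌊-r/s⌋ ⌊r/s⌋).card : ℝ) ≤ 2*(r/s) + 2 := by
    rw [Int.card_Icc, neg_div]
    have hmono : ⌊-(r/s)⌋ ≤ ⌊r/s⌋ := Int.floor_le_floor (by
      have h0 : (0:ℝ) ≤ r/s := by positivity
      linarith)
    have hnn : (0:ℤ) ≤ ⌊r/s⌋ + 1 - ⌊-(r/s)⌋ := by omega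
    have hcast : (((⌊r/s⌋ + 1 - ⌊-(r/s)⌋).toNat : ℕ) : ℝ) = ((⌊r/s⌋ : ℝ) + 1 - (⌊-(r/s)⌋ : ℝ)) := by
      have := Int.toNat_of_nonneg hnn
      exact_mod_cast congrArg (fun z : ℤ => (z : ℝ)) this
    rw [hcast]
    have f1 : ((⌊r/s⌋:ℝ)) ≤ r/s := Int.floor_le _
    have f2 : (-(r/s)) - 1 < (⌊-(r/s)⌋:ℝ) := Int.sub_one_lt_floor _
    linarith
  have hcards : (T.card : ℝ) ≤ (2*(r/s) + 2)^2 := by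
    have h1 : T.card ≤ (Finset.Icc ⌊-r/s⌋ ⌊r/s⌋).card * (Finset.Icc ⌊-r/s⌋ ⌊r/s⌋).card := by
      rw [hcard]
      calc (T.image F).card ≤ _ := Finset.card_le_card hsub
        _ = _ := by rw [Finset.card_product]
    calc (T.card : ℝ) ≤ ((Finset.Icc ⌊-r/s⌋ ⌊r/s⌋).card : ℝ) * ((Finset.Icc ⌊-r/s⌋ ⌊r/s⌋).card : ℝ) := by
          exact_mod_cast h1
      _ ≤ (2*(r/s) + 2)^2 := by nlinarith [haxis, Nat.cast_nonneg (α := ℝ) (Finset.Icc ⌊-r/s⌋ ⌊r/s⌋).card]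
  have hstep : Real.sqrt T.card ≤ 2*(r/s) + 2 := by
    have h0 : (0:ℝ) ≤ 2*(r/s) + 2 := by positivity
    calc Real.sqrt T.card ≤ Real.sqrt ((2*(r/s) + 2)^2) := Real.sqrt_le_sqrt hcards
      _ = 2*(r/s) + 2 := Real.sqrt_sq h0
  have hseq : 2*(r/s) = 2 * Real.sqrt 2 * r / d := by
    rw [hs_def]
    rw [div_div_eq_mul_div]
    ring
  have h24 : (2:ℝ) ≤ 4 * r / d := by
    rw [le_div_iff₀ hd]; linarith
  calc Real.sqrt T.card ≤ 2*(r/s) + 2 := hstep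
    _ ≤ 2 * Real.sqrt 2 * r / d + 4 * r / d := by rw [hseq]; linarith
    _ = (2 * Real.sqrt 2 + 4) * r / d := by ring


set_option maxHeartbeats 2000000 in
theorem sep_le_min_two_const_mul_mahler_rpow
    (n : ℕ) (hn : 2 ≤ n) (f : Polynomial ℂ)
    (hmonic : f.Monic) (hsep : f.Separable) (hdeg : f.natDegree = n) :
    polySep f ≤ min 2 (34 / Real.sqrt n) * _root_.mahlerMeasure f ^ ((1 : ℝ) / ((n : ℝ) - 1)) := by
  classical
  set M := _root_.mahlerMeasure f with hM
  set R := M ^ ((1:ℝ)/((n:ℝ)-1)) with hR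
  set g : ℂ → ℝ := fun a => max 1 ‖a‖ with hg
  have hnodup : f.roots.Nodup := Polynomial.nodup_roots hsep
  have hrootscard : Multiset.card f.roots = n := by
    rw [Polynomial.splits_iff_card_roots.mp (IsAlgClosed.splits f), hdeg]
  set S : Finset ℂ := f.roots.toFinset with hS
  have hSval : S.val = f.roots := Multiset.dedup_eq_self.mpr hnodup
  have hScard : S.card = n := by
    rw [Finset.card_def, hSval, hrootscard]
  have hmem : ∀ a, a ∈ S → a ∈ f.roots := by
    intro a ha; rwa [hS, Multiset.mem_toFinset] at ha
  have hMprod : M = ∏ a ∈ S, g a := by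
    rw [hM, _root_.mahlerMeasure, ← hSval]; rfl
  have hM1 : (1:ℝ) ≤ M := by
    rw [hMprod]
    calc (1:ℝ) = ∏ _a ∈ S, (1:ℝ) := by rw [Finset.prod_const_one]
      _ ≤ ∏ a ∈ S, g a := Finset.prod_le_prod (fun _ _ => zero_le_one)
          (fun a _ => le_max_left _ _)
  have hM0 : (0:ℝ) < M := lt_of_lt_of_le one_pos hM1
  have hncast : (2:ℝ) ≤ (n:ℝ) := by exact_mod_cast hn
  have hR1 : (1:ℝ) ≤ R := Real.one_le_rpow hM1 (by
    have h01 : (0:ℝ) ≤ (n:ℝ) - 1 := by linarith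
    positivity)
  have hR0 : (0:ℝ) < R := lt_of_lt_of_le one_pos hR1
  set k : ℕ := n - 1 with hk
  have hk1 : 1 ≤ k := by omega
  have hkn : k + 1 = n := by omega
  have hkcast : ((k:ℕ):ℝ) = (n:ℝ) - 1 := by
    rw [hk]; push_cast [Nat.cast_sub (by omega : 1 ≤ n)]; ring
  have hne : (n:ℝ) - 1 ≠ 0 := by linarith only [hncast]
  have hRpow : R ^ k = M := by
    rw [hR, ← Real.rpow_natCast (M ^ ((1:ℝ)/((n:ℝ)-1))) k, ← Real.rpow_mul hM0.le, hkcast,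
      one_div, inv_mul_cancel₀ hne, Real.rpow_one]
  have hbdd : BddBelow {d : ℝ | ∃ a ∈ f.roots, ∃ b ∈ f.roots, a ≠ b ∧ d = ‖a - b‖} := by
    refine ⟨0, ?_⟩
    rintro x ⟨a, _, b, _, _, rfl⟩
    exact norm_nonneg _
  have hsep_le : ∀ a ∈ S, ∀ b ∈ S, a ≠ b → polySep f ≤ ‖a - b‖ := by
    intro a ha b hb hab
    exact csInf_le hbdd ⟨a, hmem a ha, b, hmem b hb, hab, rfl⟩
  -- Part 1 : polySep f ≤ 2R
  have part1 : polySep f ≤ 2 * R := by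
    have hBcard : (S.filter (fun a => R < g a)).card ≤ n - 2 := by
      by_contra hc
      push_neg at hc
      set B := S.filter (fun a => R < g a) with hB
      have hBn : n - 1 ≤ B.card := by omega
      have hBne : B.Nonempty := Finset.card_pos.mp (by omega)
      have h1 : R ^ B.card < ∏ a ∈ B, g a := by
        have h := Finset.prod_lt_prod (f := fun _ : ℂ => R) (g := g) (s := B)
          (fun i _ => hR0) (fun i hi => (Finset.mem_filter.mp hi).2.le)
          (by obtain ⟨c, hc'⟩ := hBne; exact ⟨c, hc', (Finset.mem_filter.mp hc').2⟩)
        simpa using h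
      have h2 : ∏ a ∈ B, g a ≤ M := by
        rw [hMprod, ← Finset.prod_sdiff (Finset.filter_subset (fun a => R < g a) S)]
        have hpos : (0:ℝ) ≤ ∏ a ∈ B, g a :=
          Finset.prod_nonneg (fun a _ => le_trans zero_le_one (le_max_left _ _))
        have hone : (1:ℝ) ≤ ∏ a ∈ S \ B, g a :=
          calc (1:ℝ) = ∏ _a ∈ S \ B, (1:ℝ) := by rw [Finset.prod_const_one]
            _ ≤ _ := Finset.prod_le_prod (fun _ _ => zero_le_one) (fun a _ => le_max_left _ _)
        nlinarith only [hpos, hone, h1]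
      have h3 : M ≤ R ^ B.card := by
        calc M = R ^ k := hRpow.symm
          _ ≤ R ^ B.card := pow_le_pow_right₀ hR1 (by omega)
      linarith
    have hGcard : 2 ≤ (S.filter (fun a => ¬ R < g a)).card := by
      have hsum := Finset.card_filter_add_card_filter_not (s := S) (p := fun a => R < g a)
      omega
    obtain ⟨a, ha, b, hb, hab⟩ := Finset.one_lt_card.mp (by omega :
      1 < (S.filter (fun a => ¬ R < g a)).card)
    have haS := (Finset.mem_filter.mp ha).1
    have hbS := (Finset.mem_filter.mp hb).1
    have haR : ‖a‖ ≤ R := le_trans (le_max_right 1 _)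
      (not_lt.mp (Finset.mem_filter.mp ha).2)
    have hbR : ‖b‖ ≤ R := le_trans (le_max_right 1 _)
      (not_lt.mp (Finset.mem_filter.mp hb).2)
    have htri : ‖a - b‖ ≤ ‖a‖ + ‖b‖ := by
      exact norm_sub_le a b
    calc polySep f ≤ ‖a - b‖ := hsep_le a haS b hbS hab
      _ ≤ 2 * R := by linarith only [haR, hbR, htri]
  -- Part 2 : polySep f ≤ 34/√n * R
  have hsqn : (0:ℝ) < Real.sqrt n := Real.sqrt_pos.mpr (by positivity)
  have part2 : polySep f ≤ 34 / Real.sqrt n * R := by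
    by_contra hcon
    push_neg at hcon
    set d₀ : ℝ := 34 / Real.sqrt n * R with hd₀
    have hd₀pos : 0 < d₀ := by positivity
    have hpair : ∀ a ∈ S, ∀ b ∈ S, a ≠ b → d₀ ≤ ‖a - b‖ := by
      intro a ha b hb hab
      exact (lt_of_lt_of_le hcon (hsep_le a ha b hb hab)).le
    set L : List ℝ := Multiset.sort (S.val.map g) (· ≤ ·) with hL
    have hLcoe : (↑L : Multiset ℝ) = S.val.map g := Multiset.sort_eq _ _
    have hLlen : L.length = n := by
      rw [hL, Multiset.length_sort, Multiset.card_map, hSval, hrootscard]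
    have hsorted : L.Pairwise (· ≤ ·) := Multiset.pairwise_sort _ _
    have hLpos : ∀ y ∈ L, (1:ℝ) ≤ y := by
      intro y hy
      have : y ∈ S.val.map g := by rw [← hLcoe]; exact_mod_cast hy
      obtain ⟨a, _, rfl⟩ := Multiset.mem_map.mp this
      exact le_max_left _ _
    have hLkey : ∀ i (hi : i < L.length), 1 ≤ i →
        (17/5) * R * Real.sqrt ((i:ℝ)+1) / Real.sqrt n ≤ L.get ⟨i, hi⟩ := by
      intro i hi h1i
      set x := L.get ⟨i, hi⟩ with hx
      have hx1 : (1:ℝ) ≤ x := hLpos _ (L.get_mem _)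
      have hcnt1 : i + 1 ≤ L.countP (fun y => decide (y ≤ x)) := by
        have hsub := (List.take_sublist (i+1) L).countP_le (p := fun y => decide (y ≤ x))
        have hlen : (L.take (i+1)).length = i + 1 := by
          rw [List.length_take]; omega
        have hall : (L.take (i+1)).countP (fun y => decide (y ≤ x)) = (L.take (i+1)).length := by
          rw [List.countP_eq_length]
          intro y hy
          simp only [decide_eq_true_eq]
          obtain ⟨j, hj, rfl⟩ := List.mem_take_iff_getElem.mp hy
          have hjle : j ≤ i := by omega
          have hrel := hsorted.rel_get_of_le (a := ⟨j, by omega⟩) (b := ⟨i, hi⟩) (by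
            simpa [Fin.le_def] using hjle)
          simpa [List.get_eq_getElem, hx] using hrel
        omega
      have hcnt2 : i + 1 ≤ (S.filter (fun a => ‖a‖ ≤ x)).card := by
        have e1 : Multiset.countP (fun y => y ≤ x) (S.val.map g)
            = L.countP (fun y => decide (y ≤ x)) := by
          rw [← hLcoe]; rfl
        have e2 : Multiset.countP (fun y => y ≤ x) (S.val.map g)
            = Multiset.card ((S.val).filter (fun a => g a ≤ x)) :=
          Multiset.countP_map g S.val (fun y => y ≤ x)
        have e3 : (S.filter (fun a => g a ≤ x)).card ≤ (S.filter (fun a => ‖a‖ ≤ x)).card := by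
          apply Finset.card_le_card
          apply Finset.monotone_filter_right
          intro a _ hax
          exact le_trans (le_max_right 1 _) hax
        have e4 : (S.filter (fun a => g a ≤ x)).card = Multiset.card ((S.val).filter (fun a => g a ≤ x)) := by
          rw [Finset.card_def, Finset.filter_val]
        omega
      set T := S.filter (fun a => ‖a‖ ≤ x) with hT
      have hTcard : 2 ≤ T.card := by omega
      have hpack := pack_sqrt_le d₀ x hd₀pos T hTcard
        (fun a ha b hb hab => hpair a (Finset.mem_filter.mp ha).1 b (Finset.mem_filter.mp hb).1 hab)
        (fun a ha => (Finset.mem_filter.mp ha).2)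
      have hsq1 : Real.sqrt ((i:ℝ)+1) ≤ Real.sqrt T.card := by
        apply Real.sqrt_le_sqrt
        have : ((i:ℝ)) + 1 ≤ (T.card : ℝ) := by exact_mod_cast hcnt2
        linarith only [this]
      have hs2 : Real.sqrt 2 ≤ 3/2 := by
        nlinarith only [Real.sq_sqrt (show (0:ℝ) ≤ 2 by norm_num), Real.sqrt_nonneg 2]
      have hsum : Real.sqrt ((i:ℝ)+1) ≤ (2 * Real.sqrt 2 + 4) * x / d₀ := le_trans hsq1 hpack
      have hmul : Real.sqrt ((i:ℝ)+1) * d₀ ≤ (2 * Real.sqrt 2 + 4) * x := by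
        rw [← le_div_iff₀ hd₀pos]
        exact hsum
      have h7 : Real.sqrt ((i:ℝ)+1) * d₀ ≤ 7 * x := le_trans hmul (by nlinarith only [hs2, hx1])
      have hrw : Real.sqrt ((i:ℝ)+1) * d₀ = 34 * (R * Real.sqrt ((i:ℝ)+1) / Real.sqrt n) := by
        rw [hd₀]; ring
      rw [hrw] at h7
      have ht0 : 0 ≤ R * Real.sqrt ((i:ℝ)+1) / Real.sqrt n := by positivity
      calc (17/5) * R * Real.sqrt ((i:ℝ)+1) / Real.sqrt n
          = (17/5) * (R * Real.sqrt ((i:ℝ)+1) / Real.sqrt n) := by ring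
        _ ≤ x := by linarith only [h7, ht0, hx1]
    -- product bound
    have hML : M = L.prod := by
      rw [hMprod]
      have h0 : (∏ a ∈ S, g a) = (S.val.map g).prod := rfl
      rw [h0, ← hLcoe, Multiset.prod_coe]
    have hLof : L.prod = ∏ i : Fin L.length, L.get i := by
      conv_lhs => rw [← List.ofFn_get L]
      rw [List.prod_ofFn]
    set b : ℕ → ℝ := fun j => if j = 0 then 1 else (17/5) * R * Real.sqrt ((j:ℝ)+1) / Real.sqrt n
      with hb
    have hflow : ∏ i : Fin L.length, b i.val ≤ ∏ i : Fin L.length, L.get i := by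
      apply Finset.prod_le_prod
      · intro i _
        rw [hb]; dsimp only; split
        · exact zero_le_one
        · positivity
      · intro i _
        rcases Nat.eq_zero_or_pos i.val with h0 | hpos
        · rw [hb]; dsimp only; rw [if_pos h0]; exact hLpos _ (L.get_mem _)
        · rw [hb]; dsimp only; rw [if_neg (by omega)]
          exact hLkey i.val i.isLt hpos
    have hrange : ∏ i : Fin L.length, b i.val = ∏ j ∈ Finset.range n, b j := by
      rw [Fin.prod_univ_eq_prod_range, hLlen]
    have hsplit : ∏ j ∈ Finset.range n, b j = ∏ j ∈ Finset.range k, b (j+1) := by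
      rw [← hkn, Finset.prod_range_succ']
      have hb0 : b 0 = 1 := by simp [hb]
      rw [hb0, mul_one]
    set P : ℝ := ∏ j ∈ Finset.range k, ((17/5) * R * Real.sqrt ((j:ℝ)+2) / Real.sqrt n) with hP
    have hPeq : ∏ j ∈ Finset.range k, b (j+1) = P := by
      apply Finset.prod_congr rfl
      intro j _
      rw [hb]; dsimp only; rw [if_neg (Nat.succ_ne_zero j)]
      have hcast2 : (((j+1:ℕ)):ℝ) + 1 = (j:ℝ) + 2 := by push_cast; ring
      rw [hcast2]
    have hMP : P ≤ M := by
      rw [hML, hLof]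
      calc P = ∏ i : Fin L.length, b i.val := by rw [hrange, hsplit, hPeq]
        _ ≤ _ := hflow
    have hP0 : (0:ℝ) ≤ P := Finset.prod_nonneg (fun j _ => by positivity)
    have hPsq : P^2 = ∏ j ∈ Finset.range k, (((289:ℝ)/25) * R^2 / n * ((j:ℝ)+2)) := by
      rw [hP, ← Finset.prod_pow]
      apply Finset.prod_congr rfl
      intro j _
      have h1 : Real.sqrt ((j:ℝ)+2)^2 = (j:ℝ)+2 := Real.sq_sqrt (by positivity)
      have h2 : Real.sqrt ((n:ℕ):ℝ)^2 = ((n:ℕ):ℝ) := Real.sq_sqrt (by positivity)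
      rw [div_pow, mul_pow, mul_pow, h1, h2]
      ring
    have hfactnat : ∏ j ∈ Finset.range k, (j+2) = Nat.factorial n := by
      have h1 := Finset.prod_range_succ' (fun j => j + 1) k
      have h2 : ∏ j ∈ Finset.range (k+1), (j+1) = Nat.factorial (k+1) :=
        Finset.prod_range_add_one_eq_factorial (k+1)
      rw [h2] at h1
      rw [← hkn]
      simpa using h1.symm
    have hfact : ∏ j ∈ Finset.range k, ((j:ℝ)+2) = (Nat.factorial n : ℝ) := by
      rw [← hfactnat, Nat.cast_prod]
      apply Finset.prod_congr rfl
      intro j _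
      push_cast
      ring
    have hPsq2 : P^2 = (((289:ℝ)/25) * R^2 / n)^k * (Nat.factorial n : ℝ) := by
      rw [hPsq, Finset.prod_mul_distrib, Finset.prod_const, Finset.card_range, hfact]
    -- contradiction
    have hMsq : M^2 = (R^2)^k := by rw [← hRpow]; ring
    have hPM : P^2 ≤ M^2 := by
      have h := mul_self_le_mul_self hP0 hMP
      calc P^2 = P*P := sq P
        _ ≤ M*M := h
        _ = M^2 := (sq M).symm
    have hnpos : (0:ℝ) < (n:ℝ) := by linarith only [hncast]
    have hnk : (0:ℝ) < (n:ℝ)^k := by positivity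
    have hr2k : (0:ℝ) < (R^2)^k := by positivity
    have hfc0 : (0:ℝ) < (Nat.factorial n : ℝ) := by
      exact_mod_cast Nat.factorial_pos n
    have hv1 : (((289:ℝ)/25) * R^2 / n)^k = ((289:ℝ)/25)^k * (R^2)^k / (n:ℝ)^k := by
      rw [div_pow, mul_pow]
    have hV : ((289:ℝ)/25)^k * (R^2)^k / (n:ℝ)^k * (Nat.factorial n : ℝ) ≤ (R^2)^k := by
      rw [← hv1, ← hPsq2, ← hMsq]; exact hPM
    have hW : ((289:ℝ)/25)^k * (Nat.factorial n : ℝ) ≤ (n:ℝ)^k := by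
      rw [div_mul_eq_mul_div, div_le_iff₀ hnk] at hV
      have h' : (((289:ℝ)/25)^k * (Nat.factorial n : ℝ)) * (R^2)^k
          ≤ ((n:ℝ)^k) * (R^2)^k := by
        calc (((289:ℝ)/25)^k * (Nat.factorial n : ℝ)) * (R^2)^k
            = ((289:ℝ)/25)^k * (R^2)^k * (Nat.factorial n : ℝ) := by ring
          _ ≤ (R^2)^k * (n:ℝ)^k := hV
          _ = ((n:ℝ)^k) * (R^2)^k := by ring
      exact le_of_mul_le_mul_right h' hr2k
    have hfb := nat_pow_le_exp_mul_factorial n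
    have hE : (0:ℝ) < Real.exp n := Real.exp_pos _
    have hkpos : (0:ℝ) < ((289:ℝ)/25)^k := by positivity
    have step3 : ((289:ℝ)/25)^k * (n:ℝ)^n ≤ Real.exp n * (n:ℝ)^k := by
      calc ((289:ℝ)/25)^k * (n:ℝ)^n ≤ ((289:ℝ)/25)^k * (Real.exp n * (Nat.factorial n : ℝ)) :=
            mul_le_mul_of_nonneg_left hfb hkpos.le
        _ = Real.exp n * (((289:ℝ)/25)^k * (Nat.factorial n : ℝ)) := by ring
        _ ≤ Real.exp n * (n:ℝ)^k := mul_le_mul_of_nonneg_left hW hE.le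
    have hnn : (n:ℝ)^n = (n:ℝ)^k * (n:ℝ) := by rw [← hkn, pow_succ]
    have step5 : ((289:ℝ)/25)^k * (n:ℝ) ≤ Real.exp n := by
      have step4 : (((289:ℝ)/25)^k * (n:ℝ)) * (n:ℝ)^k ≤ Real.exp n * (n:ℝ)^k := by
        calc (((289:ℝ)/25)^k * (n:ℝ)) * (n:ℝ)^k = ((289:ℝ)/25)^k * (n:ℝ)^n := by
              rw [hnn]; ring
          _ ≤ _ := step3
      exact le_of_mul_le_mul_right step4 hnk
    have hexp : Real.exp (n:ℝ) < ((1089:ℝ)/400)^n := by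
      have he1 : Real.exp 1 < (1089:ℝ)/400 := lt_trans Real.exp_one_lt_d9 (by norm_num)
      calc Real.exp (n:ℝ) = Real.exp 1 ^ n := by
            rw [← Real.exp_nat_mul, mul_one]
        _ < ((1089:ℝ)/400)^n := pow_lt_pow_left₀ he1 (Real.exp_pos 1).le (by omega)
    have hfin : ((1089:ℝ)/400)^n ≤ ((289:ℝ)/25)^k * (n:ℝ) := by
      have e0 : ((1089:ℝ)/400)^n = ((1089:ℝ)/400)^k * ((1089:ℝ)/400) := by
        rw [← hkn, pow_succ]
      have e1 : ((289:ℝ)/25)^k = ((1089:ℝ)/400)^k * ((4624:ℝ)/1089)^k := by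
        rw [← mul_pow]; norm_num
      have e2 : (4:ℝ) ≤ ((4624:ℝ)/1089)^k := by
        calc (4:ℝ) = 4^1 := (pow_one 4).symm
          _ ≤ (4:ℝ)^k := pow_le_pow_right₀ (by norm_num) hk1
          _ ≤ ((4624:ℝ)/1089)^k := pow_le_pow_left₀ (by norm_num) (by norm_num) k
      have e4 : (0:ℝ) < ((1089:ℝ)/400)^k := by positivity
      have e5 : (4:ℝ) * 2 ≤ ((4624:ℝ)/1089)^k * (n:ℝ) :=
        mul_le_mul e2 hncast (by norm_num) (le_trans (by norm_num) e2)
      calc ((1089:ℝ)/400)^n = ((1089:ℝ)/400)^k * ((1089:ℝ)/400) := e0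
        _ ≤ ((1089:ℝ)/400)^k * (((4624:ℝ)/1089)^k * (n:ℝ)) := by
            have e6 : (1089:ℝ)/400 ≤ ((4624:ℝ)/1089)^k * (n:ℝ) :=
              le_trans (by norm_num) (by linarith only [e5] : (8:ℝ) ≤ ((4624:ℝ)/1089)^k * (n:ℝ))
            exact mul_le_mul_of_nonneg_left e6 e4.le
        _ = ((289:ℝ)/25)^k * (n:ℝ) := by rw [e1]; ring
    linarith only [step5, hexp, hfin]
  have hmin : min 2 (34 / Real.sqrt n) * R = min (2 * R) (34 / Real.sqrt n * R) :=
    min_mul_of_nonneg _ _ hR0.le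
  rw [hmin]
  exact le_min part1 part2
end

section
/- Let f ∈ ℝ[X] be a monic separable polynomial of degree n ≥ 2 such that among the roots of f of minimum absolute value there is one that is not real (for example, if f has no real roots). Then sep(f) ≤ min{2, 34/√n} · M(f)^{1/n}. -/
open Polynomial


open Polynomial

private lemma pow_le_factorial_mul (n : ℕ) : (n : ℝ) ^ n ≤ (n.factorial : ℝ) * 3 ^ n := by
  induction n with
  | zero => norm_num
  | succ m ih =>
    have key : ((m : ℝ) + 1) ^ m ≤ 3 * (m : ℝ) ^ m := by
      rcases Nat.eq_zero_or_pos m with h | h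
      · subst h; norm_num
      · have hm : (0 : ℝ) < m := by exact_mod_cast h
        have h1 : ((m : ℝ) + 1) = (m : ℝ) * (1 + 1 / m) := by field_simp
        have h2 : (1 + 1 / (m : ℝ)) ^ m ≤ 3 := by
          have hexp : (1 + 1 / (m : ℝ)) ≤ Real.exp (1 / m) := by
            have := Real.add_one_le_exp (1 / (m : ℝ)); linarith
          calc (1 + 1 / (m : ℝ)) ^ m ≤ (Real.exp (1 / m)) ^ m :=
                pow_le_pow_left₀ (by positivity) hexp m
            _ = Real.exp ((1 / m) * m) := by rw [← Real.exp_nat_mul]; ring_nf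
            _ = Real.exp 1 := by rw [one_div, inv_mul_cancel₀ hm.ne']
            _ ≤ 3 := by linarith [Real.exp_one_lt_d9]
        calc ((m : ℝ) + 1) ^ m = (m : ℝ) ^ m * (1 + 1 / m) ^ m := by rw [h1, mul_pow]
          _ ≤ (m : ℝ) ^ m * 3 := by
              have := pow_nonneg hm.le m
              exact mul_le_mul_of_nonneg_left h2 this
          _ = 3 * (m : ℝ) ^ m := by ring
    have hm1 : (0 : ℝ) ≤ (m : ℝ) + 1 := by positivity
    calc ((m + 1 : ℕ) : ℝ) ^ (m + 1) = ((m : ℝ) + 1) * ((m : ℝ) + 1) ^ m := by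
          push_cast; ring
      _ ≤ ((m : ℝ) + 1) * (3 * (m : ℝ) ^ m) := mul_le_mul_of_nonneg_left key hm1
      _ ≤ ((m : ℝ) + 1) * (3 * ((m.factorial : ℝ) * 3 ^ m)) := by
          have h3 : (0 : ℝ) ≤ 3 := by norm_num
          exact mul_le_mul_of_nonneg_left (mul_le_mul_of_nonneg_left ih h3) hm1
      _ = ((m + 1 : ℕ).factorial : ℝ) * 3 ^ (m + 1) := by
          rw [Nat.factorial_succ]; push_cast; ring

private lemma ms_pow_card_le_prod (c : ℝ) (hc : 0 ≤ c) (A : Multiset ℝ)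
    (h : ∀ a ∈ A, c ≤ a) : c ^ (Multiset.card A) ≤ A.prod := by
  induction A using Multiset.induction with
  | empty => simp
  | cons a t ih =>
    have hca : c ≤ a := h a (Multiset.mem_cons_self a t)
    have ht := ih (fun b hb => h b (Multiset.mem_cons_of_mem hb))
    have htn : (0 : ℝ) ≤ t.prod := le_trans (pow_nonneg hc _) ht
    rw [Multiset.card_cons, Multiset.prod_cons, pow_succ']
    exact mul_le_mul hca ht (pow_nonneg hc _) (le_trans hc hca)


private lemma grid_count (s x : ℝ) (hs : 0 < s) (hx : 0 ≤ x) (R : Multiset ℂ)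
    (hnd : R.Nodup)
    (hsep : ∀ z ∈ R, ∀ w ∈ R, z ≠ w → s ≤ ‖z - w‖) :
    ((R.filter (fun z => ‖z‖ ≤ x)).card : ℝ) ≤ (4 * x / s + 2) ^ 2 := by
  classical
  set S : Multiset ℂ := R.filter (fun z => ‖z‖ ≤ x) with hSdef
  have hndS : S.Nodup := hnd.filter _
  set T : Finset ℂ := ⟨S, hndS⟩ with hT
  set φ : ℂ → ℤ × ℤ := fun z => (⌊2 * z.re / s⌋, ⌊2 * z.im / s⌋) with hφ
  set a : ℤ := ⌊-(2 * x / s)⌋ with ha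
  set b : ℤ := ⌊2 * x / s⌋ with hb
  have hmemS : ∀ z, z ∈ S → z ∈ R ∧ ‖z‖ ≤ x := by
    intro z hz
    rw [hSdef, Multiset.mem_filter] at hz
    exact hz
  -- image is in the box
  have himage : ∀ z ∈ T, φ z ∈ Finset.Icc (a, a) (b, b) := by
    intro z hz
    obtain ⟨hzR, hzx⟩ := hmemS z hz
    have hre : |z.re| ≤ x := le_trans (Complex.abs_re_le_norm z) hzx
    have him : |z.im| ≤ x := le_trans (Complex.abs_im_le_norm z) hzx
    rw [abs_le] at hre him
    have h1 : -(2 * x / s) ≤ 2 * z.re / s := by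
      rw [← neg_div]
      exact (div_le_div_iff_of_pos_right hs).mpr (by linarith)
    have h2 : 2 * z.re / s ≤ 2 * x / s := (div_le_div_iff_of_pos_right hs).mpr (by linarith)
    have h3 : -(2 * x / s) ≤ 2 * z.im / s := by
      rw [← neg_div]
      exact (div_le_div_iff_of_pos_right hs).mpr (by linarith)
    have h4 : 2 * z.im / s ≤ 2 * x / s := (div_le_div_iff_of_pos_right hs).mpr (by linarith)
    rw [Finset.mem_Icc]
    constructor
    · exact ⟨Int.floor_le_floor h1, Int.floor_le_floor h3⟩
    · exact ⟨Int.floor_le_floor h2, Int.floor_le_floor h4⟩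
  -- injectivity
  have hinj : Set.InjOn φ T := by
    intro z hz w hw hzw
    by_contra hne
    obtain ⟨hzR, _⟩ := hmemS z hz
    obtain ⟨hwR, _⟩ := hmemS w hw
    have hsle := hsep z hzR w hwR hne
    have hre : ⌊2 * z.re / s⌋ = ⌊2 * w.re / s⌋ := congrArg Prod.fst hzw
    have him : ⌊2 * z.im / s⌋ = ⌊2 * w.im / s⌋ := congrArg Prod.snd hzw
    have key : ∀ p q : ℝ, ⌊2 * p / s⌋ = ⌊2 * q / s⌋ → |p - q| < s / 2 := by
      intro p q hpq
      have h1 := Int.floor_le (2 * p / s)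
      have h2 := Int.lt_floor_add_one (2 * p / s)
      have h3 := Int.floor_le (2 * q / s)
      have h4 := Int.lt_floor_add_one (2 * q / s)
      rw [hpq] at h1 h2
      have hd1 : 2 * (p - q) / s < 1 := by
        have : 2 * (p - q) / s = 2 * p / s - 2 * q / s := by ring
        rw [this]; linarith
      have hd2 : 2 * (q - p) / s < 1 := by
        have : 2 * (q - p) / s = 2 * q / s - 2 * p / s := by ring
        rw [this]; linarith
      have hd1' := (div_lt_one hs).mp hd1
      have hd2' := (div_lt_one hs).mp hd2
      rw [abs_lt]
      constructor <;> linarith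
    have hre' : |z.re - w.re| < s / 2 := key _ _ hre
    have him' : |z.im - w.im| < s / 2 := key _ _ him
    have habs : (‖z - w‖) ^ 2 < s ^ 2 := by
      rw [Complex.sq_norm, Complex.normSq_apply, Complex.sub_re, Complex.sub_im]
      have e1 : (z.re - w.re) * (z.re - w.re) < (s/2)^2 := by
        nlinarith [abs_nonneg (z.re - w.re), sq_abs (z.re - w.re), abs_nonneg (z.re-w.re)]
      have e2 : (z.im - w.im) * (z.im - w.im) < (s/2)^2 := by
        nlinarith [abs_nonneg (z.im - w.im), sq_abs (z.im - w.im)]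
      nlinarith
    have : ‖z - w‖ < s := by
      nlinarith [norm_nonneg (z - w)]
    linarith
  have hcardle := Finset.card_le_card_of_injOn φ himage hinj
  have hboxcard : (Finset.Icc (a, a) (b, b)).card = ((b + 1 - a).toNat) * ((b + 1 - a).toNat) := by
    rw [Finset.Icc_prod_def, Finset.card_product]
    simp [Int.card_Icc]
  have hab : ((b + 1 - a).toNat : ℝ) ≤ 4 * x / s + 2 := by
    have h1 : (b : ℝ) ≤ 2 * x / s := Int.floor_le _
    have h2 : -(2 * x / s) - 1 < (a : ℝ) := Int.sub_one_lt_floor _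
    have h0 : (0:ℝ) ≤ 2 * x / s := by positivity
    have h3 : a ≤ b := Int.floor_le_floor (by linarith)
    have h4 : (0:ℤ) ≤ b + 1 - a := by omega
    have h5 : ((b + 1 - a).toNat : ℝ) = ((b : ℝ) + 1 - (a : ℝ)) := by
      have h6 := Int.toNat_of_nonneg h4
      have h7 := congrArg (fun z : ℤ => (z : ℝ)) h6
      push_cast at h7
      linarith
    rw [h5]
    have h8 : 4 * x / s = 2 * (2 * x / s) := by ring
    linarith
  have hcardT : (T.card : ℝ) = (S.card : ℝ) := rfl
  have h2x : (0:ℝ) ≤ 4 * x / s + 2 := by positivity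
  calc ((S.card : ℕ) : ℝ) = (T.card : ℝ) := rfl
    _ ≤ ((Finset.Icc (a, a) (b, b)).card : ℝ) := by exact_mod_cast hcardle
    _ = ((b + 1 - a).toNat : ℝ) * ((b + 1 - a).toNat : ℝ) := by rw [hboxcard]; push_cast; ring
    _ ≤ (4 * x / s + 2) * (4 * x / s + 2) := by
        exact mul_le_mul hab hab (by positivity) h2x
    _ = (4 * x / s + 2) ^ 2 := by ring


private lemma prod_lower (s : ℝ) (hs : 0 < s) :
    ∀ (N : ℕ) (A : Multiset ℝ), Multiset.card A = N →
      (∀ a ∈ A, s / 2 ≤ a) →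
      (∀ x : ℝ, 0 ≤ x → ((A.filter (fun a => a ≤ x)).card : ℝ) ≤ (4 * x / s + 2) ^ 2) →
      (s / 12) ^ N * Real.sqrt (N.factorial) ≤ (A.map (fun a => max 1 a)).prod := by
  intro N
  induction N with
  | zero =>
    intro A hA _ _
    rw [Multiset.card_eq_zero] at hA
    subst hA
    simp
  | succ m ih =>
    intro A hcard hmem hcount
    have hA0 : A ≠ 0 := by
      intro h; rw [h] at hcard; simp at hcard
    obtain ⟨a, haF, hamax⟩ := A.toFinset.exists_max_image id (by
      rwa [Multiset.toFinset_nonempty])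
    rw [Multiset.mem_toFinset] at haF
    have hamax' : ∀ b ∈ A, b ≤ a := fun b hb =>
      hamax b (Multiset.mem_toFinset.mpr hb)
    have has : s / 2 ≤ a := hmem a haF
    have ha0 : 0 < a := by linarith
    -- counting at x = a gives everything
    have hfa : A.filter (fun b => b ≤ a) = A := Multiset.filter_eq_self.mpr hamax'
    have hcnt := hcount a ha0.le
    rw [hfa, hcard] at hcnt
    have hsqrt : Real.sqrt ((m : ℝ) + 1) ≤ 4 * a / s + 2 := by
      have h1 : (0:ℝ) ≤ 4 * a / s + 2 := by positivity
      have h2 : Real.sqrt ((m : ℝ) + 1) ≤ Real.sqrt ((4 * a / s + 2) ^ 2) := by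
        apply Real.sqrt_le_sqrt
        exact_mod_cast hcnt
      rwa [Real.sqrt_sq h1] at h2
    -- key bound
    have hkey : (s / 12) * Real.sqrt ((m : ℝ) + 1) ≤ a := by
      rcases le_or_gt (Real.sqrt ((m : ℝ) + 1)) 6 with h6 | h6
      · nlinarith [Real.sqrt_nonneg ((m : ℝ) + 1)]
      · have h7 : s * Real.sqrt ((m : ℝ) + 1) ≤ s * (4 * a / s + 2) :=
          mul_le_mul_of_nonneg_left hsqrt hs.le
        have h8 : s * (4 * a / s + 2) = 4 * a + 2 * s := by field_simp
        have h9 : 6 * s < s * Real.sqrt ((m : ℝ) + 1) := by nlinarith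
        nlinarith
    -- induction step on A.erase a
    set A' : Multiset ℝ := A.erase a with hA'
    have hconsA : a ::ₘ A' = A := Multiset.cons_erase haF
    have hcard' : Multiset.card A' = m := by
      have := congrArg Multiset.card hconsA
      rw [Multiset.card_cons, hcard] at this
      omega
    have hmem' : ∀ b ∈ A', s / 2 ≤ b := fun b hb =>
      hmem b (Multiset.mem_of_le (Multiset.erase_le a A) hb)
    have hcount' : ∀ x : ℝ, 0 ≤ x →
        ((A'.filter (fun b => b ≤ x)).card : ℝ) ≤ (4 * x / s + 2) ^ 2 := by
      intro x hx
      have hle : A'.filter (fun b => b ≤ x) ≤ A.filter (fun b => b ≤ x) :=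
        Multiset.filter_le_filter _ (Multiset.erase_le a A)
      have := Multiset.card_le_card hle
      calc ((A'.filter (fun b => b ≤ x)).card : ℝ)
          ≤ ((A.filter (fun b => b ≤ x)).card : ℝ) := by exact_mod_cast this
        _ ≤ (4 * x / s + 2) ^ 2 := hcount x hx
    have hih := ih A' hcard' hmem' hcount'
    have hprodsplit : (A.map (fun b => max 1 b)).prod
        = max 1 a * (A'.map (fun b => max 1 b)).prod := by
      rw [← hconsA, Multiset.map_cons, Multiset.prod_cons]
    have hfact : Real.sqrt ((m + 1).factorial : ℝ)
        = Real.sqrt ((m : ℝ) + 1) * Real.sqrt (m.factorial : ℝ) := by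
      rw [← Real.sqrt_mul (by positivity)]
      congr 1
      rw [Nat.factorial_succ]
      push_cast
      ring
    have hle1 : (0:ℝ) ≤ (s / 12) ^ m * Real.sqrt (m.factorial : ℝ) := by positivity
    have hmax : a ≤ max 1 a := le_max_right 1 a
    have hprodnn : (0:ℝ) ≤ (A'.map (fun b => max 1 b)).prod := le_trans hle1 hih
    calc (s / 12) ^ (m + 1) * Real.sqrt ((m + 1).factorial : ℝ)
        = ((s / 12) * Real.sqrt ((m : ℝ) + 1)) * ((s / 12) ^ m * Real.sqrt (m.factorial : ℝ)) := by
          rw [hfact, pow_succ]; ring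
      _ ≤ a * (A'.map (fun b => max 1 b)).prod := by
          apply mul_le_mul hkey hih hle1 ha0.le
      _ ≤ max 1 a * (A'.map (fun b => max 1 b)).prod :=
          mul_le_mul_of_nonneg_right hmax hprodnn
      _ = (A.map (fun b => max 1 b)).prod := hprodsplit.symm

theorem sep_le_min_two_const_mul_mahler_rpow_inv_n_of_nonreal_min_root
    (n : ℕ) (hn : 2 ≤ n) (f : Polynomial ℝ)
    (hmonic : f.Monic) (hsep : f.Separable) (hdeg : f.natDegree = n)
    (hroot : ∃ α ∈ (f.map (algebraMap ℝ ℂ)).roots,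
      α.im ≠ 0 ∧ ∀ β ∈ (f.map (algebraMap ℝ ℂ)).roots, ‖α‖ ≤ ‖β‖) :
    polySep (f.map (algebraMap ℝ ℂ)) ≤
      min 2 (34 / Real.sqrt n) * _root_.mahlerMeasure (f.map (algebraMap ℝ ℂ)) ^ ((1 : ℝ) / (n : ℝ)) := by
  classical
  obtain ⟨α, hα, him, hmin⟩ := hroot
  set F : Polynomial ℂ := f.map (algebraMap ℝ ℂ) with hF
  have hFmonic : F.Monic := hmonic.map _
  have hF0 : F ≠ 0 := hFmonic.ne_zero
  set R : Multiset ℂ := F.roots with hR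
  set s : ℝ := polySep F with hs
  set M : ℝ := _root_.mahlerMeasure F with hM
  set μ : ℝ := M ^ ((1 : ℝ) / (n : ℝ)) with hμ
  set r : ℝ := ‖α‖ with hr
  have hn0 : (n : ℝ) ≠ 0 := by positivity
  -- basic facts
  have hcard : Multiset.card R = n := by
    rw [hR, hF, IsAlgClosed.card_roots_map_eq_natDegree_of_injective f (algebraMap ℝ ℂ).injective, hdeg]
  have hnodup : R.Nodup := Polynomial.nodup_roots (hsep.map (f := algebraMap ℝ ℂ))
  -- pair separation
  have hbdd : BddBelow {d : ℝ | ∃ a ∈ F.roots, ∃ b ∈ F.roots, a ≠ b ∧ d = ‖a - b‖} := by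
    refine ⟨0, fun d hd => ?_⟩
    obtain ⟨a, _, b, _, _, rfl⟩ := hd
    exact norm_nonneg _
  have hpair : ∀ z ∈ R, ∀ w ∈ R, z ≠ w → s ≤ ‖z - w‖ := by
    intro z hz w hw hzw
    exact csInf_le hbdd ⟨z, hz, w, hw, hzw, rfl⟩
  -- conjugate root
  have hconj : (starRingEnd ℂ) α ∈ R := by
    rw [hR, hF, Polynomial.mem_roots (by rwa [← hF])]
    have h1 : F.eval α = 0 := by
      rw [hR] at hα
      exact (Polynomial.mem_roots hF0).mp hα
    have h2 : ∀ z : ℂ, F.eval z = Polynomial.aeval z f := by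
      intro z
      rw [hF, Polynomial.eval_map, Polynomial.aeval_def]
    show F.eval _ = 0
    rw [h2, Polynomial.aeval_conj, ← h2, h1, map_zero]
  have hne : α ≠ (starRingEnd ℂ) α := by
    intro h
    exact him (Complex.conj_eq_iff_im.mp h.symm)
  -- s ≤ 2 r
  have hs2r : s ≤ 2 * r := by
    have h1 : s ≤ ‖α - (starRingEnd ℂ) α‖ := hpair α hα _ hconj hne
    have h2 : ‖α - (starRingEnd ℂ) α‖ = 2 * |α.im| := by
      rw [Complex.sub_conj]
      rw [norm_mul, Complex.norm_I, Complex.norm_real, Real.norm_eq_abs, mul_one]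
      rw [abs_mul]
      norm_num
    have h3 : |α.im| ≤ r := Complex.abs_im_le_norm α
    rw [h2] at h1
    linarith
  -- Mahler measure representation
  set A : Multiset ℝ := R.map (fun z => ‖z‖) with hA
  have hcardA : Multiset.card A = n := by rw [hA, Multiset.card_map, hcard]
  have hMrepr : M = (A.map (fun a => max 1 a)).prod := by
    rw [hM, _root_.mahlerMeasure, hA, Multiset.map_map]
    rfl
  have hrlow : ∀ a ∈ A, r ≤ a := by
    intro a ha
    obtain ⟨z, hz, rfl⟩ := Multiset.mem_map.mp ha
    exact hmin z hz
  -- max 1 r ^ n ≤ M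
  have hpowM : (max 1 r) ^ n ≤ M := by
    rw [hMrepr]
    have := ms_pow_card_le_prod (max 1 r) (le_trans zero_le_one (le_max_left 1 r))
      (A.map (fun a => max 1 a)) (by
        intro b hb
        obtain ⟨a, ha, rfl⟩ := Multiset.mem_map.mp hb
        exact max_le_max le_rfl (hrlow a ha))
    rwa [Multiset.card_map, hcardA] at this
  have hM1 : (1 : ℝ) ≤ M := by
    calc (1:ℝ) = 1 ^ n := (one_pow n).symm
      _ ≤ (max 1 r) ^ n := pow_le_pow_left₀ zero_le_one (le_max_left 1 r) n
      _ ≤ M := hpowM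
  have hM0 : (0 : ℝ) ≤ M := by linarith
  -- n-th root extraction
  have hroot_le : ∀ c : ℝ, 0 ≤ c → c ^ n ≤ M → c ≤ μ := by
    intro c hc h
    have h1 : (c ^ n : ℝ) ^ ((1:ℝ)/n) ≤ M ^ ((1:ℝ)/n) :=
      Real.rpow_le_rpow (by positivity) h (by positivity)
    rwa [← Real.rpow_natCast c n, ← Real.rpow_mul hc, mul_one_div, div_self hn0,
      Real.rpow_one] at h1
  have hμ0 : (0 : ℝ) ≤ μ := Real.rpow_nonneg hM0 _
  have hrμ : r ≤ μ := le_trans (le_max_right 1 r) (hroot_le _ (le_trans zero_le_one (le_max_left 1 r)) hpowM)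
  -- Part A : s ≤ 2 μ
  have hPartA : s ≤ 2 * μ := by linarith
  -- Part B : s ≤ 34 / sqrt n * μ
  have hsqn : (0:ℝ) < Real.sqrt n := Real.sqrt_pos.mpr (by positivity)
  have hPartB : s ≤ 34 / Real.sqrt n * μ := by
    rcases le_or_gt s 0 with hsneg | hspos
    · have : (0:ℝ) ≤ 34 / Real.sqrt n * μ := by positivity
      linarith
    -- counting hypothesis
    have hcountA : ∀ x : ℝ, 0 ≤ x →
        ((A.filter (fun a => a ≤ x)).card : ℝ) ≤ (4 * x / s + 2) ^ 2 := by
      intro x hx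
      have h1 : (A.filter (fun a => a ≤ x)).card
          = (R.filter (fun z => ‖z‖ ≤ x)).card := by
        rw [hA, ← Multiset.countP_eq_card_filter, Multiset.countP_map,
          ← Multiset.countP_eq_card_filter]
      rw [h1]
      exact grid_count s x hspos hx R hnodup hpair
    have hmemA : ∀ a ∈ A, s / 2 ≤ a := by
      intro a ha
      have := hrlow a ha
      linarith
    have hkey := prod_lower s hspos n A hcardA hmemA hcountA
    rw [← hMrepr] at hkey
    -- convert to clean power bound
    have hsqrt3 : Real.sqrt 3 ≤ 2 := by
      nlinarith [Real.sq_sqrt (by norm_num : (0:ℝ) ≤ 3), Real.sqrt_nonneg 3]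
    have hsqrt3' : (0:ℝ) < Real.sqrt 3 := Real.sqrt_pos.mpr (by norm_num)
    have hsqpow : ∀ (x : ℝ), 0 ≤ x → ∀ k : ℕ, Real.sqrt x ^ k = Real.sqrt (x ^ k) := by
      intro x hx k
      induction k with
      | zero => simp
      | succ k ih => rw [pow_succ, pow_succ, ih, Real.sqrt_mul (pow_nonneg hx k)]
    set c : ℝ := s * Real.sqrt n / (12 * Real.sqrt 3) with hc
    have hc0 : 0 ≤ c := by positivity
    have hcsplit : c = (s / 12) * (Real.sqrt n / Real.sqrt 3) := by rw [hc]; ring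
    have hfact3 : ((n : ℝ) / 3) ^ n ≤ (n.factorial : ℝ) := by
      have h1 := pow_le_factorial_mul n
      have h2 : (0:ℝ) < 3 ^ n := by positivity
      rw [div_pow, div_le_iff₀ h2]
      linarith
    have hcn : c ^ n ≤ M := by
      have h1 : (Real.sqrt n / Real.sqrt 3) ^ n ≤ Real.sqrt (n.factorial : ℝ) := by
        rw [← Real.sqrt_div (by positivity : (0:ℝ) ≤ (n:ℝ)) 3,
          hsqpow _ (by positivity) n]
        exact Real.sqrt_le_sqrt hfact3
      calc c ^ n = (s / 12) ^ n * (Real.sqrt n / Real.sqrt 3) ^ n := by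
            rw [hcsplit, mul_pow]
        _ ≤ (s / 12) ^ n * Real.sqrt (n.factorial : ℝ) := by
            apply mul_le_mul_of_nonneg_left h1 (by positivity)
        _ ≤ M := hkey
    have hcμ : c ≤ μ := hroot_le c hc0 hcn
    -- c ≤ μ ⇒ s * sqrt n ≤ 12 sqrt 3 μ ≤ 24 μ ≤ 34 μ
    have h12 : s * Real.sqrt n ≤ 12 * Real.sqrt 3 * μ := by
      rw [hc, div_le_iff₀ (by positivity)] at hcμ
      linarith
    have h34 : s * Real.sqrt n ≤ 34 * μ := by nlinarith
    rw [div_mul_eq_mul_div, le_div_iff₀ hsqn]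
    linarith
  -- combine
  have hmin2 : min 2 (34 / Real.sqrt n) * μ = min (2 * μ) (34 / Real.sqrt n * μ) :=
    min_mul_of_nonneg _ _ hμ0
  rw [hmin2]
  exact le_min hPartA hPartB
end

section
/- For every ε > 0 and every N, there exist an integer n ≥ N and a monic separable polynomial f ∈ ℝ[X] of degree n all of whose roots are real, such that sep(f) ≥ ((2e − ε)/n) · M(f)^{1/(n-1)}. Consequently, the constant 2e in the asymptotic bound sep(f) ≤ ((2e+o(1))/n)·M(f)^{1/(n-1)} for totally real polynomials is sharp. -/
open Polynomial

lemma fact_bound : ∀ m : ℕ, 1 ≤ m →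
    (m.factorial : ℝ) * Real.exp 1 ^ m ≤ Real.exp 1 * (m : ℝ) ^ (m + 1) := by
  intro m
  induction m with
  | zero => intro h; omega
  | succ m ih =>
    intro _
    rcases Nat.eq_zero_or_pos m with hm | hm
    · subst hm; norm_num
    have hm1 : (1:ℝ) ≤ m := by exact_mod_cast hm
    have hmpos : (0:ℝ) < m := by linarith
    set x : ℝ := 1/((m:ℝ)+1) with hxdef
    have h1 : Real.exp (-x) ≥ 1 - x := by
      have := Real.add_one_le_exp (-x); linarith
    have hx := Real.exp_pos x
    have hprod : Real.exp x * Real.exp (-x) = 1 := by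
      rw [← Real.exp_add]; ring_nf; exact Real.exp_zero
    have hpos : (0:ℝ) < 1 - x := by
      rw [hxdef, sub_pos, div_lt_one (by linarith)]; linarith
    have h2 : Real.exp x ≤ ((m:ℝ)+1)/m := by
      rw [le_div_iff₀ hmpos]
      have hxm : x * ((m:ℝ)+1) = 1 := by rw [hxdef]; field_simp
      nlinarith [h1, hprod, hx]
    have h3 : Real.exp 1 ≤ (((m:ℝ)+1)/m) ^ (m+1) := by
      have : Real.exp 1 = Real.exp x ^ (m+1) := by
        rw [← Real.exp_nat_mul]
        congr 1
        rw [hxdef]; field_simp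
        norm_cast
      rw [this]
      exact pow_le_pow_left₀ (le_of_lt hx) h2 (m+1)
    have key : Real.exp 1 * (m:ℝ) ^ (m+1) ≤ ((m:ℝ)+1) ^ (m+1) := by
      calc Real.exp 1 * (m:ℝ) ^ (m+1) ≤ (((m:ℝ)+1)/m) ^ (m+1) * (m:ℝ) ^ (m+1) := by
            apply mul_le_mul_of_nonneg_right h3 (by positivity)
        _ = ((m:ℝ)+1) ^ (m+1) := by
            rw [← mul_pow, div_mul_cancel₀]; exact ne_of_gt hmpos
    have ihm := ih hm
    have hepos := Real.exp_pos 1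
    calc ((m+1).factorial : ℝ) * Real.exp 1 ^ (m+1)
        = ((m:ℝ)+1) * Real.exp 1 * ((m.factorial : ℝ) * Real.exp 1 ^ m) := by
          rw [Nat.factorial_succ]; push_cast; ring
      _ ≤ ((m:ℝ)+1) * Real.exp 1 * (Real.exp 1 * (m : ℝ) ^ (m + 1)) := by
          apply mul_le_mul_of_nonneg_left ihm (by positivity)
      _ = ((m:ℝ)+1) * (Real.exp 1 * (Real.exp 1 * (m : ℝ) ^ (m + 1))) := by ring
      _ ≤ ((m:ℝ)+1) * (Real.exp 1 * ((m:ℝ)+1) ^ (m+1)) := by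
          apply mul_le_mul_of_nonneg_left _ (by positivity)
          exact mul_le_mul_of_nonneg_left key (le_of_lt hepos)
      _ = Real.exp 1 * ((m:ℝ)+1) ^ (m+1+1) := by ring
      _ = Real.exp 1 * ((m+1 : ℕ) : ℝ) ^ (m+1+1) := by push_cast; ring

lemma prod_max_abs : ∀ m : ℕ,
    (∏ j ∈ Finset.Icc (-(m:ℤ)) (m:ℤ), max 1 |(j:ℝ)|) = (m.factorial : ℝ)^2 := by
  intro m
  induction m with
  | zero => simp
  | succ m ih =>
    have hset : Finset.Icc (-((m:ℤ)+1)) ((m:ℤ)+1) =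
        insert (-((m:ℤ)+1)) (insert ((m:ℤ)+1) (Finset.Icc (-(m:ℤ)) (m:ℤ))) := by
      ext a; simp only [Finset.mem_Icc, Finset.mem_insert]; omega
    have h1 : (-((m:ℤ)+1)) ∉ insert ((m:ℤ)+1) (Finset.Icc (-(m:ℤ)) (m:ℤ)) := by
      simp only [Finset.mem_insert, Finset.mem_Icc]; omega
    have h2 : ((m:ℤ)+1) ∉ Finset.Icc (-(m:ℤ)) (m:ℤ) := by
      simp only [Finset.mem_Icc]; omega
    have hmc : (0:ℝ) ≤ (m:ℝ) := Nat.cast_nonneg m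
    have hv : max 1 |((-((m:ℤ)+1) : ℤ):ℝ)| = (m:ℝ)+1 := by
      push_cast
      rw [abs_neg, abs_of_nonneg (by linarith), max_eq_right (by linarith)]
    have hv2 : max 1 |(((m:ℤ)+1 : ℤ):ℝ)| = (m:ℝ)+1 := by
      push_cast
      rw [abs_of_nonneg (by linarith), max_eq_right (by linarith)]
    calc (∏ j ∈ Finset.Icc (-((m+1:ℕ):ℤ)) ((m+1:ℕ):ℤ), max 1 |(j:ℝ)|)
        = ∏ j ∈ insert (-((m:ℤ)+1)) (insert ((m:ℤ)+1) (Finset.Icc (-(m:ℤ)) (m:ℤ))),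
            max 1 |(j:ℝ)| := by rw [← hset]; norm_num
      _ = ((m:ℝ)+1) * (((m:ℝ)+1) * (m.factorial : ℝ)^2) := by
          rw [Finset.prod_insert h1, Finset.prod_insert h2, ih, hv, hv2]
      _ = ((m+1).factorial : ℝ)^2 := by rw [Nat.factorial_succ]; push_cast; ring

theorem exists_real_rooted_poly_sep_ge_two_e_sub_eps_div_n (ε : ℝ) (hε : 0 < ε) (N : ℕ) :
    ∃ n : ℕ, N ≤ n ∧ ∃ f : Polynomial ℝ,
      f.Monic ∧ f.Separable ∧ f.natDegree = n ∧
      (∀ z ∈ (f.map (algebraMap ℝ ℂ)).roots, z.im = 0) ∧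
      polySep (f.map (algebraMap ℝ ℂ)) ≥
        ((2 * Real.exp 1 - ε) / (n : ℝ)) *
          _root_.mahlerMeasure (f.map (algebraMap ℝ ℂ)) ^ ((1 : ℝ) / ((n : ℝ) - 1)) := by
  set E := Real.exp 1 with hEdef
  have hE2 : (2:ℝ) ≤ E := by
    have := Real.add_one_le_exp 1; rw [hEdef]; linarith
  have hEpos : (0:ℝ) < E := by linarith
  set ε' : ℝ := min ε E with hε'def
  have hε'pos : 0 < ε' := lt_min hε hEpos
  have hε'leE : ε' ≤ E := min_le_right _ _
  have hε'le : ε' ≤ ε := min_le_left _ _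
  set c : ℝ := 2*E - ε' with hcdef
  have hc : 0 < c := by rw [hcdef]; linarith
  set δ : ℝ := ε' / c with hδdef
  have hδ : 0 < δ := div_pos hε'pos hc
  set k : ℕ := max (max N 1) ⌈2*E/δ^2⌉₊ with hkdef
  have hk1 : 1 ≤ k := le_trans (le_max_right N 1) (le_max_left _ _)
  have hkN : N ≤ k := le_trans (le_max_left N 1) (le_max_left _ _)
  have hk2 : 2*E/δ^2 ≤ (k:ℝ) := le_trans (Nat.le_ceil _) (by exact_mod_cast le_max_right _ _)
  set m : ℕ := 2*k with hmdef
  have hm1 : 1 ≤ m := by omega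
  have hmR : (1:ℝ) ≤ (m:ℝ) := by exact_mod_cast hm1
  refine ⟨2*m+1, by omega, ?_⟩
  set s : Finset ℤ := Finset.Icc (-(m:ℤ)) (m:ℤ) with hsdef
  have hscard : s.card = 2*m+1 := by
    rw [hsdef, Int.card_Icc]; omega
  set f : Polynomial ℝ := ∏ j ∈ s, (X - C (j:ℝ)) with hfdef
  have hginj : Set.InjOn (fun j : ℤ => ((j:ℝ):ℂ)) s := by
    intro a _ b _ h
    exact Int.cast_injective (Complex.ofReal_injective h)
  have hmap : f.map (algebraMap ℝ ℂ) =
      ∏ b ∈ s.image (fun j : ℤ => ((j:ℝ):ℂ)), (X - C b) := by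
    rw [hfdef, Polynomial.map_prod, Finset.prod_image hginj]
    simp [Polynomial.map_sub]
  have hroots : (f.map (algebraMap ℝ ℂ)).roots =
      (s.image (fun j : ℤ => ((j:ℝ):ℂ))).val := by
    rw [hmap, roots_prod_X_sub_C]
  have hM : _root_.mahlerMeasure (f.map (algebraMap ℝ ℂ)) = ((m.factorial:ℝ))^2 := by
    show ((f.map (algebraMap ℝ ℂ)).roots.map (fun a => max 1 ‖a‖)).prod = _
    rw [hroots]
    have h0 : (((s.image (fun j : ℤ => ((j:ℝ):ℂ))).val).map
        (fun a => max 1 ‖a‖)).prod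
        = ∏ b ∈ s.image (fun j : ℤ => ((j:ℝ):ℂ)), max 1 ‖b‖ := rfl
    rw [h0, Finset.prod_image hginj]
    rw [Finset.prod_congr rfl (fun j _ => by rw [Complex.norm_real, Real.norm_eq_abs])]
    rw [hsdef, prod_max_abs]
  have hsep1 : (1:ℝ) ≤ polySep (f.map (algebraMap ℝ ℂ)) := by
    apply le_csInf
    · refine ⟨‖(((0:ℤ):ℝ):ℂ) - (((1:ℤ):ℝ):ℂ)‖,
        (((0:ℤ):ℝ):ℂ), ?_, (((1:ℤ):ℝ):ℂ), ?_, ?_, rfl⟩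
      · rw [hroots, ← Finset.mem_def]
        exact Finset.mem_image.mpr ⟨0, by simp only [hsdef, Finset.mem_Icc]; omega, rfl⟩
      · rw [hroots, ← Finset.mem_def]
        exact Finset.mem_image.mpr ⟨1, by simp only [hsdef, Finset.mem_Icc]; omega, rfl⟩
      · intro h
        have := Complex.ofReal_injective h
        norm_num at this
    · rintro d ⟨a, ha, b, hb, hab, rfl⟩
      rw [hroots, ← Finset.mem_def] at ha hb
      obtain ⟨i, _, rfl⟩ := Finset.mem_image.mp ha
      obtain ⟨j, _, rfl⟩ := Finset.mem_image.mp hb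
      have hij : i ≠ j := fun h => hab (by rw [h])
      have heq : (((i:ℝ):ℂ)) - (((j:ℝ):ℂ)) = (((i - j : ℤ):ℝ):ℂ) := by push_cast; ring
      rw [heq, Complex.norm_real, Real.norm_eq_abs]
      have h1 : (1:ℤ) ≤ |i - j| := Int.one_le_abs (sub_ne_zero.mpr hij)
      rw [← Int.cast_abs]
      exact_mod_cast h1
  refine ⟨f, monic_prod_of_monic _ _ fun j _ => monic_X_sub_C _,
    separable_prod_X_sub_C_iff'.mpr fun x _ y _ h => Int.cast_injective h, ?_, ?_, ?_⟩
  · rw [hfdef, natDegree_prod _ _ fun i _ => X_sub_C_ne_zero _]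
    simp only [natDegree_X_sub_C, Finset.sum_const, smul_eq_mul, mul_one]
    exact hscard
  · intro z hz
    rw [hroots, ← Finset.mem_def] at hz
    obtain ⟨j, _, rfl⟩ := Finset.mem_image.mp hz
    exact Complex.ofReal_im _
  · -- main inequality
    rw [ge_iff_le, hM]
    refine le_trans ?_ hsep1
    -- key factorial bound
    have hkd : 2*E ≤ (k:ℝ)*δ^2 := by
      rw [div_le_iff₀ (by positivity)] at hk2
      linarith
    have hb : (1:ℝ) + (k:ℝ)*δ ≤ (1+δ)^k := one_add_mul_le_pow (by linarith) k
    have hkR : (0:ℝ) ≤ (k:ℝ) := Nat.cast_nonneg k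
    have hmcast : (m:ℝ) = 2*(k:ℝ) := by rw [hmdef]; push_cast; ring
    have hEm : E * (m:ℝ) ≤ (1+δ)^m := by
      have hpm : (1+δ)^m = ((1+δ)^k)^2 := by rw [hmdef, mul_comm, pow_mul]
      rw [hpm, hmcast]
      nlinarith [hb, hkd, hδ.le, hkR, mul_nonneg hkR hδ.le]
    have hfb := fact_bound m hm1
    have h1δc : (1+δ)*c = 2*E := by
      rw [hδdef, add_mul, div_mul_cancel₀ _ hc.ne', one_mul, hcdef]; ring
    have h1δ : (1+δ)*(m:ℝ) = E*(2*(m:ℝ))/c := by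
      rw [eq_div_iff hc.ne']
      linear_combination (m:ℝ) * h1δc
    have hstep : E * (m:ℝ)^(m+1) ≤ ((1+δ)*(m:ℝ))^m := by
      rw [mul_pow]
      calc E * (m:ℝ)^(m+1) = (E*(m:ℝ)) * (m:ℝ)^m := by rw [pow_succ]; ring
        _ ≤ (1+δ)^m * (m:ℝ)^m := mul_le_mul_of_nonneg_right hEm (by positivity)
    have hstep2 : ((1+δ)*(m:ℝ))^m ≤ (E*((2*(m:ℝ)+1)/c))^m := by
      apply pow_le_pow_left₀ (by positivity)
      rw [h1δ, mul_div_assoc]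
      gcongr
      linarith
    have hkey : (m.factorial : ℝ) ≤ ((2*(m:ℝ)+1)/c)^m := by
      have hchain : (m.factorial:ℝ) * E^m ≤ ((2*(m:ℝ)+1)/c)^m * E^m := by
        calc (m.factorial:ℝ)*E^m ≤ E*(m:ℝ)^(m+1) := hfb
          _ ≤ ((1+δ)*(m:ℝ))^m := hstep
          _ ≤ (E*((2*(m:ℝ)+1)/c))^m := hstep2
          _ = ((2*(m:ℝ)+1)/c)^m * E^m := by rw [mul_pow]; ring
      exact le_of_mul_le_mul_right hchain (pow_pos hEpos m)
    -- reduce the goal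
    have hncast : ((2*m+1:ℕ):ℝ) = 2*(m:ℝ)+1 := by push_cast; ring
    have hmne : (m:ℝ) ≠ 0 := by positivity
    have hA : ((m.factorial:ℝ)^2) ^ ((1:ℝ)/(((2*m+1:ℕ):ℝ) - 1))
        = (m.factorial:ℝ) ^ ((m:ℝ)⁻¹) := by
      rw [show ((m.factorial:ℝ)^2) = ((m.factorial:ℝ)) ^ (2:ℕ) from rfl,
        ← Real.rpow_natCast ((m.factorial:ℝ)) 2, ← Real.rpow_mul (Nat.cast_nonneg _)]
      congr 1
      rw [hncast]
      push_cast
      field_simp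
      ring
    rw [hA]
    have hAle : (m.factorial:ℝ) ^ ((m:ℝ)⁻¹) ≤ (2*(m:ℝ)+1)/c := by
      rw [Real.rpow_inv_le_iff_of_pos (Nat.cast_nonneg _) (by positivity) (by positivity)]
      rw [Real.rpow_natCast]
      exact hkey
    have hA0 : (0:ℝ) ≤ (m.factorial:ℝ) ^ ((m:ℝ)⁻¹) := Real.rpow_nonneg (Nat.cast_nonneg _) _
    calc (2*E - ε)/((2*m+1:ℕ):ℝ) * ((m.factorial:ℝ) ^ ((m:ℝ)⁻¹))
        ≤ c/((2*m+1:ℕ):ℝ) * ((2*(m:ℝ)+1)/c) := by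
          apply mul_le_mul _ hAle hA0 (by positivity)
          exact (div_le_div_iff_of_pos_right (by positivity : (0:ℝ) < ((2*m+1:ℕ):ℝ))).mpr
            (by rw [hcdef]; linarith)
      _ = 1 := by
          rw [hncast]
          field_simp
end

section
/- Let f ∈ ℝ[X] be a monic separable polynomial of degree 3 having exactly one real root. Then sep(f) ≤ √(3·M(f)). -/
open Polynomial

lemma helper_ineq (b s t : ℝ) (hb : 1 ≤ b) (hs : 0 ≤ s) (ht : 0 ≤ t) :
    min (4*t) ((b+s)^2 + t) ≤ 3 * b * max 1 (s^2 + t) := by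
  rcases le_total 1 (s^2+t) with hr | hr
  · rw [max_eq_right hr]
    rcases le_total (4*t) (3*b*(s^2+t)) with h | h
    · exact le_trans (min_le_left _ _) h
    · refine le_trans (min_le_right _ _) ?_
      nlinarith [sq_nonneg (b-1), sq_nonneg (2*s-1), sq_nonneg (b+s), sq_nonneg (s-1),
        mul_nonneg hs ht, sq_nonneg (b - s^2 - t), mul_nonneg (mul_nonneg hs hs) hs,
        sq_nonneg (s*(b-1)), sq_nonneg (2*s - b), mul_nonneg (sub_nonneg.2 hb) hs,
        mul_nonneg (sub_nonneg.2 hr) (sub_nonneg.2 hb)]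
  · rw [max_eq_left hr]
    rcases le_total (4*t) (3*b) with h | h
    · exact le_trans (min_le_left _ _) (by linarith)
    · refine le_trans (min_le_right _ _) ?_
      nlinarith [sq_nonneg (2*s-1), sq_nonneg (b-1), mul_nonneg (sub_nonneg.2 hb) hs,
        sq_nonneg (b+s), mul_nonneg (sub_nonneg.2 hb) (sub_nonneg.2 hb), sq_nonneg (2*s - b)]

theorem sep_le_sqrt_three_mul_mahler_of_cubic_one_real_root
    (f : Polynomial ℝ) (hmonic : f.Monic) (hsep : f.Separable) (hdeg : f.natDegree = 3)
    (hreal : ∃! α : ℂ, α ∈ (f.map (algebraMap ℝ ℂ)).roots ∧ α.im = 0) :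
    polySep (f.map (algebraMap ℝ ℂ)) ≤
      Real.sqrt (3 * _root_.mahlerMeasure (f.map (algebraMap ℝ ℂ))) := by
  set g : Polynomial ℂ := f.map (algebraMap ℝ ℂ) with hg
  have hgm : g.Monic := hmonic.map _
  have hg0 : g ≠ 0 := hgm.ne_zero
  have hcard : Multiset.card g.roots = 3 := by
    rw [hg, IsAlgClosed.card_roots_map_eq_natDegree_of_injective f (algebraMap ℝ ℂ).injective, hdeg]
  have hnodup : g.roots.Nodup := Polynomial.nodup_roots hsep.map
  -- conjugation stability of roots
  have hconj : ∀ z ∈ g.roots, (starRingEnd ℂ) z ∈ g.roots := by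
    intro z hz
    rw [Polynomial.mem_roots hg0] at hz ⊢
    have h1 : Polynomial.aeval z f = 0 := by
      rwa [Polynomial.aeval_def, ← Polynomial.eval_map]
    show Polynomial.eval ((starRingEnd ℂ) z) g = 0
    rw [hg, Polynomial.eval_map, ← Polynomial.aeval_def, Polynomial.aeval_conj, h1, map_zero]
  obtain ⟨α, ⟨hαmem, hαim⟩, huniq⟩ := hreal
  -- find the second root β
  have hcard_erase : Multiset.card (g.roots.erase α) = 2 := by
    rw [Multiset.card_erase_of_mem hαmem, hcard]; rfl
  have : ∃ β, β ∈ g.roots.erase α := Multiset.exists_mem_of_ne_zero (by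
    intro h; rw [h] at hcard_erase; simp at hcard_erase)
  obtain ⟨β, hβe⟩ := this
  have hβmem : β ∈ g.roots := Multiset.mem_of_mem_erase hβe
  have hβα : β ≠ α := (hnodup.mem_erase_iff.mp hβe).1
  have hβim : β.im ≠ 0 := fun h => hβα (huniq β ⟨hβmem, h⟩)
  have hcβmem : (starRingEnd ℂ) β ∈ g.roots := hconj β hβmem
  have hcββ : (starRingEnd ℂ) β ≠ β := fun h => hβim (Complex.conj_eq_iff_im.mp h)
  have hcβα : (starRingEnd ℂ) β ≠ α := by
    intro h
    apply hβim
    have := congrArg Complex.im h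
    simp [Complex.conj_im, hαim] at this
    exact this
  -- the roots multiset is exactly {α, β, conj β}
  have hsub : ({α, β, (starRingEnd ℂ) β} : Multiset ℂ) ≤ g.roots := by
    have hnd : ({α, β, (starRingEnd ℂ) β} : Multiset ℂ).Nodup := by
      refine Multiset.nodup_cons.2 ⟨?_, Multiset.nodup_cons.2 ⟨?_, Multiset.nodup_singleton _⟩⟩
      · simp only [Multiset.insert_eq_cons, Multiset.mem_cons, Multiset.mem_singleton]
        push_neg
        exact ⟨Ne.symm hβα, Ne.symm hcβα⟩
      · simpa using Ne.symm hcββ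
    rw [Multiset.le_iff_subset hnd]
    intro z hz
    simp only [Multiset.insert_eq_cons, Multiset.mem_cons, Multiset.mem_singleton] at hz
    rcases hz with rfl | rfl | rfl
    · exact hαmem
    · exact hβmem
    · exact hcβmem
  have hroots : g.roots = {α, β, (starRingEnd ℂ) β} :=
    (Multiset.eq_of_le_of_card_le hsub (by rw [hcard]; rfl)).symm
  -- the separation set
  set S : Set ℝ := {d : ℝ | ∃ a ∈ g.roots, ∃ b ∈ g.roots, a ≠ b ∧ d = ‖a - b‖}
    with hS
  have hSnn : ∀ d ∈ S, 0 ≤ d := by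
    rintro d ⟨a, _, b, _, _, rfl⟩
    exact norm_nonneg _
  have hbdd : BddBelow S := ⟨0, fun d hd => hSnn d hd⟩
  have hsep0 : 0 ≤ polySep g := Real.sInf_nonneg hSnn
  have hle1 : polySep g ≤ ‖β - (starRingEnd ℂ) β‖ :=
    csInf_le hbdd ⟨β, hβmem, (starRingEnd ℂ) β, hcβmem, Ne.symm hcββ, rfl⟩
  have hle2 : polySep g ≤ ‖α - β‖ :=
    csInf_le hbdd ⟨α, hαmem, β, hβmem, Ne.symm hβα, rfl⟩
  -- numeric setup
  set a : ℝ := α.re with ha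
  set x : ℝ := β.re with hx
  set y : ℝ := β.im with hy
  have habsα : ‖α‖ = |a| := by
    have : α = (a : ℂ) := Complex.ext rfl (by simpa using hαim)
    rw [this, Complex.norm_real, Real.norm_eq_abs]
  have hd1 : ‖β - (starRingEnd ℂ) β‖ = 2 * |y| := by
    rw [Complex.sub_conj]
    rw [norm_mul, Complex.norm_I, Complex.norm_real, Real.norm_eq_abs, abs_mul]
    simp [abs_of_nonneg (by norm_num : (0:ℝ) ≤ 2)]
    rfl
  have hd2 : (‖α - β‖)^2 = (a - x)^2 + y^2 := by
    rw [Complex.sq_norm, Complex.normSq_apply, Complex.sub_re, Complex.sub_im, hαim,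
      ← ha, ← hx, ← hy]
    ring
  -- Mahler measure
  have habsβ2 : (‖β‖)^2 = x^2 + y^2 := by
    rw [Complex.sq_norm, Complex.normSq_apply, ← hx, ← hy]; ring
  have hM : _root_.mahlerMeasure g = max 1 |a| * (max 1 (‖β‖))^2 := by
    rw [_root_.mahlerMeasure, hroots,
      show ({α, β, (starRingEnd ℂ) β} : Multiset ℂ) = α ::ₘ β ::ₘ {(starRingEnd ℂ) β} from rfl,
      Multiset.map_cons, Multiset.map_cons, Multiset.map_singleton, Multiset.prod_cons,
      Multiset.prod_cons, Multiset.prod_singleton, Complex.norm_conj, habsα]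
    ring
  have hmaxsq : (max 1 (‖β‖))^2 = max 1 (x^2 + y^2) := by
    rcases le_total 1 (‖β‖) with h | h
    · rw [max_eq_right h, habsβ2, max_eq_right (by nlinarith)]
    · rw [max_eq_left h, max_eq_left (by nlinarith [norm_nonneg β]), one_pow]
  -- key estimate: sep^2 ≤ 3 * M
  have hkey : (polySep g)^2 ≤ 3 * _root_.mahlerMeasure g := by
    have h1 : (polySep g)^2 ≤ 4 * y^2 := by
      have := mul_self_le_mul_self hsep0 hle1
      rw [hd1] at this
      calc (polySep g)^2 = polySep g * polySep g := by ring
        _ ≤ (2*|y|) * (2*|y|) := this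
        _ = 4 * (|y| * |y|) := by ring
        _ = 4 * (y * y) := by rw [abs_mul_abs_self]
        _ = 4 * y^2 := by ring
    have h2 : (polySep g)^2 ≤ (a - x)^2 + y^2 := by
      have := mul_self_le_mul_self hsep0 hle2
      rw [← hd2]
      calc (polySep g)^2 = polySep g * polySep g := by ring
        _ ≤ ‖α - β‖ * ‖α - β‖ := this
        _ = (‖α - β‖)^2 := by ring
    have hax : (a - x)^2 ≤ (max 1 |a| + |x|)^2 := by
      have h4 : |a - x| ≤ |a| + |x| := by simpa [sub_eq_add_neg] using abs_add_le a (-x)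
      have h5 : |a| + |x| ≤ max 1 |a| + |x| := by
        have := le_max_right 1 |a|; linarith
      calc (a-x)^2 = |a-x|^2 := (sq_abs _).symm
        _ ≤ (max 1 |a| + |x|)^2 := by nlinarith [abs_nonneg (a - x)]
    have hmin : (polySep g)^2 ≤ min (4 * y^2) ((max 1 |a| + |x|)^2 + y^2) :=
      le_min h1 (le_trans h2 (by linarith))
    have := helper_ineq (max 1 |a|) |x| (y^2) (le_max_left _ _) (abs_nonneg _) (sq_nonneg _)
    rw [sq_abs] at this
    calc (polySep g)^2 ≤ min (4 * y^2) ((max 1 |a| + |x|)^2 + y^2) := hmin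
      _ ≤ 3 * max 1 |a| * max 1 (x^2 + y^2) := this
      _ = 3 * _root_.mahlerMeasure g := by rw [hM, hmaxsq]; ring
  -- conclude
  calc polySep g = Real.sqrt ((polySep g)^2) := (Real.sqrt_sq hsep0).symm
    _ ≤ Real.sqrt (3 * _root_.mahlerMeasure g) := Real.sqrt_le_sqrt hkey
end

section
/- Let f ∈ ℝ[X] be a monic separable polynomial of degree 4 having no real roots. Then sep(f) ≤ √2 · M(f)^{1/4}. -/
open Polynomial

lemma polySep_le (F : Polynomial ℂ) {a b : ℂ} (ha : a ∈ F.roots) (hb : b ∈ F.roots)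
    (hab : a ≠ b) : polySep F ≤ ‖a - b‖ := by
  apply csInf_le
  · refine ⟨0, ?_⟩
    rintro d ⟨p, hp, q, hq, hpq, rfl⟩
    exact norm_nonneg _
  · exact ⟨a, ha, b, hb, hab, rfl⟩

lemma polySep_nonneg (F : Polynomial ℂ) {a b : ℂ} (ha : a ∈ F.roots) (hb : b ∈ F.roots)
    (hab : a ≠ b) : 0 ≤ polySep F := by
  unfold polySep
  refine le_csInf ⟨‖a - b‖, ⟨a, ha, b, hb, hab, rfl⟩⟩ ?_
  rintro d ⟨p, hp, q, hq, hpq, rfl⟩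
  exact norm_nonneg _

/-- Key algebraic inequality. -/
lemma key_ineq (x y u v : ℝ) (hv : 0 < v) (hvy : v ≤ y) :
    v ^ 2 * ((x - u) ^ 2 + (y - v) ^ 2) ≤ (x ^ 2 + y ^ 2) * (u ^ 2 + v ^ 2) := by
  nlinarith [sq_nonneg (x * u + v ^ 2),
    mul_nonneg (sq_nonneg u) (by nlinarith : (0:ℝ) ≤ y ^ 2 - v ^ 2),
    mul_nonneg (mul_nonneg (mul_nonneg hv.le hv.le) hv.le) (sub_nonneg.mpr hvy)]

lemma abs_sub_conj (a : ℂ) (ha : 0 < a.im) :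
    ‖a - (starRingEnd ℂ) a‖ = 2 * a.im := by
  rw [Complex.sub_conj]
  rw [norm_mul, Complex.norm_I, Complex.norm_real, Real.norm_eq_abs]
  rw [abs_of_pos (by linarith)]
  ring

/-- The main estimate, given conjugate pairs of roots with ordered imaginary parts. -/
lemma sep_aux (F : Polynomial ℂ) (hnodup : F.roots.Nodup) (hcard : Multiset.card F.roots = 4)
    (a b : ℂ) (ha : a ∈ F.roots) (hb : b ∈ F.roots)
    (hca : (starRingEnd ℂ) a ∈ F.roots) (hcb : (starRingEnd ℂ) b ∈ F.roots)
    (hai : 0 < a.im) (hbi : 0 < b.im) (hvy : b.im ≤ a.im) (hab : a ≠ b) :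
    polySep F ≤ Real.sqrt 2 * _root_.mahlerMeasure F ^ ((1 : ℝ) / 4) := by
  have hane : a ≠ (starRingEnd ℂ) a := by
    intro h
    have := congrArg Complex.im h
    simp at this
    linarith
  have hbne : b ≠ (starRingEnd ℂ) b := by
    intro h
    have := congrArg Complex.im h
    simp at this
    linarith
  have hacb : a ≠ (starRingEnd ℂ) b := by
    intro h
    have := congrArg Complex.im h
    simp at this
    linarith
  have hcab : (starRingEnd ℂ) a ≠ b := by
    intro h
    have := congrArg Complex.im h
    simp at this
    linarith
  have hcacb : (starRingEnd ℂ) a ≠ (starRingEnd ℂ) b := by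
    intro h
    exact hab (by simpa using congrArg (starRingEnd ℂ) h)
  -- the roots are exactly {a, conj a, b, conj b}
  have hroots : F.roots = {a, (starRingEnd ℂ) a, b, (starRingEnd ℂ) b} := by
    have htnd : Multiset.Nodup ({a, (starRingEnd ℂ) a, b, (starRingEnd ℂ) b} : Multiset ℂ) := by
      simp [Multiset.nodup_cons, hane, hab, hacb, hcab, hcacb, hbne]
    have hle : ({a, (starRingEnd ℂ) a, b, (starRingEnd ℂ) b} : Multiset ℂ) ≤ F.roots := by
      rw [Multiset.le_iff_subset htnd]
      intro z hz
      simp only [Multiset.insert_eq_cons, Multiset.mem_cons, Multiset.mem_singleton] at hz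
      rcases hz with rfl | rfl | rfl | rfl
      exacts [ha, hca, hb, hcb]
    exact (Multiset.eq_of_le_of_card_le hle (by simp [hcard])).symm
  set A : ℝ := max 1 ‖a‖ with hA
  set B : ℝ := max 1 ‖b‖ with hB
  have hA1 : (1:ℝ) ≤ A := le_max_left _ _
  have hB1 : (1:ℝ) ≤ B := le_max_left _ _
  have hAa : ‖a‖ ≤ A := le_max_right _ _
  have hBb : ‖b‖ ≤ B := le_max_right _ _
  have hM : _root_.mahlerMeasure F = A ^ 2 * B ^ 2 := by
    rw [_root_.mahlerMeasure, hroots]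
    simp only [Multiset.insert_eq_cons, Multiset.map_cons, Multiset.map_singleton,
      Multiset.prod_cons, Multiset.prod_singleton, Complex.norm_conj, ← hA, ← hB]
    ring
  -- bound the separation
  have hd1 : polySep F ≤ 2 * b.im := by
    have := polySep_le F hb hcb hbne
    rwa [abs_sub_conj b hbi] at this
  have hd2 : polySep F ≤ ‖a - b‖ := polySep_le F ha hb hab
  have hd0 : 0 ≤ polySep F := polySep_nonneg F ha hb hab
  -- |a - b| * b.im ≤ A * B
  have habs2 : (‖a - b‖) ^ 2 = (a.re - b.re) ^ 2 + (a.im - b.im) ^ 2 := by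
    rw [Complex.sq_norm, Complex.normSq_apply]
    simp [Complex.sub_re, Complex.sub_im]
    ring
  have habsa2 : ‖a‖ ^ 2 = a.re ^ 2 + a.im ^ 2 := by
    rw [Complex.sq_norm, Complex.normSq_apply]; ring
  have habsb2 : ‖b‖ ^ 2 = b.re ^ 2 + b.im ^ 2 := by
    rw [Complex.sq_norm, Complex.normSq_apply]; ring
  have hkey : (b.im * ‖a - b‖) ^ 2 ≤ (A * B) ^ 2 := by
    have h1 : (b.im * ‖a - b‖) ^ 2
        = b.im ^ 2 * ((a.re - b.re) ^ 2 + (a.im - b.im) ^ 2) := by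
      rw [mul_pow, habs2]
    rw [h1]
    calc b.im ^ 2 * ((a.re - b.re) ^ 2 + (a.im - b.im) ^ 2)
        ≤ (a.re ^ 2 + a.im ^ 2) * (b.re ^ 2 + b.im ^ 2) :=
          key_ineq a.re a.im b.re b.im hbi hvy
      _ = ‖a‖ ^ 2 * ‖b‖ ^ 2 := by rw [habsa2, habsb2]
      _ ≤ A ^ 2 * B ^ 2 := by
          apply mul_le_mul (by nlinarith [norm_nonneg a])
            (by nlinarith [norm_nonneg b])
            (by positivity) (by positivity)
      _ = (A * B) ^ 2 := by ring
  have hkey' : b.im * ‖a - b‖ ≤ A * B := by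
    have h0 : 0 ≤ b.im * ‖a - b‖ :=
      mul_nonneg hbi.le (norm_nonneg _)
    have h1 : 0 ≤ A * B := by positivity
    nlinarith
  -- conclude
  have hABpos : 0 < A * B := by positivity
  have hrhs : Real.sqrt 2 * _root_.mahlerMeasure F ^ ((1 : ℝ) / 4) = Real.sqrt (2 * (A * B)) := by
    rw [hM, Real.sqrt_mul (by norm_num : (0:ℝ) ≤ 2)]
    congr 1
    have h1 : A ^ 2 * B ^ 2 = (A * B) ^ (2:ℕ) := by ring
    rw [h1, ← Real.rpow_natCast (A * B) 2, ← Real.rpow_mul hABpos.le]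
    rw [Real.sqrt_eq_rpow]
    norm_num
  rw [hrhs]
  rw [Real.le_sqrt hd0 (by positivity)]
  calc polySep F ^ 2 ≤ (2 * b.im) * ‖a - b‖ := by nlinarith
    _ = 2 * (b.im * ‖a - b‖) := by ring
    _ ≤ 2 * (A * B) := by linarith

theorem sep_le_sqrt_two_mul_mahler_rpow_of_quartic_no_real_root
    (f : Polynomial ℝ) (hmonic : f.Monic) (hsep : f.Separable) (hdeg : f.natDegree = 4)
    (hreal : ∀ z ∈ (f.map (algebraMap ℝ ℂ)).roots, z.im ≠ 0) :
    polySep (f.map (algebraMap ℝ ℂ)) ≤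
      Real.sqrt 2 * _root_.mahlerMeasure (f.map (algebraMap ℝ ℂ)) ^ ((1 : ℝ) / 4) := by
  set F := f.map (algebraMap ℝ ℂ) with hF
  have hFmonic : F.Monic := hmonic.map _
  have hF0 : F ≠ 0 := hFmonic.ne_zero
  have hFdeg : F.natDegree = 4 := by rw [hF, f.natDegree_map (algebraMap ℝ ℂ)]; exact hdeg
  have hnodup : F.roots.Nodup := nodup_roots (hsep.map)
  have hcard : Multiset.card F.roots = 4 := by
    rw [← hFdeg]
    exact splits_iff_card_roots.mp (IsAlgClosed.splits F)
  -- roots are closed under conjugation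
  have hconj : ∀ z ∈ F.roots, (starRingEnd ℂ) z ∈ F.roots := by
    intro z hz
    rw [mem_roots hF0] at hz ⊢
    have h1 : F.eval z = aeval z f := by rw [hF, aeval_def, eval_map]
    have h2 : F.eval ((starRingEnd ℂ) z) = aeval ((starRingEnd ℂ) z) f := by
      rw [hF, aeval_def, eval_map]
    have h3 : aeval ((starRingEnd ℂ) z) f = (starRingEnd ℂ) (aeval z f) :=
      Polynomial.aeval_conj f z
    unfold IsRoot at hz ⊢
    rw [h2, h3, ← h1, hz, map_zero]
  -- pick a root, normalize to upper half plane
  have hne : F.roots ≠ 0 := by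
    intro h; rw [h] at hcard; simp at hcard
  obtain ⟨z, hz⟩ := Multiset.exists_mem_of_ne_zero hne
  have hzim : z.im ≠ 0 := hreal z hz
  set a : ℂ := if 0 < z.im then z else (starRingEnd ℂ) z with ha_def
  have ha : a ∈ F.roots := by
    rw [ha_def]; split
    · exact hz
    · exact hconj z hz
  have hai : 0 < a.im := by
    rw [ha_def]; split
    · assumption
    · rename_i h
      simp only [Complex.conj_im]
      rcases lt_trichotomy z.im 0 with h' | h' | h'
      · linarith
      · exact absurd h' hzim
      · exact absurd h' h
  have hca : (starRingEnd ℂ) a ∈ F.roots := hconj a ha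
  have hane : (starRingEnd ℂ) a ≠ a := by
    intro h
    have := congrArg Complex.im h
    simp at this
    linarith
  -- pick a second root distinct from a and conj a
  have hmem_ca : (starRingEnd ℂ) a ∈ F.roots.erase a :=
    (Multiset.mem_erase_of_ne hane).mpr hca
  have hs_ne : (F.roots.erase a).erase ((starRingEnd ℂ) a) ≠ 0 := by
    intro h
    have hc1 : Multiset.card (F.roots.erase a) = 3 := by
      rw [Multiset.card_erase_of_mem ha, hcard]; rfl
    have hc2 : Multiset.card ((F.roots.erase a).erase ((starRingEnd ℂ) a)) = 2 := by
      rw [Multiset.card_erase_of_mem hmem_ca, hc1]; rfl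
    rw [h] at hc2; simp at hc2
  obtain ⟨w, hw⟩ := Multiset.exists_mem_of_ne_zero hs_ne
  have hnodup_e : (F.roots.erase a).Nodup := hnodup.erase a
  have hw1 : w ≠ (starRingEnd ℂ) a ∧ w ∈ F.roots.erase a := hnodup_e.mem_erase_iff.mp hw
  have hw2 : w ≠ a ∧ w ∈ F.roots := hnodup.mem_erase_iff.mp hw1.2
  have hwF : w ∈ F.roots := hw2.2
  have hwim : w.im ≠ 0 := hreal w hwF
  set b : ℂ := if 0 < w.im then w else (starRingEnd ℂ) w with hb_def
  have hb : b ∈ F.roots := by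
    rw [hb_def]; split
    · exact hwF
    · exact hconj w hwF
  have hbi : 0 < b.im := by
    rw [hb_def]; split
    · assumption
    · rename_i h
      simp only [Complex.conj_im]
      rcases lt_trichotomy w.im 0 with h' | h' | h'
      · linarith
      · exact absurd h' hwim
      · exact absurd h' h
  have hcb : (starRingEnd ℂ) b ∈ F.roots := hconj b hb
  have hab : a ≠ b := by
    rw [hb_def]
    split
    · exact fun h => hw2.1 h.symm
    · intro h
      apply hw1.1
      have := congrArg (starRingEnd ℂ) h
      simpa using this.symm
  rcases le_total b.im a.im with hle | hle
  · exact sep_aux F hnodup hcard a b ha hb hca hcb hai hbi hle hab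
  · exact sep_aux F hnodup hcard b a hb ha hcb hca hbi hai hle hab.symm
end

section
/- For every real t ≥ 1/√2, the polynomial f_t(x) = (x − t(1+i))(x − t(1−i))(x − t(−1+i))(x − t(−1−i)) ∈ ℝ[X] satisfies sep(f_t) = √2 · M(f_t)^{1/4}. Hence the constant √2 in the bound sep(f) ≤ √2·M(f)^{1/4} for real quartics with no real roots is optimal. -/
open Polynomial

/-- The quartic $f_t(x) = (x - t(1+i))(x - t(1-i))(x - t(-1+i))(x - t(-1-i))$. -/
noncomputable def quarticFamily (t : ℝ) : Polynomial ℂ :=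
  (X - C ((t : ℂ) * (1 + Complex.I))) * (X - C ((t : ℂ) * (1 - Complex.I))) *
    (X - C ((t : ℂ) * (-1 + Complex.I))) * (X - C ((t : ℂ) * (-1 - Complex.I)))

lemma abs_two_add_two_I : ‖2 + 2*Complex.I‖ = 2 * Real.sqrt 2 := by
  rw [Complex.norm_def, Complex.normSq_apply]
  norm_num
  rw [show (8:ℝ) = 4*2 by norm_num, Real.sqrt_mul (by norm_num)]
  norm_num [Real.sqrt_eq_iff_eq_sq]

lemma abs_two_sub_two_I : ‖2 - 2*Complex.I‖ = 2 * Real.sqrt 2 := by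
  rw [Complex.norm_def, Complex.normSq_apply]
  norm_num
  rw [show (8:ℝ) = 4*2 by norm_num, Real.sqrt_mul (by norm_num)]
  norm_num [Real.sqrt_eq_iff_eq_sq]

lemma abs_one_add_I : ‖1 + Complex.I‖ = Real.sqrt 2 := by
  rw [Complex.norm_def, Complex.normSq_apply]; norm_num

lemma abs_one_sub_I : ‖1 - Complex.I‖ = Real.sqrt 2 := by
  rw [Complex.norm_def, Complex.normSq_apply]; norm_num

lemma abs_neg_one_add_I : ‖-1 + Complex.I‖ = Real.sqrt 2 := by
  rw [Complex.norm_def, Complex.normSq_apply]; norm_num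

lemma abs_neg_one_sub_I : ‖-1 - Complex.I‖ = Real.sqrt 2 := by
  rw [Complex.norm_def, Complex.normSq_apply]; norm_num

theorem sep_quarticFamily_eq_sqrt_two_mul_mahler_rpow
    (t : ℝ) (ht : 1 / Real.sqrt 2 ≤ t) :
    polySep (quarticFamily t) = Real.sqrt 2 * _root_.mahlerMeasure (quarticFamily t) ^ ((1 : ℝ) / 4) := by
  have h2 : (0:ℝ) < Real.sqrt 2 := Real.sqrt_pos.mpr (by norm_num)
  have h2sq : Real.sqrt 2 * Real.sqrt 2 = 2 := Real.mul_self_sqrt (by norm_num)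
  have h21 : (1:ℝ) ≤ Real.sqrt 2 := by nlinarith
  have ht0 : 0 < t := lt_of_lt_of_le (by positivity) ht
  have hst1 : (1:ℝ) ≤ Real.sqrt 2 * t := by
    rw [div_le_iff₀ h2] at ht; nlinarith
  set a := (t:ℂ) * (1 + Complex.I) with ha
  set b := (t:ℂ) * (1 - Complex.I) with hb
  set c := (t:ℂ) * (-1 + Complex.I) with hc
  set d := (t:ℂ) * (-1 - Complex.I) with hd
  have hroots : (quarticFamily t).roots = {a, b, c, d} := by
    have m : ∀ z : ℂ, (X - C z).Monic := fun z => monic_X_sub_C z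
    rw [quarticFamily,
      roots_mul ((((m a).mul (m b)).mul (m c)).mul (m d)).ne_zero,
      roots_mul (((m a).mul (m b)).mul (m c)).ne_zero,
      roots_mul ((m a).mul (m b)).ne_zero,
      roots_X_sub_C, roots_X_sub_C, roots_X_sub_C, roots_X_sub_C]
    rfl
  have habs : ∀ z : ℂ, ‖(t:ℂ) * z‖ = t * ‖z‖ := fun z => by
    rw [norm_mul, Complex.norm_real, Real.norm_of_nonneg ht0.le]
  -- the six pairwise distances
  have hab : ‖a - b‖ = 2 * t := by
    rw [show a - b = (t:ℂ) * (2 * Complex.I) by rw [ha, hb]; ring, habs,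
      norm_mul, Complex.norm_I, Complex.norm_two]; ring
  have hac : ‖a - c‖ = 2 * t := by
    rw [show a - c = (t:ℂ) * 2 by rw [ha, hc]; ring, habs, Complex.norm_two]; ring
  have had : ‖a - d‖ = 2 * Real.sqrt 2 * t := by
    rw [show a - d = (t:ℂ) * (2 + 2 * Complex.I) by rw [ha, hd]; ring, habs,
      abs_two_add_two_I]; ring
  have hbc : ‖b - c‖ = 2 * Real.sqrt 2 * t := by
    rw [show b - c = (t:ℂ) * (2 - 2 * Complex.I) by rw [hb, hc]; ring, habs,
      abs_two_sub_two_I]; ring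
  have hbd : ‖b - d‖ = 2 * t := by
    rw [show b - d = (t:ℂ) * 2 by rw [hb, hd]; ring, habs, Complex.norm_two]; ring
  have hcd : ‖c - d‖ = 2 * t := by
    rw [show c - d = (t:ℂ) * (2 * Complex.I) by rw [hc, hd]; ring, habs,
      norm_mul, Complex.norm_I, Complex.norm_two]; ring
  have hane : a ≠ b := by
    intro h
    have := hab; rw [h, sub_self, norm_zero] at this; linarith
  have hacne : a ≠ c := by
    intro h
    have := hac; rw [h, sub_self, norm_zero] at this; linarith
  have hadne : a ≠ d := by
    intro h
    have := had; rw [h, sub_self, norm_zero] at this; nlinarith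
  -- the set of distances
  have hset : {e : ℝ | ∃ x ∈ (quarticFamily t).roots, ∃ y ∈ (quarticFamily t).roots,
      x ≠ y ∧ e = ‖x - y‖} = {2 * t, 2 * Real.sqrt 2 * t} := by
    ext e
    simp only [hroots, Set.mem_setOf_eq, Set.mem_insert_iff, Set.mem_singleton_iff,
      Multiset.insert_eq_cons, Multiset.mem_cons, Multiset.mem_singleton]
    constructor
    · rintro ⟨x, hx, y, hy, hne, rfl⟩
      have sym : ∀ u v : ℂ, ‖u - v‖ = ‖v - u‖ := fun u v =>
        norm_sub_rev u v
      rcases hx with rfl | rfl | rfl | rfl <;> rcases hy with rfl | rfl | rfl | rfl <;>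
        first
          | exact absurd rfl hne
          | (left; rw [hab])
          | (left; rw [hac])
          | (left; rw [hbd])
          | (left; rw [hcd])
          | (right; rw [had])
          | (right; rw [hbc])
          | (left; rw [sym, hab])
          | (left; rw [sym, hac])
          | (left; rw [sym, hbd])
          | (left; rw [sym, hcd])
          | (right; rw [sym, had])
          | (right; rw [sym, hbc])
    · rintro (rfl | rfl)
      · exact ⟨a, Or.inl rfl, b, Or.inr (Or.inl rfl), hane, hab.symm⟩
      · exact ⟨a, Or.inl rfl, d, Or.inr (Or.inr (Or.inr rfl)), hadne, had.symm⟩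
  have hsep : polySep (quarticFamily t) = 2 * t := by
    rw [polySep, hset, csInf_pair, inf_eq_left.mpr (by nlinarith)]
  -- Mahler measure
  have habsroot : ‖a‖ = Real.sqrt 2 * t ∧ ‖b‖ = Real.sqrt 2 * t ∧
      ‖c‖ = Real.sqrt 2 * t ∧ ‖d‖ = Real.sqrt 2 * t := by
    refine ⟨?_, ?_, ?_, ?_⟩ <;>
      rw [habs] <;>
      simp only [abs_one_add_I, abs_one_sub_I, abs_neg_one_add_I, abs_neg_one_sub_I] <;> ring
  obtain ⟨hA, hB, hC, hD⟩ := habsroot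
  have hmahler : _root_.mahlerMeasure (quarticFamily t) = (Real.sqrt 2 * t) ^ (4:ℕ) := by
    rw [_root_.mahlerMeasure, hroots]
    simp only [Multiset.insert_eq_cons, Multiset.map_cons, Multiset.map_singleton,
      Multiset.prod_cons, Multiset.prod_singleton, hA, hB, hC, hD,
      max_eq_right hst1]
    ring
  rw [hsep, hmahler, Real.rpow_def_of_pos (by positivity)]
  rw [show ((1:ℝ)/4) = ((4:ℕ):ℝ)⁻¹ by norm_num, ← Real.rpow_def_of_pos (by positivity),
    Real.pow_rpow_inv_natCast (by positivity) (by norm_num)]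
  nlinarith
end

section
/- For every positive integer n ≥ 3, the central binomial coefficient satisfies C(n, ⌊n/2⌋) ≤ 2^{n+1} / √(π(2n+1)). -/
open Filter Real

noncomputable def wallisF (m : ℕ) : ℝ :=
  (Nat.centralBinom m : ℝ) ^ 2 * (4 * m + 1) / 16 ^ m

lemma cb_fact (m : ℕ) :
    (Nat.centralBinom m : ℝ) * (m.factorial : ℝ) * (m.factorial : ℝ) = ((2 * m).factorial : ℝ) := by
  have h := Nat.choose_mul_factorial_mul_factorial (show m ≤ 2 * m by omega)
  rw [show 2 * m - m = m by omega] at h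
  rw [Nat.centralBinom]
  exact_mod_cast congrArg (Nat.cast (R := ℝ)) h

lemma wallisF_eq (m : ℕ) :
    wallisF m = (4 * m + 1) / (2 * m + 1) * (Real.Wallis.W m)⁻¹ := by
  have hW := Real.Wallis.W_eq_factorial_ratio m
  have hcb2 : (Nat.centralBinom m : ℝ) ^ 2 * (m.factorial : ℝ) ^ 4 = ((2 * m).factorial : ℝ) ^ 2 := by
    linear_combination ((Nat.centralBinom m : ℝ) * (m.factorial : ℝ) * (m.factorial : ℝ)
      + ((2 * m).factorial : ℝ)) * cb_fact m
  have h1 : (0:ℝ) < (m.factorial : ℝ) := by exact_mod_cast Nat.factorial_pos m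
  have h2 : (0:ℝ) < ((2*m).factorial : ℝ) := by exact_mod_cast Nat.factorial_pos (2*m)
  have h3 : (0:ℝ) < 2 * (m:ℝ) + 1 := by positivity
  have h16 : (16:ℝ) ^ m = 2 ^ (4 * m) := by
    rw [pow_mul]; norm_num
  rw [wallisF, hW, h16, inv_div]
  field_simp
  linear_combination hcb2

lemma wallisF_mono : Monotone wallisF := by
  apply monotone_nat_of_le_succ
  intro m
  have keyR : ((m:ℝ) + 1) * Nat.centralBinom (m+1) = 2 * (2 * m + 1) * Nat.centralBinom m := by
    exact_mod_cast congrArg (Nat.cast (R := ℝ)) (Nat.succ_mul_centralBinom_succ m)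
  have keysq : (((m:ℝ) + 1) * Nat.centralBinom (m+1)) ^ 2
      = (2 * (2 * (m:ℝ) + 1) * Nat.centralBinom m) ^ 2 := by rw [keyR]
  have h16 : (0:ℝ) < 16 ^ m := by positivity
  have hm1 : (0:ℝ) < ((m:ℝ) + 1) ^ 2 := by positivity
  have hkey : ((m:ℝ)+1)^2 * (((Nat.centralBinom (m+1)):ℝ)^2 * (4*((m:ℝ)+1)+1) * 16^m)
      - ((m:ℝ)+1)^2 * (((Nat.centralBinom m):ℝ)^2 * (4*(m:ℝ)+1) * (16^m*16))
      = 4 * ((Nat.centralBinom m:ℝ))^2 * 16^m := by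
    linear_combination ((4*(m:ℝ)+5) * (16:ℝ)^m) * keysq
  rw [wallisF, wallisF, div_le_div_iff₀ h16 (by positivity)]
  rw [← mul_le_mul_iff_right₀ hm1]
  push_cast
  rw [pow_succ (16:ℝ) m]
  nlinarith [hkey, mul_nonneg (sq_nonneg ((Nat.centralBinom m:ℝ))) h16.le]

lemma wallisF_tendsto : Tendsto wallisF atTop (nhds (4 / π)) := by
  have hat : Tendsto (fun m : ℕ => 2 * (m:ℝ) + 1) atTop atTop := by
    apply tendsto_atTop_add_const_right
    exact (tendsto_natCast_atTop_atTop (R := ℝ)).const_mul_atTop (by norm_num)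
  have h0 : Tendsto (fun m : ℕ => 1 / (2 * (m:ℝ) + 1)) atTop (nhds 0) := by
    simpa [one_div, Pi.inv_def] using hat.inv_tendsto_atTop
  have h1 : Tendsto (fun m : ℕ => (4 * (m:ℝ) + 1) / (2 * m + 1)) atTop (nhds 2) := by
    have hd : ∀ m : ℕ, (4 * (m:ℝ) + 1) / (2 * m + 1) = 2 - 1 / (2 * m + 1) := by
      intro m
      have h : (2 * (m:ℝ) + 1) ≠ 0 := by positivity
      field_simp
      ring
    simp_rw [hd]
    simpa using tendsto_const_nhds.sub h0
  have h2 : Tendsto (fun m : ℕ => (Real.Wallis.W m)⁻¹) atTop (nhds (π/2)⁻¹) :=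
    Real.Wallis.tendsto_W_nhds_pi_div_two.inv₀ (by positivity)
  have hmul := h1.mul h2
  have hπ : (2:ℝ) * (π/2)⁻¹ = 4 / π := by rw [inv_div]; ring
  rw [hπ] at hmul
  exact hmul.congr fun m => (wallisF_eq m).symm

lemma centralBinom_bound (m : ℕ) :
    (Nat.centralBinom m : ℝ) ≤ 2 * 4 ^ m / Real.sqrt (π * (4 * m + 1)) := by
  have h : wallisF m ≤ 4 / π := wallisF_mono.ge_of_tendsto wallisF_tendsto m
  have hπ : (0:ℝ) < π := Real.pi_pos
  have hx : (0:ℝ) < π * (4 * m + 1) := by positivity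
  have hs : (0:ℝ) < Real.sqrt (π * (4 * m + 1)) := Real.sqrt_pos.mpr hx
  rw [le_div_iff₀ hs]
  have hsq : ((Nat.centralBinom m : ℝ) * Real.sqrt (π * (4 * m + 1))) ^ 2 ≤ (2 * 4 ^ m) ^ 2 := by
    rw [mul_pow, Real.sq_sqrt hx.le]
    rw [wallisF, div_le_div_iff₀ (by positivity) hπ] at h
    have h16 : ((4:ℝ) ^ m) ^ 2 = 16 ^ m := by
      rw [← pow_mul, show (16:ℝ) = 4 ^ 2 by norm_num, ← pow_mul]; ring_nf
    nlinarith
  have h1 : (0:ℝ) ≤ (Nat.centralBinom m : ℝ) * Real.sqrt (π * (4 * m + 1)) := by positivity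
  have h2 := Real.sqrt_le_sqrt hsq
  rwa [Real.sqrt_sq h1, Real.sqrt_sq (by positivity : (0:ℝ) ≤ 2 * 4 ^ m)] at h2

theorem centralBinom_le (n : ℕ) (hn : 3 ≤ n) :
    (n.choose (n / 2) : ℝ) ≤ 2 ^ (n + 1) / Real.sqrt (Real.pi * (2 * (n : ℝ) + 1)) := by
  rcases Nat.even_or_odd n with ⟨m, hm⟩ | ⟨m, hm⟩
  · subst hm
    have h1 : (m + m) / 2 = m := by omega
    have h2 : (m + m).choose m = Nat.centralBinom m := by
      rw [Nat.centralBinom, two_mul]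
    rw [h1, h2]
    have hb := centralBinom_bound m
    have he : (2:ℝ) ^ (m + m + 1) = 2 * 4 ^ m := by
      rw [show (4:ℝ) = 2^2 by norm_num, ← pow_mul, pow_succ]; ring_nf
    have he2 : (2:ℝ) * (↑(m+m)) + 1 = 4 * m + 1 := by push_cast; ring
    rw [he, he2]
    exact hb
  · subst hm
    have h1 : (2 * m + 1) / 2 = m := by omega
    rw [h1]
    have hsymm : (2 * m + 1).choose (m + 1) = (2 * m + 1).choose m := by
      rw [← Nat.choose_symm (by omega : m + 1 ≤ 2 * m + 1)]
      congr 1; omega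
    have hdouble : 2 * (2 * m + 1).choose m = Nat.centralBinom (m + 1) := by
      rw [Nat.centralBinom, show 2 * (m + 1) = (2 * m + 1) + 1 by ring,
        Nat.choose_succ_succ, hsymm]
      ring
    have hb := centralBinom_bound (m + 1)
    have hcast : (Nat.centralBinom (m+1) : ℝ) = 2 * ((2 * m + 1).choose m : ℝ) := by
      exact_mod_cast congrArg (Nat.cast (R := ℝ)) hdouble.symm
    rw [hcast] at hb
    push_cast at hb
    have hπ : (0:ℝ) < π := Real.pi_pos
    have hs5 : (0:ℝ) < Real.sqrt (π * (4 * ((m:ℝ) + 1) + 1)) := by positivity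
    have hs3 : (0:ℝ) < Real.sqrt (π * (2 * ((2 * (m:ℝ) + 1)) + 1)) := by positivity
    have hb2 : ((2 * m + 1).choose m : ℝ) ≤ 4 ^ (m + 1) / Real.sqrt (π * (4 * ((m:ℝ) + 1) + 1)) := by
      rw [le_div_iff₀ hs5] at hb ⊢
      nlinarith
    have hmono : Real.sqrt (π * (2 * ((2 * (m:ℝ) + 1)) + 1)) ≤
        Real.sqrt (π * (4 * ((m:ℝ) + 1) + 1)) := by
      apply Real.sqrt_le_sqrt
      nlinarith
    have hfin : ((2 * m + 1).choose m : ℝ) ≤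
        4 ^ (m + 1) / Real.sqrt (π * (2 * ((2 * (m:ℝ) + 1)) + 1)) :=
      hb2.trans (div_le_div_of_nonneg_left (by positivity) hs3 hmono)
    have hpow : (4:ℝ) ^ (m + 1) = 2 ^ (2 * m + 1 + 1) := by
      rw [show (4:ℝ) = 2^2 by norm_num, ← pow_mul]; ring_nf
    rw [hpow] at hfin
    have : (2:ℝ) * (↑(2 * m + 1) : ℝ) + 1 = 2 * (2 * (m:ℝ) + 1) + 1 := by push_cast; ring
    rw [this]
    exact hfin
end

section
/- Let f ∈ ℝ[X] be a monic separable polynomial of degree n ≥ 2 such that among the roots of f of minimum absolute value there is one that is not real. Then sep(f) ≤ 2 · M(f)^{1/n}. -/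
open Polynomial

theorem sep_le_two_mul_mahler_rpow_inv_n_of_nonreal_min_root
    (n : ℕ) (hn : 2 ≤ n) (f : Polynomial ℝ)
    (hmonic : f.Monic) (hsep : f.Separable) (hdeg : f.natDegree = n)
    (hroot : ∃ α ∈ (f.map (algebraMap ℝ ℂ)).roots,
      α.im ≠ 0 ∧ ∀ β ∈ (f.map (algebraMap ℝ ℂ)).roots, ‖α‖ ≤ ‖β‖) :
    polySep (f.map (algebraMap ℝ ℂ)) ≤
      2 * _root_.mahlerMeasure (f.map (algebraMap ℝ ℂ)) ^ ((1 : ℝ) / (n : ℝ)) := by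
  obtain ⟨α, hαmem, hαim, hαmin⟩ := hroot
  set g := f.map (algebraMap ℝ ℂ) with hg
  have hg0 : g ≠ 0 := (hmonic.map _).ne_zero
  -- conjugate is a root
  have hcomp : (starRingEnd ℂ).comp (algebraMap ℝ ℂ) = algebraMap ℝ ℂ := by
    ext x; simp [Complex.conj_ofReal]
  have hconj : (starRingEnd ℂ) α ∈ g.roots := by
    rw [mem_roots hg0] at hαmem ⊢
    rw [IsRoot, eval_map] at hαmem ⊢
    have h0 := hαmem
    have := Polynomial.hom_eval₂ f (algebraMap ℝ ℂ) (starRingEnd ℂ) α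
    rw [hcomp] at this
    rw [← this, h0, map_zero]
  have hne : α ≠ (starRingEnd ℂ) α := by
    intro h
    have : α.im = 0 := by
      have := congrArg Complex.im h
      simp at this
      linarith
    exact hαim this
  -- the distance is in the set
  have hmemS : ‖α - (starRingEnd ℂ) α‖ ∈
      {d : ℝ | ∃ a ∈ g.roots, ∃ b ∈ g.roots, a ≠ b ∧ d = ‖a - b‖} :=
    ⟨α, hαmem, (starRingEnd ℂ) α, hconj, hne, rfl⟩
  have hbdd : BddBelow {d : ℝ | ∃ a ∈ g.roots, ∃ b ∈ g.roots, a ≠ b ∧ d = ‖a - b‖} := by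
    refine ⟨0, fun d hd => ?_⟩
    obtain ⟨a, _, b, _, _, rfl⟩ := hd
    positivity
  have hsep_le : polySep g ≤ ‖α - (starRingEnd ℂ) α‖ := csInf_le hbdd hmemS
  -- |α - conj α| = 2 |α.im| ≤ 2 |α|
  have habs : ‖α - (starRingEnd ℂ) α‖ ≤ 2 * ‖α‖ := by
    rw [Complex.sub_conj, norm_mul]
    simp only [Complex.norm_I, Complex.norm_real, Real.norm_eq_abs, mul_one]
    rw [abs_mul]
    have h1 : |α.im| ≤ ‖α‖ := Complex.abs_im_le_norm α
    rw [abs_two]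
    nlinarith [norm_nonneg α]
  -- card of roots
  have hcard : Multiset.card g.roots = n := by
    have hsplits : Splits g := IsAlgClosed.splits _
    have := (hsplits.natDegree_eq_card_roots)
    rw [← this, hg, hmonic.natDegree_map]
    exact hdeg
  -- |α|^n ≤ _root_.mahlerMeasure g
  have hpow : ‖α‖ ^ n ≤ _root_.mahlerMeasure g := by
    unfold _root_.mahlerMeasure
    have h1 : (g.roots.map (fun _ => ‖α‖)).prod ≤
        (g.roots.map (fun a => max 1 ‖a‖)).prod := by
      apply Multiset.prod_map_le_prod_map₀
      · intro b hb
        positivity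
      · intro b hb
        exact le_trans (hαmin b hb) (le_max_right _ _)
    rwa [Multiset.map_const', Multiset.prod_replicate, hcard] at h1
  have hM1 : (1:ℝ) ≤ _root_.mahlerMeasure g := by
    unfold _root_.mahlerMeasure
    apply Multiset.one_le_prod
    intro x hx
    obtain ⟨a, _, rfl⟩ := Multiset.mem_map.mp hx
    exact le_max_left _ _
  have hn0 : (0:ℝ) < n := by positivity
  have hα_le : ‖α‖ ≤ _root_.mahlerMeasure g ^ ((1:ℝ)/(n:ℝ)) := by
    have h := Real.rpow_le_rpow (by positivity) hpow (le_of_lt (one_div_pos.mpr hn0))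
    rwa [← Real.rpow_natCast (‖α‖) n, ← Real.rpow_mul (norm_nonneg α),
      mul_one_div, div_self (ne_of_gt hn0), Real.rpow_one] at h
  calc polySep g ≤ ‖α - (starRingEnd ℂ) α‖ := hsep_le
    _ ≤ 2 * ‖α‖ := habs
    _ ≤ 2 * _root_.mahlerMeasure g ^ ((1:ℝ)/(n:ℝ)) := by linarith
end

section
/- Let n ≥ 3 be an integer and set L = ⌈log₂ n⌉ − 1. Then ∏_{j=1}^{L} (2^{−j/2} − n^{−1/2})^{n/2^{j}} ≥ 1/(4n²·16ⁿ). -/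
private lemma rpow_neg_half_eq {x : ℝ} (hx : 0 ≤ x) :
    x ^ (-(1:ℝ)/2) = (Real.sqrt x)⁻¹ := by
  rw [show (-(1:ℝ)/2) = -(1/2) by norm_num, Real.rpow_neg hx, Real.sqrt_eq_rpow]

private lemma two_pow_neg_half (j : ℕ) :
    (2:ℝ) ^ (-(j:ℝ)/2) = (Real.sqrt (2^j))⁻¹ := by
  rw [show (-(j:ℝ)/2) = (j:ℝ) * (-(1:ℝ)/2) by ring, Real.rpow_mul (by norm_num),
    Real.rpow_natCast, rpow_neg_half_eq (by positivity)]

private lemma sum_aux (m : ℕ) :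
    ∑ j ∈ Finset.Icc 1 m, ((j:ℝ)/2+2)/2^j = 3 - ((m:ℝ)+6)/2^(m+1) := by
  induction m with
  | zero => simp; norm_num
  | succ k ih =>
    rw [Finset.sum_Icc_succ_top (by omega), ih]
    push_cast
    field_simp
    ring

private lemma factorA {n j : ℕ} (h : 2^(j+1) ≤ n) :
    (2:ℝ) ^ (-(j:ℝ)/2 - 2) ≤ (2:ℝ)^(-(j:ℝ)/2) - (n:ℝ)^(-(1:ℝ)/2) := by
  have hn0 : (0:ℝ) < n := by
    have : 0 < n := lt_of_lt_of_le (by positivity) h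
    exact_mod_cast this
  have h22 : (2:ℝ)^(2:ℝ) = 4 := by
    have h := Real.rpow_natCast (2:ℝ) 2
    push_cast at h
    rw [h]; norm_num
  have hsub : (2:ℝ) ^ (-(j:ℝ)/2 - 2) = (Real.sqrt (2^j))⁻¹ / 4 := by
    rw [Real.rpow_sub (by norm_num), h22, two_pow_neg_half]
  rw [hsub, two_pow_neg_half, rpow_neg_half_eq hn0.le]
  have hapos : 0 < Real.sqrt ((2:ℝ)^j) := Real.sqrt_pos.mpr (by positivity)
  have hbpos : 0 < Real.sqrt (n:ℝ) := Real.sqrt_pos.mpr hn0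
  have hsq2 : (4/3 : ℝ) ≤ Real.sqrt 2 :=
    (Real.le_sqrt (by norm_num) (by norm_num)).mpr (by norm_num)
  have hmono : Real.sqrt ((2:ℝ)^(j+1)) ≤ Real.sqrt (n:ℝ) :=
    Real.sqrt_le_sqrt (by exact_mod_cast h)
  have hsplit : Real.sqrt ((2:ℝ)^(j+1)) = Real.sqrt ((2:ℝ)^j) * Real.sqrt 2 := by
    rw [pow_succ, Real.sqrt_mul (by positivity)]
  have hab : (4/3) * Real.sqrt ((2:ℝ)^j) ≤ Real.sqrt (n:ℝ) := by
    nlinarith [Real.sqrt_nonneg (2:ℝ)]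
  have hbinv : (Real.sqrt (n:ℝ))⁻¹ ≤ (3/4) * (Real.sqrt ((2:ℝ)^j))⁻¹ := by
    have h1 : (Real.sqrt (n:ℝ))⁻¹ ≤ ((4/3) * Real.sqrt ((2:ℝ)^j))⁻¹ :=
      inv_anti₀ (by positivity) hab
    have h2 : ((4/3) * Real.sqrt ((2:ℝ)^j))⁻¹ = (3/4) * (Real.sqrt ((2:ℝ)^j))⁻¹ := by
      rw [mul_inv]; norm_num
    linarith [h1, h2.le]
  have : 0 < (Real.sqrt ((2:ℝ)^j))⁻¹ := by positivity
  linarith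

private lemma factorB {n L : ℕ} (h1 : 2^L < n) (hn : 3 ≤ n) :
    1/(2 * (n:ℝ) * Real.sqrt n) ≤ (2:ℝ)^(-(L:ℝ)/2) - (n:ℝ)^(-(1:ℝ)/2) := by
  have hx3 : (3:ℝ) ≤ (n:ℝ) := by exact_mod_cast hn
  have hx0 : (0:ℝ) < n := by linarith
  rw [two_pow_neg_half, rpow_neg_half_eq hx0.le]
  set s := Real.sqrt (n:ℝ) with hsdef
  have hs : 0 < s := Real.sqrt_pos.mpr hx0
  have hsne : s ≠ 0 := ne_of_gt hs
  have hs2 : s^2 = (n:ℝ) := Real.sq_sqrt hx0.le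
  have hs23 : 3 ≤ s^2 := by rw [hs2]; exact hx3
  have hL : (2:ℝ)^L ≤ s^2 - 1 := by
    have : (2:ℝ)^L + 1 ≤ (n:ℝ) := by exact_mod_cast h1
    rw [hs2]; linarith
  have h2L : (0:ℝ) < (2:ℝ)^L := by positivity
  suffices h : s⁻¹ + 1/(2*(n:ℝ)*s) ≤ (Real.sqrt ((2:ℝ)^L))⁻¹ by linarith
  rw [show (Real.sqrt ((2:ℝ)^L))⁻¹ = Real.sqrt (((2:ℝ)^L)⁻¹) from (Real.sqrt_inv _).symm]
  apply (Real.le_sqrt (by positivity) (by positivity)).mpr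
  have hexp : (s⁻¹ + 1/(2*(n:ℝ)*s))^2 = (2*s^2+1)^2/(4*s^6) := by
    rw [← hs2]
    field_simp
    ring
  rw [hexp]
  have hLn : (s^2-1)⁻¹ ≤ ((2:ℝ)^L)⁻¹ := inv_anti₀ h2L hL
  have hkey : (2*s^2+1)^2/(4*s^6) ≤ (s^2-1)⁻¹ := by
    rw [inv_eq_one_div, div_le_div_iff₀ (by positivity) (by linarith)]
    nlinarith [sq_nonneg s, sq_nonneg (s^2)]
  linarith

theorem prod_dyadic_factors_ge (n : ℕ) (hn : 3 ≤ n) :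
    ∏ j ∈ Finset.Icc 1 (Nat.clog 2 n - 1),
        ((2 : ℝ) ^ (-(j : ℝ) / 2) - (n : ℝ) ^ (-(1 : ℝ) / 2)) ^ ((n : ℝ) / 2 ^ j)
      ≥ 1 / (4 * (n : ℝ) ^ 2 * 16 ^ n) := by
  have h1n : 1 < n := by omega
  have hclog : 2 ≤ Nat.clog 2 n := by
    by_contra h
    push_neg at h
    have := (Nat.clog_le_iff_le_pow (by norm_num : 1 < 2)).mp
      (show Nat.clog 2 n ≤ 1 by omega)
    omega
  obtain ⟨M, hM⟩ : ∃ M, Nat.clog 2 n - 1 = M + 1 := ⟨Nat.clog 2 n - 2, by omega⟩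
  have hlow : 2^(M+1) < n := by
    have := Nat.pow_pred_clog_lt_self (by norm_num : 1 < 2) h1n
    rwa [Nat.pred_eq_sub_one, hM] at this
  have hhigh : n ≤ 2^(M+2) := by
    have h := Nat.le_pow_clog (by norm_num : 1 < 2) n
    have hc : Nat.clog 2 n = M + 2 := by omega
    rwa [hc] at h
  have hn0 : (0:ℝ) < n := by positivity
  have hn3 : (3:ℝ) ≤ n := by exact_mod_cast hn
  rw [hM, ge_iff_le, Finset.prod_Icc_succ_top (by omega : 1 ≤ M + 1)]
  set A : ℝ := (2:ℝ)^(-(((M+1 : ℕ)):ℝ)/2) - (n:ℝ)^(-(1:ℝ)/2) with hAdef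
  have hB : 1/(2*(n:ℝ)*Real.sqrt n) ≤ A := factorB hlow hn
  have hApos : 0 < A := lt_of_lt_of_le (by positivity) hB
  have hAle1 : A ≤ 1 := by
    have h1 : (2:ℝ)^(-(((M+1:ℕ)):ℝ)/2) ≤ 1 := by
      apply Real.rpow_le_one_of_one_le_of_nonpos (by norm_num)
      have : (0:ℝ) ≤ ((M+1:ℕ):ℝ) := by positivity
      linarith
    have h2 : 0 ≤ (n:ℝ)^(-(1:ℝ)/2) := Real.rpow_nonneg hn0.le _
    rw [hAdef]; linarith
  have hexple : (n:ℝ)/2^(M+1) ≤ 2 := by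
    rw [div_le_iff₀ (by positivity)]
    have : (n:ℝ) ≤ 2^(M+2) := by exact_mod_cast hhigh
    rw [pow_succ] at this
    linarith
  have hedge : 1/(4*(n:ℝ)^3) ≤ A ^ ((n:ℝ)/2^(M+1)) := by
    have e1 : (1/(2*(n:ℝ)*Real.sqrt n))^(2:ℕ) = 1/(4*(n:ℝ)^3) := by
      rw [div_pow, one_pow, mul_pow, mul_pow, Real.sq_sqrt hn0.le]
      ring_nf
    have e2 : (1/(2*(n:ℝ)*Real.sqrt n))^(2:ℕ) ≤ A^(2:ℕ) :=
      pow_le_pow_left₀ (by positivity) hB 2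
    have e3 : A^((2:ℕ):ℝ) ≤ A^((n:ℝ)/2^(M+1)) := by
      apply Real.rpow_le_rpow_of_exponent_ge hApos hAle1
      push_cast
      exact hexple
    rw [Real.rpow_natCast] at e3
    linarith
  have hbulk : (1:ℝ)/8^n ≤
      ∏ j ∈ Finset.Icc 1 M,
        ((2:ℝ)^(-(j:ℝ)/2) - (n:ℝ)^(-(1:ℝ)/2))^((n:ℝ)/2^j) := by
    have step1 : ∏ j ∈ Finset.Icc 1 M, (2:ℝ)^((-(j:ℝ)/2 - 2)*((n:ℝ)/2^j)) ≤
        ∏ j ∈ Finset.Icc 1 M,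
          ((2:ℝ)^(-(j:ℝ)/2) - (n:ℝ)^(-(1:ℝ)/2))^((n:ℝ)/2^j) := by
      apply Finset.prod_le_prod
      · intro j _; positivity
      · intro j hj
        rw [Real.rpow_mul (by norm_num)]
        apply Real.rpow_le_rpow (by positivity) _ (by positivity)
        apply factorA
        have hj' : j ≤ M := (Finset.mem_Icc.mp hj).2
        calc 2^(j+1) ≤ 2^(M+1) := Nat.pow_le_pow_right (by norm_num) (by omega)
          _ ≤ n := hlow.le
    have step2 : ∏ j ∈ Finset.Icc 1 M, (2:ℝ)^((-(j:ℝ)/2 - 2)*((n:ℝ)/2^j)) =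
        (2:ℝ)^(∑ j ∈ Finset.Icc 1 M, (-(j:ℝ)/2 - 2)*((n:ℝ)/2^j)) :=
      (Real.rpow_sum_of_pos (by norm_num) _ _).symm
    have hsum : -(3*(n:ℝ)) ≤ ∑ j ∈ Finset.Icc 1 M, (-(j:ℝ)/2 - 2)*((n:ℝ)/2^j) := by
      have e : ∑ j ∈ Finset.Icc 1 M, (-(j:ℝ)/2 - 2)*((n:ℝ)/2^j)
          = ∑ j ∈ Finset.Icc 1 M, -((n:ℝ) * (((j:ℝ)/2+2)/2^j)) :=
        Finset.sum_congr rfl (fun j _ => by ring)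
      rw [e, Finset.sum_neg_distrib, ← Finset.mul_sum]
      have hs3 : ∑ j ∈ Finset.Icc 1 M, ((j:ℝ)/2+2)/2^j ≤ 3 := by
        rw [sum_aux]
        have : (0:ℝ) ≤ ((M:ℝ)+6)/2^(M+1) := by positivity
        linarith
      have hnonneg : 0 ≤ ∑ j ∈ Finset.Icc 1 M, ((j:ℝ)/2+2)/2^j :=
        Finset.sum_nonneg (fun j _ => by positivity)
      nlinarith
    have step3 : (1:ℝ)/8^n = (2:ℝ)^(-(3*(n:ℝ))) := by
      rw [show (3*(n:ℝ)) = ((3*n : ℕ):ℝ) by push_cast; ring,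
        Real.rpow_neg (by norm_num), Real.rpow_natCast, pow_mul]
      norm_num
    have step4 : (2:ℝ)^(-(3*(n:ℝ))) ≤
        (2:ℝ)^(∑ j ∈ Finset.Icc 1 M, (-(j:ℝ)/2 - 2)*((n:ℝ)/2^j)) :=
      Real.rpow_le_rpow_of_exponent_le (by norm_num) hsum
    calc (1:ℝ)/8^n = (2:ℝ)^(-(3*(n:ℝ))) := step3
      _ ≤ _ := step4
      _ = _ := step2.symm
      _ ≤ _ := step1
  have hcomb : (1:ℝ)/8^n * (1/(4*(n:ℝ)^3)) ≤
      (∏ j ∈ Finset.Icc 1 M,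
        ((2:ℝ)^(-(j:ℝ)/2) - (n:ℝ)^(-(1:ℝ)/2))^((n:ℝ)/2^j)) * A ^ ((n:ℝ)/2^(M+1)) :=
    mul_le_mul hbulk hedge (by positivity) (le_trans (by positivity) hbulk)
  have hfinal : 1/(4*(n:ℝ)^2*16^n) ≤ (1:ℝ)/8^n * (1/(4*(n:ℝ)^3)) := by
    rw [div_mul_div_comm, one_mul]
    apply one_div_le_one_div_of_le (by positivity)
    have h2n : (n:ℝ) ≤ 2^n := by exact_mod_cast (Nat.lt_two_pow_self (n := n)).le
    have h16 : (16:ℝ)^n = 2^n * 8^n := by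
      rw [← mul_pow]; norm_num
    rw [h16]
    have h8 : (0:ℝ) < 8^n := by positivity
    nlinarith [sq_nonneg ((n:ℝ)), mul_pos (mul_pos hn0 hn0) h8]
  exact le_trans hfinal hcomb
end

section
/- Let f ∈ ℂ[X] be a monic separable polynomial of degree n ≥ 2 with discriminant D(f). Then sep(f) > √(3|D(f)|) / (n^{(n+2)/2} · M(f)^{n-1}). -/
open Polynomial

lemma hadamard_col {n : ℕ} (A : Matrix (Fin n) (Fin n) ℂ) :
    ‖A.det‖ ≤ ∏ j, Real.sqrt (∑ i, ‖A i j‖ ^ 2) := by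
  classical
  haveI i1 : WellFoundedLT (Fin n) := inferInstance
  haveI i2 : LocallyFiniteOrderBot (Fin n) := inferInstance
  have hcard : Module.finrank ℂ (EuclideanSpace ℂ (Fin n)) = Fintype.card (Fin n) := by
    simp [finrank_euclideanSpace]
  set f : Fin n → EuclideanSpace ℂ (Fin n) := fun j => (WithLp.equiv 2 (Fin n → ℂ)).symm (fun i => A i j) with hfdef
  set e : OrthonormalBasis (Fin n) ℂ (EuclideanSpace ℂ (Fin n)) := EuclideanSpace.basisFun (Fin n) ℂ with hedef
  set b : OrthonormalBasis (Fin n) ℂ (EuclideanSpace ℂ (Fin n)) := InnerProductSpace.gramSchmidtOrthonormalBasis hcard f with hbdef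
  have hdetb : b.toBasis.det f = ∏ i, inner ℂ (b i) (f i) :=
    InnerProductSpace.gramSchmidtOrthonormalBasis_det hcard f
  have hsmul : e.toBasis.det f = (e.toBasis.det b.toBasis) * (b.toBasis.det f) := by
    have h := e.toBasis.det.eq_smul_basis_det b.toBasis
    calc e.toBasis.det f = ((e.toBasis.det b.toBasis) • b.toBasis.det) f := by rw [← h]
    _ = _ := by simp
  have hA : e.toBasis.det f = A.det := by
    rw [Module.Basis.det_apply]
    congr 1
  have hone : ‖e.toBasis.det b.toBasis‖ = 1 := by
    rw [OrthonormalBasis.coe_toBasis]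
    exact e.det_to_matrix_orthonormalBasis b
  have hnormf : ∀ j, ‖f j‖ = Real.sqrt (∑ i, ‖A i j‖ ^ 2) := by
    intro j
    rw [EuclideanSpace.norm_eq]
    congr 1
  calc ‖A.det‖ = ‖e.toBasis.det b.toBasis‖ * ‖b.toBasis.det f‖ := by
        rw [← hA, hsmul, norm_mul]
    _ = ‖b.toBasis.det f‖ := by rw [hone, one_mul]
    _ = ∏ i, ‖(inner ℂ (b i) (f i) : ℂ)‖ := by rw [hdetb]; exact norm_prod _ _
    _ ≤ ∏ i, ‖f i‖ := by
        refine Finset.prod_le_prod (fun i _ => by positivity) fun i _ => ?_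
        have h1 : ‖b i‖ = 1 := b.orthonormal.1 i
        have := norm_inner_le_norm (𝕜 := ℂ) (b i) (f i)
        rw [h1, one_mul] at this
        simpa using this
    _ = ∏ j, Real.sqrt (∑ i, ‖A i j‖ ^ 2) :=
        Finset.prod_congr rfl fun j _ => hnormf j

lemma sum_sq_lt (n : ℕ) (hn : 1 ≤ n) :
    ∑ k ∈ Finset.range n, (k : ℝ) ^ 2 < (n : ℝ) ^ 3 / 3 := by
  have he : ∀ m : ℕ, ∑ k ∈ Finset.range m, (k : ℝ) ^ 2
      = (m : ℝ) * ((m : ℝ) - 1) * (2 * (m : ℝ) - 1) / 6 := by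
    intro m
    induction m with
    | zero => simp
    | succ m ih => rw [Finset.sum_range_succ, ih]; push_cast; ring
  rw [he]
  have h1 : (1 : ℝ) ≤ (n : ℝ) := by exact_mod_cast hn
  nlinarith

lemma pow_diff_bound (a b : ℂ) (c : ℝ) (k : ℕ)
    (ha : ‖a‖ ≤ c) (hb : ‖b‖ ≤ c) :
    ‖a ^ k - b ^ k‖ ≤ ‖a - b‖ * k * c ^ (k - 1) := by
  have hc0 : 0 ≤ c := le_trans (norm_nonneg _) ha
  have hgeom := geom_sum₂_mul a b k
  calc ‖a ^ k - b ^ k‖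
      = ‖(∑ i ∈ Finset.range k, a ^ i * b ^ (k - 1 - i)) * (a - b)‖ := by rw [hgeom]
    _ = ‖∑ i ∈ Finset.range k, a ^ i * b ^ (k - 1 - i)‖ * ‖a - b‖ := by
        rw [norm_mul]
    _ ≤ (∑ i ∈ Finset.range k, ‖a ^ i * b ^ (k - 1 - i)‖) * ‖a - b‖ := by
        gcongr
        exact norm_sum_le _ _
    _ ≤ (∑ _i ∈ Finset.range k, c ^ (k - 1)) * ‖a - b‖ := by
        gcongr with i hi
        rw [Finset.mem_range] at hi
        have : ‖a ^ i * b ^ (k - 1 - i)‖ ≤ c ^ i * c ^ (k - 1 - i) := by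
          rw [norm_mul, norm_pow, norm_pow]
          exact mul_le_mul (pow_le_pow_left₀ (norm_nonneg _) ha i)
            (pow_le_pow_left₀ (norm_nonneg _) hb _) (by positivity) (by positivity)
        refine this.trans ?_
        rw [← pow_add]
        have : i + (k - 1 - i) = k - 1 := by omega
        rw [this]
    _ = ‖a - b‖ * k * c ^ (k - 1) := by
        rw [Finset.sum_const, Finset.card_range, nsmul_eq_mul]; ring

set_option maxHeartbeats 1000000 in
lemma mahler_key (n : ℕ) (hn : 2 ≤ n) (α : Fin n → ℂ) (i₀ j₀ : Fin n) (hij : i₀ ≠ j₀)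
    (hαne : α i₀ ≠ α j₀)
    (hmle : max 1 (‖α i₀‖) ≤ max 1 (‖α j₀‖)) :
    Real.sqrt (3 * ‖∏ i, ∏ j ∈ Finset.Ioi i, (α i - α j) ^ 2‖) <
      ‖α i₀ - α j₀‖ *
        ((n : ℝ) ^ (((n : ℝ) + 2) / 2) * (∏ i, max 1 (‖α i‖)) ^ (n - 1)) := by
  classical
  set m : Fin n → ℝ := fun i => max 1 (‖α i‖) with hm
  have hm1 : ∀ i, (1 : ℝ) ≤ m i := fun i => le_max_left _ _
  have habs : ∀ i, ‖α i‖ ≤ m i := fun i => le_max_right _ _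
  set s : ℝ := ‖α i₀ - α j₀‖ with hs
  have hspos : 0 < s := by
    rw [hs]
    simpa [sub_eq_zero] using hαne
  set c : ℝ := m j₀ with hc
  have hc1 : (1 : ℝ) ≤ c := hm1 j₀
  set V : Matrix (Fin n) (Fin n) ℂ := (Matrix.vandermonde α).transpose with hV
  set W : Matrix (Fin n) (Fin n) ℂ :=
    V.updateCol j₀ (fun k => α j₀ ^ (k : ℕ) - α i₀ ^ (k : ℕ)) with hW
  have hdetW : W.det = V.det := by
    have hcoleq : (fun k : Fin n => α j₀ ^ (k : ℕ) - α i₀ ^ (k : ℕ))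
        = fun k => V k j₀ + (-1 : ℂ) • V k i₀ := by
      funext k
      simp [hV, Matrix.vandermonde, Matrix.transpose_apply]
      ring
    rw [hW, hcoleq]
    exact Matrix.det_updateCol_add_smul_self V hij.symm (-1)
  -- |D| and |det V|
  have habsdet : Real.sqrt (3 * ‖∏ i, ∏ j ∈ Finset.Ioi i, (α i - α j) ^ 2‖)
      = Real.sqrt 3 * ‖V.det‖ := by
    have hdetV : V.det = ∏ i, ∏ j ∈ Finset.Ioi i, (α j - α i) := by
      rw [hV, Matrix.det_transpose, Matrix.det_vandermonde]
    have h1 : ‖∏ i, ∏ j ∈ Finset.Ioi i, (α i - α j) ^ 2‖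
        = (‖V.det‖) ^ 2 := by
      rw [hdetV, norm_prod]
      rw [show (‖∏ i, ∏ j ∈ Finset.Ioi i, (α j - α i)‖)
          = ∏ i, ‖∏ j ∈ Finset.Ioi i, (α j - α i)‖ from norm_prod _ _]
      rw [← Finset.prod_pow]
      refine Finset.prod_congr rfl fun i _ => ?_
      rw [norm_prod, norm_prod, ← Finset.prod_pow]
      refine Finset.prod_congr rfl fun j _ => ?_
      rw [norm_pow, norm_sub_rev]
    rw [h1, Real.sqrt_mul (by norm_num), Real.sqrt_sq (norm_nonneg _)]
  -- column norm bounds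
  have hwcol1 : ∀ j, j ≠ j₀ →
      Real.sqrt (∑ k, ‖W k j‖ ^ 2) ≤ Real.sqrt n * m j ^ (n - 1) := by
    intro j hj
    have hentry : ∀ k : Fin n, ‖W k j‖ ^ 2 ≤ (m j ^ (n - 1)) ^ 2 := by
      intro k
      have h1 : W k j = α j ^ (k : ℕ) := by
        rw [hW, Matrix.updateCol_ne hj, hV]
        rfl
      rw [h1, norm_pow]
      have h2 : ‖α j‖ ^ (k : ℕ) ≤ m j ^ (k : ℕ) :=
        pow_le_pow_left₀ (norm_nonneg _) (habs j) _
      have h3 : m j ^ (k : ℕ) ≤ m j ^ (n - 1) :=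
        pow_le_pow_right₀ (hm1 j) (by omega)
      have h4 : (0:ℝ) ≤ ‖α j‖ ^ (k : ℕ) := by positivity
      nlinarith
    calc Real.sqrt (∑ k, ‖W k j‖ ^ 2)
        ≤ Real.sqrt (∑ _k : Fin n, (m j ^ (n - 1)) ^ 2) := by
          apply Real.sqrt_le_sqrt
          exact Finset.sum_le_sum fun k _ => hentry k
      _ = Real.sqrt n * m j ^ (n - 1) := by
          rw [Finset.sum_const, Finset.card_univ, Fintype.card_fin, nsmul_eq_mul,
            Real.sqrt_mul (by positivity), Real.sqrt_sq (by positivity)]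
  have hwcol2 : Real.sqrt (∑ k, ‖W k j₀‖ ^ 2)
      < s * c ^ (n - 2) * Real.sqrt ((n : ℝ) ^ 3 / 3) := by
    have hentry : ∀ k : Fin n, ‖W k j₀‖ ≤ s * (k : ℕ) * c ^ (n - 2) := by
      intro k
      have h1 : W k j₀ = α j₀ ^ (k : ℕ) - α i₀ ^ (k : ℕ) := by
        rw [hW, Matrix.updateCol_self]
      rw [h1]
      have hbd := pow_diff_bound (α j₀) (α i₀) c (k : ℕ)
        (habs j₀) ((habs i₀).trans hmle)
      refine hbd.trans ?_
      have hss : ‖α j₀ - α i₀‖ = s := by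
        rw [hs]; exact norm_sub_rev _ _
      rw [hss]
      have h2 : c ^ ((k : ℕ) - 1) ≤ c ^ (n - 2) :=
        pow_le_pow_right₀ hc1 (by omega)
      have hk0 : (0:ℝ) ≤ s * ((k : ℕ) : ℝ) := mul_nonneg hspos.le (Nat.cast_nonneg _)
      exact mul_le_mul_of_nonneg_left h2 hk0
    have hsum : ∑ k, ‖W k j₀‖ ^ 2
        ≤ (s * c ^ (n - 2)) ^ 2 * ∑ k ∈ Finset.range n, (k : ℝ) ^ 2 := by
      rw [Finset.mul_sum, ← Fin.sum_univ_eq_sum_range (fun k => (s * c ^ (n-2)) ^ 2 * (k:ℝ)^2)]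
      refine Finset.sum_le_sum fun k _ => ?_
      have h1 := hentry k
      have h2 : (0:ℝ) ≤ ‖W k j₀‖ := norm_nonneg _
      nlinarith
    have hlt : (s * c ^ (n - 2)) ^ 2 * ∑ k ∈ Finset.range n, (k : ℝ) ^ 2
        < (s * c ^ (n - 2)) ^ 2 * ((n : ℝ) ^ 3 / 3) := by
      have hpos : (0:ℝ) < (s * c ^ (n - 2)) ^ 2 := by positivity
      exact mul_lt_mul_of_pos_left (sum_sq_lt n (by omega)) hpos
    calc Real.sqrt (∑ k, ‖W k j₀‖ ^ 2)
        < Real.sqrt ((s * c ^ (n - 2)) ^ 2 * ((n : ℝ) ^ 3 / 3)) := by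
          exact Real.sqrt_lt_sqrt (Finset.sum_nonneg fun k _ => sq_nonneg _)
            (lt_of_le_of_lt hsum hlt)
      _ = s * c ^ (n - 2) * Real.sqrt ((n : ℝ) ^ 3 / 3) := by
          have hsc : (0:ℝ) ≤ s * c ^ (n - 2) :=
            mul_nonneg hspos.le (pow_nonneg (by linarith [hc1]) _)
          rw [Real.sqrt_mul (sq_nonneg _), Real.sqrt_sq hsc]
  -- Hadamard
  have hHad := hadamard_col W
  set P : ℝ := ∏ j ∈ Finset.univ.erase j₀, (Real.sqrt n * m j ^ (n - 1)) with hP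
  have hPpos : 0 < P := by
    refine Finset.prod_pos fun j _ => ?_
    have : (0:ℝ) < Real.sqrt n := Real.sqrt_pos.mpr (by positivity)
    have := hm1 j
    positivity
  have hprod : ∏ j, Real.sqrt (∑ k, ‖W k j‖ ^ 2)
      < P * (s * c ^ (n - 2) * Real.sqrt ((n : ℝ) ^ 3 / 3)) := by
    rw [← Finset.prod_erase_mul Finset.univ _ (Finset.mem_univ j₀)]
    have h1 : ∏ j ∈ Finset.univ.erase j₀, Real.sqrt (∑ k, ‖W k j‖ ^ 2) ≤ P := by
      refine Finset.prod_le_prod (fun j _ => Real.sqrt_nonneg _) fun j hj => ?_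
      exact hwcol1 j (Finset.ne_of_mem_erase hj)
    calc (∏ j ∈ Finset.univ.erase j₀, Real.sqrt (∑ k, ‖W k j‖ ^ 2)) *
          Real.sqrt (∑ k, ‖W k j₀‖ ^ 2)
        ≤ P * Real.sqrt (∑ k, ‖W k j₀‖ ^ 2) := by
          exact mul_le_mul_of_nonneg_right h1 (Real.sqrt_nonneg _)
      _ < P * (s * c ^ (n - 2) * Real.sqrt ((n : ℝ) ^ 3 / 3)) :=
          mul_lt_mul_of_pos_left hwcol2 hPpos
  have hmain : ‖V.det‖ < P * (s * c ^ (n - 2) * Real.sqrt ((n : ℝ) ^ 3 / 3)) := by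
    rw [← hdetW]
    exact lt_of_le_of_lt hHad hprod
  -- algebra on constants
  have hnpos : (0:ℝ) < n := by positivity
  have hPval : P = Real.sqrt n ^ (n - 1) * ∏ j ∈ Finset.univ.erase j₀, m j ^ (n - 1) := by
    rw [hP, Finset.prod_mul_distrib, Finset.prod_const, Finset.card_erase_of_mem
      (Finset.mem_univ j₀), Finset.card_univ, Fintype.card_fin]
  have hconst : Real.sqrt 3 * (Real.sqrt n ^ (n - 1) * Real.sqrt ((n : ℝ) ^ 3 / 3))
      = (n : ℝ) ^ (((n : ℝ) + 2) / 2) := by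
    have h1 : Real.sqrt 3 * Real.sqrt ((n : ℝ) ^ 3 / 3) = Real.sqrt ((n : ℝ) ^ 3) := by
      rw [← Real.sqrt_mul (by norm_num)]
      congr 1
      ring
    have h2 : Real.sqrt ((n : ℝ) ^ 3) = (n : ℝ) ^ ((3 : ℝ) / 2) := by
      rw [Real.sqrt_eq_rpow, ← Real.rpow_natCast (n : ℝ) 3, ← Real.rpow_mul hnpos.le]
      norm_num
    have h3 : Real.sqrt n ^ (n - 1) = (n : ℝ) ^ (((n : ℝ) - 1) / 2) := by
      rw [Real.sqrt_eq_rpow, ← Real.rpow_natCast ((n:ℝ) ^ ((1:ℝ)/2)) (n - 1),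
        ← Real.rpow_mul hnpos.le]
      congr 1
      have : ((n - 1 : ℕ) : ℝ) = (n : ℝ) - 1 := by
        have : (1:ℕ) ≤ n := by omega
        push_cast [this]
        ring
      rw [this]
      ring
    calc Real.sqrt 3 * (Real.sqrt n ^ (n - 1) * Real.sqrt ((n : ℝ) ^ 3 / 3))
        = Real.sqrt n ^ (n - 1) * (Real.sqrt 3 * Real.sqrt ((n : ℝ) ^ 3 / 3)) := by ring
      _ = (n : ℝ) ^ (((n : ℝ) - 1) / 2) * (n : ℝ) ^ ((3 : ℝ) / 2) := by rw [h1, h2, h3]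
      _ = (n : ℝ) ^ (((n : ℝ) + 2) / 2) := by
          rw [← Real.rpow_add hnpos]
          congr 1
          ring
  have hMbound : (∏ j ∈ Finset.univ.erase j₀, m j ^ (n - 1)) * c ^ (n - 2)
      ≤ (∏ i, m i) ^ (n - 1) := by
    have h1 : (∏ i, m i) ^ (n - 1) = ∏ i, m i ^ (n - 1) := (Finset.prod_pow _ _ _).symm
    rw [h1, ← Finset.prod_erase_mul Finset.univ _ (Finset.mem_univ j₀)]
    refine mul_le_mul_of_nonneg_left ?_ ?_
    · exact pow_le_pow_right₀ hc1 (by omega)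
    · exact Finset.prod_nonneg fun j _ => by positivity
  -- final assembly
  rw [habsdet]
  have h3pos : (0:ℝ) < Real.sqrt 3 := by positivity
  calc Real.sqrt 3 * ‖V.det‖
      < Real.sqrt 3 * (P * (s * c ^ (n - 2) * Real.sqrt ((n : ℝ) ^ 3 / 3))) :=
        mul_lt_mul_of_pos_left hmain h3pos
    _ = s * ((Real.sqrt 3 * (Real.sqrt n ^ (n - 1) * Real.sqrt ((n : ℝ) ^ 3 / 3))) *
          ((∏ j ∈ Finset.univ.erase j₀, m j ^ (n - 1)) * c ^ (n - 2))) := by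
        rw [hPval]; ring
    _ = s * ((n : ℝ) ^ (((n : ℝ) + 2) / 2) *
          ((∏ j ∈ Finset.univ.erase j₀, m j ^ (n - 1)) * c ^ (n - 2))) := by rw [hconst]
    _ ≤ s * ((n : ℝ) ^ (((n : ℝ) + 2) / 2) * (∏ i, m i) ^ (n - 1)) := by
        have hrp : (0:ℝ) < (n : ℝ) ^ (((n : ℝ) + 2) / 2) := Real.rpow_pos_of_pos hnpos _
        have := mul_le_mul_of_nonneg_left hMbound hrp.le
        exact mul_le_mul_of_nonneg_left this hspos.le

theorem mahler_lower_bound_sep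
    (n : ℕ) (hn : 2 ≤ n) (α : Fin n → ℂ) (hinj : Function.Injective α)
    (f : Polynomial ℂ) (hf : f = ∏ i, (X - C (α i))) :
    polySep f >
      Real.sqrt (3 * ‖∏ i, ∏ j ∈ Finset.Ioi i, (α i - α j) ^ 2‖) /
        ((n : ℝ) ^ (((n : ℝ) + 2) / 2) * _root_.mahlerMeasure f ^ (n - 1)) := by
  classical
  have hroots : f.roots = Multiset.map α Finset.univ.val := by
    have h1 : f = (Multiset.map (fun a => X - C a) (Multiset.map α Finset.univ.val)).prod := by
      rw [hf, Multiset.map_map, Finset.prod_eq_multiset_prod]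
      rfl
    rw [h1, roots_multiset_prod_X_sub_C]
  have hmemr : ∀ i, α i ∈ f.roots := by
    intro i
    rw [hroots]
    exact Multiset.mem_map_of_mem _ (Finset.mem_val.mpr (Finset.mem_univ i))
  have hM : _root_.mahlerMeasure f = ∏ i, max 1 (‖α i‖) := by
    unfold _root_.mahlerMeasure
    rw [hroots, Multiset.map_map, Finset.prod_eq_multiset_prod]
    rfl
  set S : Set ℝ := {d : ℝ | ∃ a ∈ f.roots, ∃ b ∈ f.roots, a ≠ b ∧ d = ‖a - b‖}
    with hS
  have hfin : S.Finite := by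
    have : S ⊆ (fun p : ℂ × ℂ => ‖p.1 - p.2‖) ''
        (↑f.roots.toFinset ×ˢ (↑f.roots.toFinset : Set ℂ)) := by
      rintro d ⟨a, ha, b, hb, hab, rfl⟩
      exact ⟨(a, b), ⟨by simpa using ha, by simpa using hb⟩, rfl⟩
    exact Set.Finite.subset (Set.Finite.image _ (Set.Finite.prod
      (Set.finite_mem_finset _) (Set.finite_mem_finset _))) this
  have hne : S.Nonempty := by
    have h01 : (⟨0, by omega⟩ : Fin n) ≠ ⟨1, by omega⟩ := by
      simp [Fin.ext_iff]
    exact ⟨‖α ⟨0, by omega⟩ - α ⟨1, by omega⟩‖,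
      α ⟨0, by omega⟩, hmemr _, α ⟨1, by omega⟩, hmemr _,
      fun h => h01 (hinj h), rfl⟩
  have hmem : sInf S ∈ S := hne.csInf_mem hfin
  obtain ⟨a, ha, b, hb, hab, hsep⟩ := hmem
  rw [hroots] at ha hb
  obtain ⟨i', -, rfl⟩ := Multiset.mem_map.mp ha
  obtain ⟨j', -, rfl⟩ := Multiset.mem_map.mp hb
  have hij' : i' ≠ j' := fun h => hab (by rw [h])
  have hsep' : polySep f = ‖α i' - α j'‖ := hsep
  have hkey : Real.sqrt (3 * ‖∏ i, ∏ j ∈ Finset.Ioi i, (α i - α j) ^ 2‖) <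
      polySep f * ((n : ℝ) ^ (((n : ℝ) + 2) / 2) *
        (∏ i, max 1 (‖α i‖)) ^ (n - 1)) := by
    rcases le_total (max 1 (‖α i'‖)) (max 1 (‖α j'‖)) with hle | hle
    · rw [hsep']
      exact mahler_key n hn α i' j' hij' hab hle
    · rw [hsep', norm_sub_rev]
      exact mahler_key n hn α j' i' hij'.symm (Ne.symm hab) hle
  have hden : (0:ℝ) < (n : ℝ) ^ (((n : ℝ) + 2) / 2) * _root_.mahlerMeasure f ^ (n - 1) := by
    have h1 : (0:ℝ) < (n : ℝ) ^ (((n : ℝ) + 2) / 2) :=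
      Real.rpow_pos_of_pos (by positivity) _
    have h2 : (0:ℝ) < _root_.mahlerMeasure f := by
      rw [hM]
      exact Finset.prod_pos fun i _ => lt_of_lt_of_le one_pos (le_max_left _ _)
    positivity
  rw [gt_iff_lt, div_lt_iff₀ hden]
  rw [hM]
  exact hkey
end

section
/- Let f ∈ ℝ[X] be a monic separable polynomial of degree n ≥ 2 all of whose roots are real and of the same sign (all nonnegative or all nonpositive). Then sep(f) ≤ (M(f)/(n−1)!)^{1/(n−1)}; in particular sep(f) < (e/n)·M(f)^{1/(n−1)}. -/
open Polynomial

lemma one_add_inv_pow_lt_exp (k : ℕ) (hk : 1 ≤ k) :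
    (1 + 1/(k:ℝ)) ^ k < Real.exp 1 := by
  have hk0 : (0:ℝ) < k := by exact_mod_cast hk
  have h1 : (1 + 1/(k:ℝ)) < Real.exp (1/(k:ℝ)) := by
    have := Real.add_one_lt_exp (x := 1/(k:ℝ)) (by positivity)
    linarith
  have h2 : (1 + 1/(k:ℝ)) ^ k < (Real.exp (1/(k:ℝ))) ^ k := by
    apply pow_lt_pow_left₀ h1 (by positivity) (by omega)
  calc (1 + 1/(k:ℝ)) ^ k < (Real.exp (1/(k:ℝ))) ^ k := h2
    _ = Real.exp 1 := by
        rw [← Real.exp_nat_mul]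
        congr 1
        field_simp

lemma fact_gt (m : ℕ) (hm : 1 ≤ m) :
    (((m:ℝ)+1)/Real.exp 1) ^ m < (m.factorial : ℝ) := by
  induction m with
  | zero => omega
  | succ k ih =>
    rcases Nat.eq_or_lt_of_le hm with h | h
    · -- k = 0, m = 1
      have hk : k = 0 := by omega
      subst hk
      have he : (2:ℝ) < Real.exp 1 := by
        have := Real.add_one_lt_exp (x := (1:ℝ)) one_ne_zero
        linarith
      have he0 : (0:ℝ) < Real.exp 1 := Real.exp_pos 1
      simp only [Nat.factorial]
      push_cast
      rw [pow_one, div_lt_iff₀ he0]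
      linarith
    · have hk : 1 ≤ k := by omega
      have ihk := ih hk
      push_cast
      have hk0 : (0:ℝ) < k := by exact_mod_cast hk
      have he : (0:ℝ) < Real.exp 1 := Real.exp_pos 1
      have key : (1 + 1/((k:ℝ)+1)) ^ (k+1) < Real.exp 1 := by
        have := one_add_inv_pow_lt_exp (k+1) (by omega)
        push_cast at this
        exact this
      have hsplit : (((k:ℝ)+1+1)/Real.exp 1) ^ (k+1)
          = (1 + 1/((k:ℝ)+1)) ^ (k+1) * (((k:ℝ)+1)/Real.exp 1) ^ (k+1) := by
        rw [← mul_pow]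
        congr 1
        field_simp
      have hb : (0:ℝ) < (((k:ℝ)+1)/Real.exp 1) ^ (k+1) := by positivity
      calc (((k:ℝ)+1+1)/Real.exp 1) ^ (k+1)
          = (1 + 1/((k:ℝ)+1)) ^ (k+1) * (((k:ℝ)+1)/Real.exp 1) ^ (k+1) := hsplit
        _ < Real.exp 1 * (((k:ℝ)+1)/Real.exp 1) ^ (k+1) := by
            exact mul_lt_mul_of_pos_right key hb
        _ = ((k:ℝ)+1) * (((k:ℝ)+1)/Real.exp 1) ^ k := by
            rw [pow_succ]
            field_simp
        _ < ((k:ℝ)+1) * (k.factorial : ℝ) := by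
            apply mul_lt_mul_of_pos_left ihk (by positivity)
        _ = ((k+1).factorial : ℝ) := by
            rw [Nat.factorial_succ]; push_cast; ring

lemma key_multiset (m : ℕ) (s : Multiset ℝ) (hcard : Multiset.card s = m + 1)
    (hnd : s.Nodup) (hpos : ∀ a ∈ s, 0 ≤ a) (d : ℝ) (hd0 : 0 ≤ d)
    (hd : ∀ a ∈ s, ∀ b ∈ s, a ≠ b → d ≤ |a - b|) :
    d ^ m * (m.factorial : ℝ) ≤ (s.map fun a => max 1 |a|).prod := by
  set t : Finset ℝ := ⟨s, hnd⟩ with ht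
  have htcard : t.card = m + 1 := hcard
  set g := t.orderIsoOfFin htcard with hg
  set a : Fin (m+1) → ℝ := fun i => (g i : ℝ) with ha
  have hmono : StrictMono a := fun i j hij => by
    exact_mod_cast (g.strictMono hij)
  have hmem : ∀ i, a i ∈ s := fun i => (g i).2
  -- gap lemma
  have gap : ∀ k : ℕ, ∀ hk : k < m + 1, (k:ℝ) * d ≤ a ⟨k, hk⟩ - a ⟨0, Nat.succ_pos m⟩ := by
    intro k
    induction k with
    | zero => intro hk; simp
    | succ k ih =>
      intro hk
      have hk' : k < m + 1 := Nat.lt_of_succ_lt hk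
      have IH := ih hk'
      have hlt : a ⟨k, hk'⟩ < a ⟨k+1, hk⟩ := hmono (by simp [Fin.lt_def])
      have hne : a ⟨k+1, hk⟩ ≠ a ⟨k, hk'⟩ := (ne_of_lt hlt).symm
      have hdle := hd _ (hmem ⟨k+1, hk⟩) _ (hmem ⟨k, hk'⟩) hne
      rw [abs_of_nonneg (by linarith)] at hdle
      push_cast
      linarith
  -- products
  have hprod_eq : (s.map fun x => max 1 |x|).prod = ∏ i : Fin (m+1), max 1 |a i| := by
    have h1 : (s.map fun x => max 1 |x|).prod = ∏ x ∈ t, max 1 |x| := rfl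
    rw [h1, ← Finset.prod_coe_sort t (fun x => max 1 |x|)]
    exact (Equiv.prod_comp g.toEquiv (fun x : t => max 1 |(x:ℝ)|)).symm
  have hfact : (∏ i : Fin m, (((i:ℕ):ℝ) + 1)) = (m.factorial : ℝ) := by
    rw [Fin.prod_univ_eq_prod_range (fun i => ((i:ℝ) + 1)) m]
    rw [← Finset.prod_range_add_one_eq_factorial m]
    push_cast
    rfl
  have step1 : d ^ m * (m.factorial : ℝ) = ∏ i : Fin m, ((((i:ℕ):ℝ) + 1) * d) := by
    rw [Finset.prod_mul_distrib, hfact, Finset.prod_const]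
    simp [mul_comm]
  have step2 : (∏ i : Fin m, ((((i:ℕ):ℝ) + 1) * d))
      ≤ ∏ i : Fin m, (a i.succ - a 0) := by
    apply Finset.prod_le_prod
    · intro i _; positivity
    · intro i _
      have := gap (i + 1) (by omega)
      have he : a ⟨(i:ℕ)+1, by omega⟩ = a i.succ := by congr 1
      have he0 : a ⟨0, Nat.succ_pos m⟩ = a 0 := by congr 1
      rw [he, he0] at this
      push_cast at this
      linarith
  have step3 : (∏ i : Fin m, (a i.succ - a 0))
      ≤ ∏ i : Fin m, max 1 |a i.succ| := by
    apply Finset.prod_le_prod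
    · intro i _
      have : a 0 ≤ a i.succ := (hmono.le_iff_le).mpr (Fin.zero_le _)
      linarith
    · intro i _
      have h0 : 0 ≤ a 0 := hpos _ (hmem 0)
      have h1 : a i.succ ≤ |a i.succ| := le_abs_self _
      have : |a i.succ| ≤ max 1 |a i.succ| := le_max_right _ _
      linarith
  have step4 : (∏ i : Fin m, max 1 |a i.succ|) ≤ ∏ i : Fin (m+1), max 1 |a i| := by
    rw [Fin.prod_univ_succ]
    apply le_mul_of_one_le_left
    · apply Finset.prod_nonneg; intro i _; positivity
    · exact le_max_left _ _
  rw [hprod_eq, step1]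
  exact le_trans step2 (le_trans step3 step4)

theorem sep_le_of_real_roots_same_sign
    (n : ℕ) (hn : 2 ≤ n) (f : Polynomial ℝ)
    (hmonic : f.Monic) (hsep : f.Separable) (hdeg : f.natDegree = n)
    (hreal : ∀ z ∈ (f.map (algebraMap ℝ ℂ)).roots, z.im = 0)
    (hsign : (∀ z ∈ (f.map (algebraMap ℝ ℂ)).roots, 0 ≤ z.re) ∨
             (∀ z ∈ (f.map (algebraMap ℝ ℂ)).roots, z.re ≤ 0)) :
    polySep (f.map (algebraMap ℝ ℂ)) ≤
        (_root_.mahlerMeasure (f.map (algebraMap ℝ ℂ)) / (Nat.factorial (n - 1) : ℝ)) ^ ((1 : ℝ) / ((n : ℝ) - 1)) ∧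
      polySep (f.map (algebraMap ℝ ℂ)) <
        (Real.exp 1 / (n : ℝ)) *
          _root_.mahlerMeasure (f.map (algebraMap ℝ ℂ)) ^ ((1 : ℝ) / ((n : ℝ) - 1)) := by
  set F := f.map (algebraMap ℝ ℂ) with hF
  have hdegF : F.natDegree = n := by rw [hF, hmonic.natDegree_map, hdeg]
  have hsplits : F.Splits :=
    IsAlgClosed.splits F
  have hcard : Multiset.card F.roots = n := by
    rw [(splits_iff_card_roots).mp hsplits, hdegF]
  have hndR : F.roots.Nodup := nodup_roots (hsep.map)
  -- two distinct roots exist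
  have h2 : ∃ z ∈ F.roots, ∃ w ∈ F.roots, z ≠ w := by
    obtain ⟨z, hz⟩ := Multiset.card_pos_iff_exists_mem.mp (by omega : 0 < Multiset.card F.roots)
    have : 0 < Multiset.card (F.roots.erase z) := by
      rw [Multiset.card_erase_of_mem hz, hcard, Nat.pred_eq_sub_one]; omega
    obtain ⟨w, hw⟩ := Multiset.card_pos_iff_exists_mem.mp this
    have hwz : w ≠ z := (hndR.mem_erase_iff.mp hw).1
    exact ⟨z, hz, w, Multiset.mem_of_mem_erase hw, hwz.symm⟩
  -- real roots as a multiset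
  set s : Multiset ℝ := F.roots.map Complex.re with hs
  have hre : ∀ z ∈ F.roots, z = ((z.re : ℝ) : ℂ) := by
    intro z hz
    exact Complex.ext rfl (by simp [hreal z hz])
  have hnds : s.Nodup := by
    refine Multiset.Nodup.map_on ?_ hndR
    intro z hz w hw hzw
    rw [hre z hz, hre w hw, hzw]
  have hcards : Multiset.card s = n := by rw [hs, Multiset.card_map, hcard]
  -- separation facts
  set S : Set ℝ := {d : ℝ | ∃ a ∈ F.roots, ∃ b ∈ F.roots, a ≠ b ∧ d = ‖a - b‖}
    with hSdef
  have hSd : polySep F = sInf S := rfl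
  have hSne : S.Nonempty := by
    obtain ⟨z, hz, w, hw, hzw⟩ := h2
    exact ⟨‖z - w‖, z, hz, w, hw, hzw, rfl⟩
  have hSbdd : BddBelow S := by
    refine ⟨0, ?_⟩
    rintro x ⟨a, _, b, _, _, rfl⟩
    exact norm_nonneg _
  set d := polySep F with hd
  have hd0 : 0 ≤ d := by
    have h0 : (0:ℝ) ≤ sInf S :=
      le_csInf hSne (by rintro x ⟨a, _, b, _, _, rfl⟩; exact norm_nonneg _)
    exact h0
  have hdle : ∀ a ∈ s, ∀ b ∈ s, a ≠ b → d ≤ |a - b| := by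
    intro a ha b hb hab
    obtain ⟨z, hz, rfl⟩ := Multiset.mem_map.mp ha
    obtain ⟨w, hw, rfl⟩ := Multiset.mem_map.mp hb
    have hzw : z ≠ w := fun h => hab (by rw [h])
    have habs : ‖z - w‖ = |z.re - w.re| := by
      have hsub : z - w = ((z.re - w.re : ℝ) : ℂ) := by
        rw [Complex.ofReal_sub, ← hre z hz, ← hre w hw]
      rw [hsub, Complex.norm_real, Real.norm_eq_abs]
    have hmem : ‖z - w‖ ∈ S := ⟨z, hz, w, hw, hzw, rfl⟩
    have := csInf_le hSbdd hmem
    rw [habs] at this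
    exact this
  -- Mahler measure in terms of s
  have hM : _root_.mahlerMeasure F = (s.map fun a => max 1 |a|).prod := by
    rw [_root_.mahlerMeasure, hs, Multiset.map_map]
    congr 1
    apply Multiset.map_congr rfl
    intro z hz
    simp only [Function.comp_apply]
    congr 1
    conv_lhs => rw [hre z hz]
    rw [Complex.norm_real, Real.norm_eq_abs]
  obtain ⟨m, rfl⟩ : ∃ m, n = m + 1 := ⟨n - 1, by omega⟩
  have hm1 : 1 ≤ m := by omega
  have hm0 : m ≠ 0 := by omega
  -- key inequality
  have key : d ^ m * (m.factorial : ℝ) ≤ _root_.mahlerMeasure F := by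
    rw [hM]
    rcases hsign with hpos | hneg
    · refine key_multiset m s hcards hnds ?_ d hd0 hdle
      intro a ha
      obtain ⟨z, hz, rfl⟩ := Multiset.mem_map.mp ha
      exact hpos z hz
    · have hres := key_multiset m (s.map fun x => -x)
        (by rw [Multiset.card_map, hcards])
        (hnds.map neg_injective)
        (by
          intro a ha
          obtain ⟨b, hb, rfl⟩ := Multiset.mem_map.mp ha
          obtain ⟨z, hz, rfl⟩ := Multiset.mem_map.mp hb
          simpa using hneg z hz)
        d hd0
        (by
          intro a ha b hb hab
          obtain ⟨a', ha', rfl⟩ := Multiset.mem_map.mp ha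
          obtain ⟨b', hb', rfl⟩ := Multiset.mem_map.mp hb
          have : a' ≠ b' := fun h => hab (by rw [h])
          have := hdle a' ha' b' hb' this
          rw [show -a' - -b' = -(a' - b') by ring, abs_neg]
          exact this)
      rw [Multiset.map_map] at hres
      have heq : (s.map ((fun a => max 1 |a|) ∘ fun x => -x)).prod
          = (s.map fun a => max 1 |a|).prod := by
        congr 1
        apply Multiset.map_congr rfl
        intro x _
        simp [abs_neg]
      rwa [heq] at hres
  -- numeric conclusion
  set M := _root_.mahlerMeasure F with hMdef
  have hM1 : (1:ℝ) ≤ M := by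
    rw [hMdef, _root_.mahlerMeasure]
    apply Multiset.one_le_prod
    intro x hx
    obtain ⟨z, _, rfl⟩ := Multiset.mem_map.mp hx
    exact le_max_left _ _
  have hM0 : (0:ℝ) ≤ M := by linarith
  have hFn : (0:ℝ) < (m.factorial : ℝ) := by
    exact_mod_cast Nat.factorial_pos m
  have hexp : (1 : ℝ) / ((((m+1):ℕ) : ℝ) - 1) = ((m:ℝ))⁻¹ := by
    push_cast
    rw [add_sub_cancel_right, one_div]
  have hfacteq : ((m+1) - 1).factorial = m.factorial := by
    simp
  have part1 : d ≤ (M / (m.factorial : ℝ)) ^ ((m:ℝ))⁻¹ := by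
    have h1 : d ^ m ≤ M / (m.factorial : ℝ) := (le_div_iff₀ hFn).mpr key
    calc d = (d ^ m) ^ ((m:ℝ))⁻¹ := (Real.pow_rpow_inv_natCast hd0 hm0).symm
      _ ≤ (M / (m.factorial : ℝ)) ^ ((m:ℝ))⁻¹ :=
          Real.rpow_le_rpow (by positivity) h1 (by positivity)
  have hmr : (0:ℝ) < (m:ℝ) := by exact_mod_cast hm1
  have hnr : (0:ℝ) < (m:ℝ) + 1 := by linarith
  have he : (0:ℝ) < Real.exp 1 := Real.exp_pos 1
  have h3 : ((m:ℝ)+1)/Real.exp 1 < ((m.factorial : ℝ)) ^ ((m:ℝ))⁻¹ := by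
    calc ((m:ℝ)+1)/Real.exp 1
        = ((((m:ℝ)+1)/Real.exp 1) ^ m) ^ ((m:ℝ))⁻¹ :=
          (Real.pow_rpow_inv_natCast (by positivity) hm0).symm
      _ < ((m.factorial : ℝ)) ^ ((m:ℝ))⁻¹ :=
          Real.rpow_lt_rpow (by positivity) (fact_gt m hm1) (by positivity)
  have hfx : (0:ℝ) < ((m.factorial : ℝ)) ^ ((m:ℝ))⁻¹ := by positivity
  have h4 : (((m.factorial : ℝ)) ^ ((m:ℝ))⁻¹)⁻¹ < Real.exp 1 / ((m:ℝ)+1) := by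
    have := inv_strictAnti₀ (show (0:ℝ) < ((m:ℝ)+1)/Real.exp 1 by positivity) h3
    rwa [inv_div] at this
  have hMx1 : (1:ℝ) ≤ M ^ ((m:ℝ))⁻¹ := by
    calc (1:ℝ) = (1:ℝ) ^ ((m:ℝ))⁻¹ := (Real.one_rpow _).symm
      _ ≤ M ^ ((m:ℝ))⁻¹ := Real.rpow_le_rpow zero_le_one hM1 (by positivity)
  have hMx0 : (0:ℝ) < M ^ ((m:ℝ))⁻¹ := by linarith
  have part2 : (M / (m.factorial : ℝ)) ^ ((m:ℝ))⁻¹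
      < (Real.exp 1 / (((m:ℝ)+1))) * M ^ ((m:ℝ))⁻¹ := by
    rw [Real.div_rpow hM0 (le_of_lt hFn), div_eq_mul_inv]
    calc M ^ ((m:ℝ))⁻¹ * (((m.factorial : ℝ)) ^ ((m:ℝ))⁻¹)⁻¹
        < M ^ ((m:ℝ))⁻¹ * (Real.exp 1 / ((m:ℝ)+1)) := by
          exact mul_lt_mul_of_pos_left h4 hMx0
      _ = (Real.exp 1 / (((m:ℝ)+1))) * M ^ ((m:ℝ))⁻¹ := by ring
  constructor
  · rw [hexp, hfacteq]
    exact part1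
  · rw [hexp]
    have : ((((m+1):ℕ)) : ℝ) = (m:ℝ) + 1 := by push_cast; ring
    rw [this]
    exact lt_of_le_of_lt part1 part2
end

section
/- Let f ∈ ℂ[X] be a monic separable polynomial of degree n ≥ 2. Then sep(f) ≤ n^{1/(n-1)} · M(f)^{2/n}. -/
set_option maxHeartbeats 1000000

open Polynomial

open Matrix Finset
open scoped ComplexOrder


lemma abs_det_sq_le_prod_row_normsq {n : ℕ} (hn : 0 < n) (A : Matrix (Fin n) (Fin n) ℂ)
    (hpos : ∀ i, 0 < ∑ j, ‖A i j‖ ^ 2) :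
    ‖A.det‖ ^ 2 ≤ ∏ i, ∑ j, ‖A i j‖ ^ 2 := by
  set r : Fin n → ℝ := fun i => ∑ j, ‖A i j‖ ^ 2 with hr
  set d : Fin n → ℝ := fun i => (Real.sqrt (r i))⁻¹ with hd
  have hrpos : ∀ i, 0 < r i := hpos
  have hdpos : ∀ i, 0 < d i := fun i => inv_pos.mpr (Real.sqrt_pos.mpr (hrpos i))
  have hdr : ∀ i, d i ^ 2 * r i = 1 := fun i => by
    rw [hd]
    rw [inv_pow, Real.sq_sqrt (hrpos i).le, inv_mul_cancel₀ (hrpos i).ne']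
  set D : Matrix (Fin n) (Fin n) ℂ := Matrix.diagonal (fun i => (d i : ℂ)) with hD
  have hDh : Dᴴ = D := by
    rw [hD, Matrix.diagonal_conjTranspose]
    have hst : (star fun i => ((d i : ℝ) : ℂ)) = fun i => ((d i : ℝ) : ℂ) :=
      funext fun i => Complex.conj_ofReal _
    rw [hst]
  set G : Matrix (Fin n) (Fin n) ℂ := A * Aᴴ with hG
  have hGps : G.PosSemidef := Matrix.posSemidef_self_mul_conjTranspose A
  set G' : Matrix (Fin n) (Fin n) ℂ := D * G * D with hG'
  have hG'ps : G'.PosSemidef := by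
    have := hGps.mul_mul_conjTranspose_same D
    rwa [hDh] at this
  have h' : G'.IsHermitian := hG'ps.1
  set μ : Fin n → ℝ := h'.eigenvalues with hμ
  have hμ0 : ∀ i, 0 ≤ μ i := hG'ps.eigenvalues_nonneg
  -- diagonal of G
  have hGdiag : ∀ i, G i i = (r i : ℂ) := by
    intro i
    simp only [hG, Matrix.mul_apply, Matrix.conjTranspose_apply, Complex.star_def,
      Complex.mul_conj, hr, Complex.ofReal_sum, ← Complex.sq_norm]
  have hG'diag : ∀ i, G' i i = 1 := by
    intro i
    rw [hG', hD]
    simp only [Matrix.diagonal_mul, Matrix.mul_diagonal]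
    rw [hGdiag i]
    rw [show (d i : ℂ) * (r i : ℂ) * (d i : ℂ) = ((d i)^2 * r i : ℝ) by push_cast; ring]
    rw [hdr i, Complex.ofReal_one]
  -- trace of G'
  have htr : G'.trace = (n : ℂ) := by
    rw [Matrix.trace, show G'.diag = fun _ => (1:ℂ) from funext hG'diag]
    simp
  -- trace equals sum of eigenvalues
  have htr2 : G'.trace = ∑ i, (μ i : ℂ) := by
    conv_lhs => rw [h'.spectral_theorem, Unitary.conjStarAlgAut_apply]
    rw [Matrix.trace_mul_cycle]
    rw [show (star (h'.eigenvectorUnitary : Matrix (Fin n) (Fin n) ℂ)) *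
      (h'.eigenvectorUnitary : Matrix (Fin n) (Fin n) ℂ) = 1 from
      Matrix.UnitaryGroup.star_mul_self _]
    rw [one_mul, Matrix.trace_diagonal]
    rfl
  have hsum : ∑ i, μ i = (n : ℝ) := by
    have : ((∑ i, μ i : ℝ) : ℂ) = ((n:ℝ) : ℂ) := by push_cast; rw [← htr2, htr]
    exact_mod_cast this
  -- AM-GM
  have hprodμ : ∏ i, μ i ≤ 1 := by
    have hgm := Real.geom_mean_le_arith_mean_weighted Finset.univ (fun _ => (n:ℝ)⁻¹) μ
      (fun i _ => by positivity) (by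
        simp [Finset.sum_const, Finset.card_univ]
        field_simp) (fun i _ => hμ0 i)
    rw [Real.finset_prod_rpow Finset.univ μ (fun i _ => hμ0 i)] at hgm
    have hsum' : ∑ i, (n:ℝ)⁻¹ * μ i = 1 := by
      rw [← Finset.mul_sum, hsum, inv_mul_cancel₀ (by positivity)]
    rw [hsum'] at hgm
    have hpn : (0:ℝ) ≤ ∏ i, μ i := Finset.prod_nonneg fun i _ => hμ0 i
    have := pow_le_one₀ (Real.rpow_nonneg hpn _) hgm (n := n)
    rwa [← Real.rpow_natCast ((∏ i, μ i) ^ ((n:ℝ)⁻¹)) n, ← Real.rpow_mul hpn,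
      inv_mul_cancel₀ (by positivity : (n:ℝ) ≠ 0), Real.rpow_one] at this
  -- |det G'| ≤ 1
  have hdetG' : ‖G'.det‖ ≤ 1 := by
    have hde : G'.det = ((∏ i, μ i : ℝ) : ℂ) := by
      rw [h'.det_eq_prod_eigenvalues, ← hμ]
      norm_cast
    rw [hde, Complex.norm_real, Real.norm_eq_abs, abs_of_nonneg (Finset.prod_nonneg fun i _ => hμ0 i)]
    exact hprodμ
  -- unfold det G'
  have hdetfact : ‖G'.det‖ = (∏ i, d i)^2 * ‖G.det‖ := by
    rw [hG', Matrix.det_mul, Matrix.det_mul, hD, Matrix.det_diagonal]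
    rw [← Complex.ofReal_prod]
    rw [norm_mul, norm_mul, Complex.norm_real, Real.norm_eq_abs,
      abs_of_nonneg (Finset.prod_nonneg fun i _ => (hdpos i).le)]
    ring
  have hdpr : (0:ℝ) < ∏ i, d i := Finset.prod_pos fun i _ => hdpos i
  have hdetG : ‖G.det‖ ≤ ∏ i, r i := by
    have h2 : (∏ i, d i)^2 * ‖G.det‖ ≤ 1 := by rw [← hdetfact]; exact hdetG'
    have hsq : (0:ℝ) < (∏ i, d i)^2 := pow_pos hdpr 2
    have h3 : ‖G.det‖ ≤ ((∏ i, d i)^2)⁻¹ := by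
      calc ‖G.det‖ = ((∏ i, d i)^2)⁻¹ * ((∏ i, d i)^2 * ‖G.det‖) := by
            rw [← mul_assoc, inv_mul_cancel₀ hsq.ne', one_mul]
        _ ≤ ((∏ i, d i)^2)⁻¹ * 1 := mul_le_mul_of_nonneg_left h2 (inv_nonneg.mpr hsq.le)
        _ = ((∏ i, d i)^2)⁻¹ := mul_one _
    calc ‖G.det‖ ≤ ((∏ i, d i)^2)⁻¹ := h3
      _ = ∏ i, r i := by
        rw [← Finset.prod_pow, ← Finset.prod_inv_distrib]
        refine Finset.prod_congr rfl fun i _ => ?_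
        rw [hd]
        simp only []
        rw [inv_pow, inv_inv, Real.sq_sqrt (hrpos i).le]
  -- |det A|^2 = |det G|
  have hAG : ‖G.det‖ = ‖A.det‖ ^ 2 := by
    rw [hG, Matrix.det_mul, Matrix.det_conjTranspose, norm_mul]
    rw [show ‖star A.det‖ = ‖A.det‖ from norm_star _]
    ring
  rw [← hAG] at *
  exact hdetG

lemma vandermonde_det_sq_le {n : ℕ} (hn : 0 < n) (α : Fin n → ℂ) :
    ‖(Matrix.vandermonde α).det‖ ^ 2 ≤
      (n : ℝ) ^ n * (∏ i, max 1 (‖α i‖)) ^ (2 * (n - 1)) := by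
  set m : Fin n → ℝ := fun i => max 1 (‖α i‖) with hm
  have hm1 : ∀ i, 1 ≤ m i := fun i => le_max_left _ _
  have hentry : ∀ i j : Fin n, ‖Matrix.vandermonde α i j‖ ^ 2 ≤ m i ^ (2 * (n - 1)) := by
    intro i j
    rw [Matrix.vandermonde_apply, norm_pow]
    have h1 : ‖α i‖ ^ (j : ℕ) ≤ m i ^ (j : ℕ) :=
      pow_le_pow_left₀ (norm_nonneg _) (le_max_right _ _) _
    have h2 : m i ^ (j : ℕ) ≤ m i ^ (n - 1) :=
      pow_le_pow_right₀ (hm1 i) (by omega)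
    calc (‖α i‖ ^ (j : ℕ)) ^ 2 ≤ (m i ^ (n - 1)) ^ 2 := by
          have h0 : (0:ℝ) ≤ ‖α i‖ ^ (j:ℕ) := by positivity
          exact pow_le_pow_left₀ h0 (h1.trans h2) 2
      _ = m i ^ (2 * (n - 1)) := by rw [← pow_mul]; ring_nf
  have hrow : ∀ i, ∑ j, ‖Matrix.vandermonde α i j‖ ^ 2 ≤ (n:ℝ) * m i ^ (2 * (n-1)) := by
    intro i
    calc ∑ j, ‖Matrix.vandermonde α i j‖ ^ 2 ≤ ∑ _j : Fin n, m i ^ (2 * (n-1)) :=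
          Finset.sum_le_sum fun j _ => hentry i j
      _ = (n:ℝ) * m i ^ (2 * (n-1)) := by rw [Finset.sum_const, Finset.card_univ]; simp [nsmul_eq_mul]
  have hpos : ∀ i, 0 < ∑ j, ‖Matrix.vandermonde α i j‖ ^ 2 := by
    intro i
    have h0 : (0:ℝ) < ‖Matrix.vandermonde α i ⟨0, hn⟩‖ ^ 2 := by
      rw [Matrix.vandermonde_apply]
      simp
    exact h0.trans_le (Finset.single_le_sum (f := fun j => ‖Matrix.vandermonde α i j‖ ^ 2) (fun j _ => by positivity) (Finset.mem_univ (⟨0, hn⟩ : Fin n)))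
  calc ‖(Matrix.vandermonde α).det‖ ^ 2
      ≤ ∏ i, ∑ j, ‖Matrix.vandermonde α i j‖ ^ 2 :=
        abs_det_sq_le_prod_row_normsq hn _ hpos
    _ ≤ ∏ i, ((n:ℝ) * m i ^ (2 * (n-1))) :=
        Finset.prod_le_prod (fun i _ => (hpos i).le) (fun i _ => hrow i)
    _ = (n:ℝ) ^ n * (∏ i, m i) ^ (2 * (n-1)) := by
        rw [Finset.prod_mul_distrib, Finset.prod_const, Finset.card_univ, ← Finset.prod_pow]
        simp

theorem sep_le_n_rpow_mul_mahler_rpow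
    (n : ℕ) (hn : 2 ≤ n) (f : Polynomial ℂ)
    (hmonic : f.Monic) (hsep : f.Separable) (hdeg : f.natDegree = n) :
    polySep f ≤ (n : ℝ) ^ ((1 : ℝ) / ((n : ℝ) - 1)) * _root_.mahlerMeasure f ^ ((2 : ℝ) / (n : ℝ)) := by
  have hn0 : 0 < n := by omega
  have hnR : (2:ℝ) ≤ (n:ℝ) := by exact_mod_cast hn
  have hn1 : ((n:ℝ) - 1) ≠ 0 := by linarith
  have hcard : Multiset.card f.roots = n := by
    rw [← hdeg]
    exact (Polynomial.splits_iff_card_roots.mp (IsAlgClosed.splits f))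
  set L : List ℂ := f.roots.toList with hL
  have hLcoe : (L : Multiset ℂ) = f.roots := Multiset.coe_toList _
  have hlen : L.length = n := by rw [hL, Multiset.length_toList, hcard]
  have hnodup : L.Nodup := Multiset.coe_nodup.mp (by rw [hLcoe]; exact f.nodup_roots hsep)
  set α : Fin n → ℂ := fun i => L.get (Fin.cast hlen.symm i) with hα
  have hαmem : ∀ i, α i ∈ f.roots := by
    intro i
    rw [← hLcoe]
    exact Multiset.mem_coe.mpr (by apply List.get_mem)
  have hαinj : Function.Injective α := by
    intro i j hij
    have := List.nodup_iff_injective_get.mp hnodup hij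
    have := congrArg Fin.val this
    simpa [Fin.ext_iff] using this
  set m : Fin n → ℝ := fun i => max 1 (‖α i‖) with hm
  have hMprod : _root_.mahlerMeasure f = ∏ i, m i := by
    rw [_root_.mahlerMeasure, ← hLcoe, Multiset.map_coe, Multiset.prod_coe]
    rw [← Fin.prod_univ_fun_getElem L (fun a => max 1 (‖a‖))]
    exact (Fintype.prod_equiv (finCongr hlen.symm) _ _ (fun i => rfl)).symm
  have hM1 : 1 ≤ _root_.mahlerMeasure f := by
    rw [hMprod]
    simp only [hm]
    have := Finset.prod_le_prod (s := Finset.univ) (f := fun _ : Fin n => (1:ℝ))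
      (g := fun i => max 1 (‖α i‖)) (fun i _ => zero_le_one)
      (fun i _ => le_max_left _ _)
    simpa using this
  have hMpos : 0 < _root_.mahlerMeasure f := lt_of_lt_of_le one_pos hM1
  set B : ℝ := (n : ℝ) ^ ((1 : ℝ) / ((n : ℝ) - 1)) * _root_.mahlerMeasure f ^ ((2 : ℝ) / (n : ℝ)) with hB
  have hBpos : 0 < B :=
    mul_pos (Real.rpow_pos_of_pos (by positivity) _) (Real.rpow_pos_of_pos hMpos _)
  have hBpow : B ^ (n * (n - 1)) = (n:ℝ) ^ n * (∏ i, m i) ^ (2 * (n - 1)) := by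
    rw [hB, mul_pow, hMprod]
    have hcast1 : ((n * (n - 1) : ℕ) : ℝ) = (n:ℝ) * ((n:ℝ) - 1) := by
      push_cast [Nat.cast_sub (by omega : 1 ≤ n)]
      ring
    have e1 : ((n : ℝ) ^ ((1 : ℝ) / ((n : ℝ) - 1))) ^ (n * (n - 1)) = (n:ℝ) ^ n := by
      rw [← Real.rpow_natCast ((n : ℝ) ^ ((1 : ℝ) / ((n : ℝ) - 1))) (n * (n-1)),
        ← Real.rpow_mul (by positivity), hcast1]
      rw [show (1 : ℝ) / ((n : ℝ) - 1) * ((n:ℝ) * ((n:ℝ) - 1)) = (n:ℝ) by field_simp]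
      exact Real.rpow_natCast _ n
    have e2 : ((∏ i, m i) ^ ((2 : ℝ) / (n : ℝ))) ^ (n * (n - 1))
        = (∏ i, m i) ^ (2 * (n - 1)) := by
      rw [← Real.rpow_natCast ((∏ i, m i) ^ ((2 : ℝ) / (n : ℝ))) (n * (n-1)),
        ← Real.rpow_mul (by rw [← hMprod]; exact hMpos.le), hcast1]
      rw [show (2 : ℝ) / (n : ℝ) * ((n:ℝ) * ((n:ℝ) - 1)) = 2 * ((n:ℝ) - 1) by field_simp]
      rw [show (2 : ℝ) * ((n:ℝ) - 1) = ((2 * (n - 1) : ℕ) : ℝ) by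
        push_cast [Nat.cast_sub (by omega : 1 ≤ n)]; ring]
      exact Real.rpow_natCast _ _
    rw [e1, e2]
  -- key claim
  have hclaim : ∃ a ∈ f.roots, ∃ b ∈ f.roots, a ≠ b ∧ ‖a - b‖ ≤ B := by
    by_contra hcon
    push_neg at hcon
    have hpair : ∀ i j : Fin n, i ≠ j → B < ‖α j - α i‖ := by
      intro i j hij
      exact hcon (α j) (hαmem j) (α i) (hαmem i) (fun e => hij (hαinj e.symm))
    set S : Finset ((_ : Fin n) × Fin n) := Finset.univ.sigma (fun i => Finset.Ioi i) with hS
    have hSmem : ∀ p ∈ S, p.1 < p.2 := by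
      intro p hp
      rw [hS, Finset.mem_sigma] at hp
      exact Finset.mem_Ioi.mp hp.2
    have hSne : S.Nonempty := by
      refine ⟨⟨⟨0, by omega⟩, ⟨1, by omega⟩⟩, ?_⟩
      rw [hS, Finset.mem_sigma]
      exact ⟨Finset.mem_univ _, Finset.mem_Ioi.mpr (by simp [Fin.lt_def])⟩
    have hdetprod : ‖(Matrix.vandermonde α).det‖ = ∏ p ∈ S, ‖α p.2 - α p.1‖ := by
      rw [Matrix.det_vandermonde, norm_prod]
      rw [← Finset.prod_sigma' Finset.univ (fun i => Finset.Ioi i)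
        (fun i j => ‖α j - α i‖)]
      exact Finset.prod_congr rfl fun i _ => norm_prod _ _
    have hlt : B ^ S.card < ‖(Matrix.vandermonde α).det‖ := by
      rw [hdetprod, ← Finset.prod_const]
      exact Finset.prod_lt_prod_of_nonempty (fun p _ => hBpos)
        (fun p hp => hpair p.1 p.2 (hSmem p hp).ne) hSne
    have hcard2 : S.card * 2 = n * (n - 1) := by
      rw [hS, Finset.card_sigma]
      have : ∀ i : Fin n, (Finset.Ioi i).card = n - 1 - (i : ℕ) := fun i => Fin.card_Ioi i
      rw [Finset.sum_congr rfl fun i _ => this i]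
      rw [Fin.sum_univ_eq_sum_range (fun i => n - 1 - i) n]
      rw [Finset.sum_range_reflect (fun i => i) n]
      exact Finset.sum_range_id_mul_two n
    have hsq : B ^ (n * (n-1)) < ‖(Matrix.vandermonde α).det‖ ^ 2 := by
      rw [← hcard2, pow_mul]
      exact pow_lt_pow_left₀ hlt (pow_nonneg hBpos.le _) two_ne_zero
    have := hsq.trans_le (vandermonde_det_sq_le hn0 α)
    rw [← hBpow] at this
    exact lt_irrefl _ this
  obtain ⟨a, ha, b, hb, hab, habB⟩ := hclaim
  have hbdd : BddBelow {d : ℝ | ∃ a ∈ f.roots, ∃ b ∈ f.roots, a ≠ b ∧ d = ‖a - b‖} := by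
    refine ⟨0, fun x hx => ?_⟩
    obtain ⟨a', _, b', _, _, hx⟩ := hx
    rw [hx]
    exact norm_nonneg _
  have hmem : ‖a - b‖ ∈
      {d : ℝ | ∃ a ∈ f.roots, ∃ b ∈ f.roots, a ≠ b ∧ d = ‖a - b‖} :=
    ⟨a, ha, b, hb, hab, rfl⟩
  exact (csInf_le hbdd hmem).trans habB
end

section
/- For every integer n ≥ 2 there exists a monic separable polynomial f ∈ ℂ[X] of degree n with sep(f) ≥ (1/(1.6·√n)) · M(f)^{1/(n−1)}. Hence the dependence on n in the upper bound sep(f) ≤ (34/√n)·M(f)^{1/(n−1)} is optimal up to the constant factor. -/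
open Polynomial

/-- A nonzero Gaussian integer has absolute value at least 1. -/
lemma one_le_abs_gaussian (a b : ℤ) (h : (a : ℂ) + b * Complex.I ≠ 0) :
    1 ≤ ‖(a : ℂ) + b * Complex.I‖ := by
  have hre : ((a : ℂ) + b * Complex.I).re = a := by simp
  have him : ((a : ℂ) + b * Complex.I).im = b := by simp
  rcases eq_or_ne a 0 with ha | ha
  · have hb : b ≠ 0 := by
      intro hb; apply h; simp [ha, hb]
    calc (1 : ℝ) ≤ |(b : ℝ)| := by
          rw [← Int.cast_abs]; exact_mod_cast Int.one_le_abs hb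
      _ = |((a : ℂ) + b * Complex.I).im| := by rw [him]
      _ ≤ ‖(a : ℂ) + b * Complex.I‖ := Complex.abs_im_le_norm _
  · calc (1 : ℝ) ≤ |(a : ℝ)| := by
          rw [← Int.cast_abs]; exact_mod_cast Int.one_le_abs ha
      _ = |((a : ℂ) + b * Complex.I).re| := by rw [hre]
      _ ≤ ‖(a : ℂ) + b * Complex.I‖ := Complex.abs_re_le_norm _

theorem exists_poly_sep_ge_inv_const_sqrt_n_mul_mahler_rpow (n : ℕ) (hn : 2 ≤ n) :
    ∃ f : Polynomial ℂ, f.Monic ∧ f.Separable ∧ f.natDegree = n ∧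
      polySep f ≥ (1 / (1.6 * Real.sqrt n)) * _root_.mahlerMeasure f ^ ((1 : ℝ) / ((n : ℝ) - 1)) := by
  classical
  set m : ℕ := Nat.sqrt (n - 1) + 1 with hm
  have hm0 : 0 < m := Nat.succ_pos _
  have hnm : n ≤ m * m := by
    have h1 : n - 1 < m ^ 2 := Nat.lt_succ_sqrt' (n - 1)
    have h2 : m ^ 2 = m * m := sq m
    omega
  -- the grid points
  set z : ℕ → ℂ := fun k => ((k % m : ℕ) : ℂ) + ((k / m : ℕ) : ℂ) * Complex.I with hz
  have hre : ∀ k, (z k).re = ((k % m : ℕ) : ℝ) := by intro k; simp [hz]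
  have him : ∀ k, (z k).im = ((k / m : ℕ) : ℝ) := by intro k; simp [hz]
  have hinj : ∀ a ∈ Finset.range n, ∀ b ∈ Finset.range n, z a = z b → a = b := by
    intro a _ b _ hab
    have h1 : ((a % m : ℕ) : ℝ) = ((b % m : ℕ) : ℝ) := by rw [← hre, ← hre, hab]
    have h2 : ((a / m : ℕ) : ℝ) = ((b / m : ℕ) : ℝ) := by rw [← him, ← him, hab]
    have e1 : a % m = b % m := by exact_mod_cast h1
    have e2 : a / m = b / m := by exact_mod_cast h2
    calc a = m * (a / m) + a % m := (Nat.div_add_mod a m).symm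
      _ = m * (b / m) + b % m := by rw [e1, e2]
      _ = b := Nat.div_add_mod b m
  refine ⟨∏ k ∈ Finset.range n, (X - C (z k)), ?_, ?_, ?_, ?_⟩
  · exact monic_prod_of_monic _ _ fun k _ => monic_X_sub_C _
  · exact separable_prod_X_sub_C_iff'.2 hinj
  · rw [natDegree_prod _ _ fun k _ => X_sub_C_ne_zero _]
    simp
  -- the roots
  have hroots : (∏ k ∈ Finset.range n, (X - C (z k))).roots
      = (Finset.range n).val.map z := by
    have : ∏ k ∈ Finset.range n, (X - C (z k))
        = (((Finset.range n).val.map z).map fun a => X - C a).prod := by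
      rw [Multiset.map_map]; rfl
    rw [this, roots_multiset_prod_X_sub_C]
  set f := ∏ k ∈ Finset.range n, (X - C (z k)) with hf
  have hsqn : (1 : ℝ) ≤ Real.sqrt n := by
    rw [show (1:ℝ) = Real.sqrt 1 by simp]
    exact Real.sqrt_le_sqrt (by exact_mod_cast Nat.one_le_iff_ne_zero.2 (by omega))
  have hR0 : (0 : ℝ) < 1.6 * Real.sqrt n := by nlinarith
  -- each root is small
  have habs : ∀ k < n, ‖z k‖ ≤ 1.6 * Real.sqrt n := by
    intro k hk
    have hxm : ((k % m : ℕ) : ℝ) ≤ ((m - 1 : ℕ) : ℝ) := by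
      exact_mod_cast Nat.le_of_lt_succ (by
        have := Nat.mod_lt k hm0; omega)
    have hym : ((k / m : ℕ) : ℝ) ≤ ((m - 1 : ℕ) : ℝ) := by
      have : k / m < m := Nat.div_lt_of_lt_mul (lt_of_lt_of_le hk hnm)
      exact_mod_cast (by omega : k / m ≤ m - 1)
    have hmn : ((m - 1 : ℕ) : ℝ) ≤ Real.sqrt n := by
      rw [show ((m - 1 : ℕ)) = Nat.sqrt (n - 1) by omega]
      apply Real.le_sqrt_of_sq_le
      have h1 : (Nat.sqrt (n-1))^2 ≤ n := by
        have := Nat.sqrt_le' (n - 1); omega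
      exact_mod_cast h1
    have habs2 : ‖z k‖ ^ 2 ≤ 2 * Real.sqrt n ^ 2 := by
      rw [Complex.sq_norm, Complex.normSq_apply, hre, him]
      nlinarith [Nat.cast_nonneg (α := ℝ) (k % m), Nat.cast_nonneg (α := ℝ) (k / m)]
    nlinarith [norm_nonneg (z k), Real.sqrt_nonneg (n:ℝ)]
  -- Mahler measure bound
  have hz0 : z 0 = 0 := by simp [hz]
  have hMprod : _root_.mahlerMeasure f = ∏ k ∈ Finset.range n, max 1 (‖z k‖) := by
    rw [_root_.mahlerMeasure, hroots, Multiset.map_map]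
    rfl
  have hM1 : (1 : ℝ) ≤ _root_.mahlerMeasure f := by
    rw [hMprod]
    have := Finset.prod_le_prod (f := fun _ : ℕ => (1:ℝ))
      (g := fun k => max 1 (‖z k‖)) (s := Finset.range n)
      (fun i _ => zero_le_one) (fun i _ => le_max_left _ _)
    simpa using this
  have h0mem : 0 ∈ Finset.range n := Finset.mem_range.2 (by omega)
  have hcard : ((Finset.range n).erase 0).card = n - 1 := by
    rw [Finset.card_erase_of_mem h0mem, Finset.card_range]
  have hMle : _root_.mahlerMeasure f ≤ (1.6 * Real.sqrt n) ^ (n - 1) := by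
    rw [hMprod, ← Finset.mul_prod_erase _ _ h0mem, hz0]
    simp only [norm_zero]
    rw [show max (1:ℝ) 0 = 1 by simp, one_mul]
    calc ∏ k ∈ (Finset.range n).erase 0, max 1 (‖z k‖)
        ≤ ∏ _k ∈ (Finset.range n).erase 0, (1.6 * Real.sqrt n) := by
          apply Finset.prod_le_prod
          · intro k _; positivity
          · intro k hk
            exact max_le (by nlinarith) (habs k (Finset.mem_range.1 (Finset.mem_of_mem_erase hk)))
      _ = (1.6 * Real.sqrt n) ^ (n - 1) := by rw [Finset.prod_const, hcard]
  have hn1 : ((n : ℝ) - 1) = ((n - 1 : ℕ) : ℝ) := by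
    have : (1:ℕ) ≤ n := by omega
    push_cast [this]; ring
  have hrpow : _root_.mahlerMeasure f ^ ((1 : ℝ) / ((n : ℝ) - 1)) ≤ 1.6 * Real.sqrt n := by
    have hpos : (0:ℝ) < ((n - 1 : ℕ) : ℝ) := by
      exact_mod_cast Nat.pos_of_ne_zero (by omega)
    calc _root_.mahlerMeasure f ^ ((1 : ℝ) / ((n : ℝ) - 1))
        ≤ ((1.6 * Real.sqrt n) ^ (n - 1)) ^ ((1 : ℝ) / ((n : ℝ) - 1)) :=
          Real.rpow_le_rpow (by linarith) hMle (by rw [hn1]; positivity)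
      _ = 1.6 * Real.sqrt n := by
          rw [← Real.rpow_natCast (1.6 * Real.sqrt n) (n - 1),
            ← Real.rpow_mul (le_of_lt hR0), hn1, mul_one_div, div_self (ne_of_gt hpos),
            Real.rpow_one]
  have hRHS1 : (1 / (1.6 * Real.sqrt n)) * _root_.mahlerMeasure f ^ ((1 : ℝ) / ((n : ℝ) - 1)) ≤ 1 := by
    rw [div_mul_eq_mul_div, one_mul, div_le_one hR0]
    exact hrpow
  -- separation bound
  have hsep1 : ∀ d ∈ {d : ℝ | ∃ a ∈ f.roots, ∃ b ∈ f.roots, a ≠ b ∧ d = ‖a - b‖},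
      1 ≤ d := by
    rintro d ⟨a, ha, b, hb, hab, rfl⟩
    rw [hroots] at ha hb
    obtain ⟨j, hj, rfl⟩ := Multiset.mem_map.1 ha
    obtain ⟨k, hk, rfl⟩ := Multiset.mem_map.1 hb
    have key : z j - z k = (((j % m : ℤ) - (k % m : ℤ) : ℤ) : ℂ)
        + (((j / m : ℤ) - (k / m : ℤ) : ℤ) : ℂ) * Complex.I := by
      apply Complex.ext <;> simp [hz] <;> norm_cast
    rw [key]
    exact one_le_abs_gaussian _ _ (by rw [← key]; exact sub_ne_zero.2 hab)
  have hne : {d : ℝ | ∃ a ∈ f.roots, ∃ b ∈ f.roots, a ≠ b ∧ d = ‖a - b‖}.Nonempty := by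
    refine ⟨‖z 0 - z 1‖, z 0, ?_, z 1, ?_, ?_, rfl⟩
    · rw [hroots]; exact Multiset.mem_map_of_mem _ (Finset.mem_range.2 (by omega))
    · rw [hroots]; exact Multiset.mem_map_of_mem _ (Finset.mem_range.2 (by omega))
    · intro h
      have := hinj 0 (Finset.mem_range.2 (by omega)) 1 (Finset.mem_range.2 (by omega)) h
      omega
  rw [ge_iff_le, polySep]
  exact le_csInf hne fun d hd => le_trans hRHS1 (hsep1 d hd)
end
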